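/- arXiv:1212.5796 — 5 statements merged into one kernel-verified Lean document; each statement's English description precedes it below -/
import Mathlib

section
/- Typical bounded differences inequality for 0-1 variables. Let X=(X_1,...,X_N) be a family of independent random variables with X_k ∈ {0,1} and p_k = P(X_k = 1), let Γ ⊆ {0,1}^N be an event, and assume f satisfies the typical Lipschitz condition (TL) relative to Γ with coefficients c_k ≤ d_k. Then for any real numbers (γ_k)_{k∈[N]} with γ_k ∈ (0,1] there exists an event B = B(Γ,(γ_k)) such that P(B) ≤ Σ_{k∈[N]} γ_k^{-1}·P(X ∉ Γ) and the complement of B is contained in Γ, and, setting μ = E f(X), e_k = γ_k(d_k − c_k) and C = max_{k∈[N]} (c_k + e_k), for every t ≥ 0 one has P(f(X) ≥ μ + t and not B) ≤ exp(−t² / (2 Σ_{k∈[N]} (1−p_k)p_k(c_k + e_k)² + 2Ct/3)). -/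
open Real Set Function MeasureTheory



private lemma tbd_hasDerivAt (x : ℝ) (hx : x < 3) :
    HasDerivAt (fun y => (1 + y + 3*y^2/(2*(3-y))) * exp (-y))
      (exp (-x) * (x^3/(2*(3-x)^2))) x := by
  have hne : 2*(3-x) ≠ 0 := by nlinarith
  have h1 : HasDerivAt (fun y : ℝ => 3*y^2/(2*(3-y)))
      ((3*(2*x)*(2*(3-x)) - 3*x^2*(-2)) / (2*(3-x))^2) x := by
    have hn : HasDerivAt (fun y : ℝ => 3*y^2) (3*(2*x)) x := by
      simpa using ((hasDerivAt_pow 2 x).const_mul 3)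
    have hd : HasDerivAt (fun y : ℝ => 2*(3-y)) (-2) x := by
      have : HasDerivAt (fun y : ℝ => 3-y) (-1) x := by
        simpa using ((hasDerivAt_id x).const_sub 3)
      simpa using this.const_mul 2
    exact hn.div hd hne
  have h2 : HasDerivAt (fun y : ℝ => 1 + y + 3*y^2/(2*(3-y)))
      (1 + ((3*(2*x)*(2*(3-x)) - 3*x^2*(-2)) / (2*(3-x))^2)) x := by
    have : HasDerivAt (fun y : ℝ => 1 + y) 1 x := by
      simpa using (hasDerivAt_id x).const_add 1
    exact this.add h1
  have h3 : HasDerivAt (fun y : ℝ => exp (-y)) (-exp (-x)) x := by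
    simpa using (hasDerivAt_neg x).exp
  have : HasDerivAt (fun y => (1 + y + 3*y^2/(2*(3-y))) * exp (-y)) _ x := h2.mul h3
  convert this using 1
  have h9 : (3:ℝ) - x ≠ 0 := by nlinarith
  field_simp
  ring

private lemma tbd_exp_le (x : ℝ) (hx : x < 3) :
    exp x ≤ 1 + x + 3*x^2/(2*(3-x)) := by
  set h : ℝ → ℝ := fun y => (1 + y + 3*y^2/(2*(3-y))) * exp (-y) with hh
  have key : 1 ≤ h x := by
    have hdiff : ∀ y ∈ Iio (3:ℝ), HasDerivAt h (exp (-y) * (y^3/(2*(3-y)^2))) y :=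
      fun y hy => tbd_hasDerivAt y hy
    have h0 : h 0 = 1 := by simp [hh]
    rcases le_or_gt x 0 with hx0 | hx0
    · have hanti : AntitoneOn h (Iic (0:ℝ)) := by
        apply antitoneOn_of_deriv_nonpos (convex_Iic 0)
        · intro y hy
          have : y < 3 := lt_of_le_of_lt (mem_Iic.mp hy) (by norm_num)
          exact (hdiff y this).continuousAt.continuousWithinAt
        · intro y hy
          simp only [interior_Iic, mem_Iio] at hy
          exact (hdiff y (mem_Iio.mpr (by linarith))).differentiableAt.differentiableWithinAt
        · intro y hy
          simp only [interior_Iic, mem_Iio] at hy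
          rw [HasDerivAt.deriv (hdiff y (mem_Iio.mpr (by linarith)))]
          have hy3 : y^3 ≤ 0 := by
            have := Odd.pow_nonpos (by decide : Odd 3) (le_of_lt hy)
            simpa using this
          have h2 : (0:ℝ) < 2*(3-y)^2 := by nlinarith
          exact mul_nonpos_of_nonneg_of_nonpos (le_of_lt (exp_pos (-y)))
            (div_nonpos_of_nonpos_of_nonneg hy3 (le_of_lt h2))
      have := hanti (mem_Iic.mpr hx0) (mem_Iic.mpr le_rfl) hx0
      rw [h0] at this; exact this
    · have hmono : MonotoneOn h (Ico (0:ℝ) 3) := by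
        apply monotoneOn_of_deriv_nonneg (convex_Ico 0 3)
        · exact fun y hy => (hdiff y hy.2).continuousAt.continuousWithinAt
        · intro y hy
          rw [interior_Ico] at hy
          exact (hdiff y hy.2).differentiableAt.differentiableWithinAt
        · intro y hy
          rw [interior_Ico] at hy
          rw [HasDerivAt.deriv (hdiff y hy.2)]
          have hy3 : (0:ℝ) ≤ y^3 := pow_nonneg (le_of_lt hy.1) 3
          have h2 : (0:ℝ) < 2*(3-y)^2 := by nlinarith [hy.2]
          positivity
      have := hmono (mem_Ico.mpr ⟨le_rfl, by norm_num⟩) (mem_Ico.mpr ⟨le_of_lt hx0, hx⟩)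
        (le_of_lt hx0)
      rw [h0] at this; exact this
  have hpos := exp_pos x
  have := mul_le_mul_of_nonneg_right key (le_of_lt hpos)
  rw [one_mul, hh] at this
  simp only at this
  rwa [mul_assoc, ← Real.exp_add, neg_add_cancel, Real.exp_zero, mul_one] at this

/-- for x ≤ u < 3: exp x ≤ 1 + x + x^2/(2*(1-u/3)) -/
private lemma tbd_exp_le' (x u : ℝ) (hxu : x ≤ u) (hu0 : 0 ≤ u) (hu : u < 3) :
    exp x ≤ 1 + x + x^2/(2*(1-u/3)) := by
  have hx3 : x < 3 := lt_of_le_of_lt hxu hu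
  refine (tbd_exp_le x hx3).trans ?_
  have h1 : (0:ℝ) < 3 - x := by linarith
  have h2 : (0:ℝ) < 3 - u := by linarith
  have key : 3*x^2/(2*(3-x)) ≤ x^2/(2*(1-u/3)) := by
    rw [div_le_div_iff₀ (by linarith) (by nlinarith)]
    nlinarith [sq_nonneg x]
  linarith



/-- two-point Bernstein mgf bound -/
private lemma tbd_mgf (p Δ a C l : ℝ) (hp0 : 0 ≤ p) (hp1 : p ≤ 1)
    (hΔ : |Δ| ≤ a) (haC : a ≤ C) (hl : 0 ≤ l)
    (hside : p*(1-p)*a^2 = 0 ∨ l*C < 3) :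
    p * exp (l*((1-p)*Δ)) + (1-p) * exp (l*(-(p*Δ))) ≤
      exp (l^2*(p*(1-p)*a^2) / (2*(1-l*C/3))) := by
  have ha0 : 0 ≤ a := le_trans (abs_nonneg Δ) hΔ
  rcases hside with h0 | hlC
  · -- degenerate: variance 0
    rw [h0]
    have : l^2*(0:ℝ) / (2*(1-l*C/3)) = 0 := by simp
    rw [mul_zero, zero_div, exp_zero]
    rcases mul_eq_zero.mp h0 with h | h
    · rcases mul_eq_zero.mp h with h | h
      · rw [h]; simp
      · have hp' : p = 1 := by linarith
        rw [hp']; simp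
    · have ha : a = 0 := by nlinarith
      have hΔ0 : Δ = 0 := abs_nonpos_iff.mp (ha ▸ hΔ)
      rw [hΔ0]; simp
  · -- main case
    have hC0 : 0 ≤ C := le_trans ha0 haC
    have hu0 : 0 ≤ l*C := mul_nonneg hl hC0
    have hD : (0:ℝ) < 2*(1-l*C/3) := by nlinarith
    set x₁ := l*((1-p)*Δ) with hx₁
    set x₂ := l*(-(p*Δ)) with hx₂
    have habs := abs_le.mp hΔ
    have e1 : exp x₁ ≤ 1 + x₁ + x₁^2/(2*(1-l*C/3)) := by
      apply tbd_exp_le' _ _ _ hu0 hlC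
      calc x₁ ≤ l*((1-p)*a) := by
            apply mul_le_mul_of_nonneg_left _ hl
            apply mul_le_mul_of_nonneg_left habs.2 (by linarith)
        _ ≤ l*C := by
            apply mul_le_mul_of_nonneg_left _ hl
            nlinarith
    have e2 : exp x₂ ≤ 1 + x₂ + x₂^2/(2*(1-l*C/3)) := by
      apply tbd_exp_le' _ _ _ hu0 hlC
      calc x₂ ≤ l*(p*a) := by
            apply mul_le_mul_of_nonneg_left _ hl
            nlinarith
        _ ≤ l*C := by
            apply mul_le_mul_of_nonneg_left _ hl
            nlinarith
    have hq : p*x₁^2 + (1-p)*x₂^2 ≤ l^2*(p*(1-p)*a^2) := by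
      have heq : p*x₁^2 + (1-p)*x₂^2 = (l^2*(p*(1-p)))*Δ^2 := by
        rw [hx₁, hx₂]; ring
      have hΔ2 : Δ^2 ≤ a^2 := by nlinarith
      rw [heq]
      calc (l^2*(p*(1-p)))*Δ^2 ≤ (l^2*(p*(1-p)))*a^2 := by
            apply mul_le_mul_of_nonneg_left hΔ2
            exact mul_nonneg (sq_nonneg l) (mul_nonneg hp0 (by linarith))
        _ = l^2*(p*(1-p)*a^2) := by ring
    have step1 : p * exp x₁ + (1-p) * exp x₂ ≤
        1 + (p*x₁^2 + (1-p)*x₂^2)/(2*(1-l*C/3)) := by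
      have m1 := mul_le_mul_of_nonneg_left e1 hp0
      have m2 := mul_le_mul_of_nonneg_left e2 (by linarith : (0:ℝ) ≤ 1-p)
      have hzero : p*x₁ + (1-p)*x₂ = 0 := by rw [hx₁, hx₂]; ring
      have : p*(1 + x₁ + x₁^2/(2*(1-l*C/3))) + (1-p)*(1 + x₂ + x₂^2/(2*(1-l*C/3)))
          = 1 + (p*x₁^2 + (1-p)*x₂^2)/(2*(1-l*C/3)) + (p*x₁ + (1-p)*x₂) := by
        field_simp
        ring
      rw [hzero, add_zero] at this
      linarith
    have step2 : (p*x₁^2 + (1-p)*x₂^2)/(2*(1-l*C/3)) ≤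
        l^2*(p*(1-p)*a^2)/(2*(1-l*C/3)) := by gcongr
    have final := Real.add_one_le_exp (l^2*(p*(1-p)*a^2)/(2*(1-l*C/3)))
    linarith



namespace TBDaux

variable {N : ℕ}

/-- coordinate weight -/
def cw (p : Fin N → ℝ) (k : Fin N) (b : Bool) : ℝ := if b then p k else 1 - p k

/-- product weight -/
def w (p : Fin N → ℝ) (x : Fin N → Bool) : ℝ := ∏ k, cw p k (x k)

/-- averaging over coordinate k -/
def A (p : Fin N → ℝ) (k : Fin N) (g : (Fin N → Bool) → ℝ) : (Fin N → Bool) → ℝ :=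
  fun x => p k * g (update x k true) + (1 - p k) * g (update x k false)

/-- averaging over all coordinates ≥ j -/
def Ek (p : Fin N → ℝ) : ℕ → ((Fin N → Bool) → ℝ) → (Fin N → Bool) → ℝ
  | j, g => if h : j < N then A p ⟨j, h⟩ (Ek p (j+1) g) else g
  termination_by j => N - j

lemma Ek_succ (p : Fin N → ℝ) {j : ℕ} (h : j < N) (g : (Fin N → Bool) → ℝ) :
    Ek p j g = A p ⟨j, h⟩ (Ek p (j+1) g) := by
  rw [Ek]; simp [h]

lemma Ek_stop (p : Fin N → ℝ) {j : ℕ} (h : ¬ j < N) (g : (Fin N → Bool) → ℝ) :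
    Ek p j g = g := by
  rw [Ek]; simp [h]

section Basic

variable (p : Fin N → ℝ)

lemma Ek_mono (hp0 : ∀ k, 0 ≤ p k) (hp1 : ∀ k, p k ≤ 1) (j : ℕ) (g h : (Fin N → Bool) → ℝ) (hgh : ∀ x, g x ≤ h x) :
    ∀ x, Ek p j g x ≤ Ek p j h x := by
  intro x
  by_cases hj : j < N
  · rw [Ek_succ p hj, Ek_succ p hj]
    have IH := Ek_mono hp0 hp1 (j+1) g h hgh
    unfold A
    have h1 := IH (update x ⟨j, hj⟩ true)
    have h2 := IH (update x ⟨j, hj⟩ false)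
    have := hp0 ⟨j, hj⟩; have := hp1 ⟨j, hj⟩
    nlinarith
  · rw [Ek_stop p hj, Ek_stop p hj]; exact hgh x
  termination_by N - j

lemma Ek_const (j : ℕ) (c : ℝ) (x : Fin N → Bool) :
    Ek p j (fun _ => c) x = c := by
  by_cases hj : j < N
  · rw [Ek_succ p hj]
    unfold A
    have IH1 := Ek_const (j+1) c (update x ⟨j, hj⟩ true)
    have IH2 := Ek_const (j+1) c (update x ⟨j, hj⟩ false)
    rw [IH1, IH2]; ring
  · rw [Ek_stop p hj]
  termination_by N - j

lemma Ek_nonneg (hp0 : ∀ k, 0 ≤ p k) (hp1 : ∀ k, p k ≤ 1) (j : ℕ) (g : (Fin N → Bool) → ℝ) (hg : ∀ x, 0 ≤ g x) (x : Fin N → Bool) :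
    0 ≤ Ek p j g x := by
  have := Ek_mono p hp0 hp1 j (fun _ => 0) g (by simpa using hg) x
  rwa [Ek_const] at this

lemma Ek_add (j : ℕ) (g h : (Fin N → Bool) → ℝ) (x : Fin N → Bool) :
    Ek p j (fun y => g y + h y) x = Ek p j g x + Ek p j h x := by
  by_cases hj : j < N
  · rw [Ek_succ p hj, Ek_succ p hj, Ek_succ p hj]
    unfold A
    rw [Ek_add (j+1) g h, Ek_add (j+1) g h]
    ring
  · rw [Ek_stop p hj, Ek_stop p hj, Ek_stop p hj]
  termination_by N - j

lemma Ek_smul (j : ℕ) (c : ℝ) (g : (Fin N → Bool) → ℝ) (x : Fin N → Bool) :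
    Ek p j (fun y => c * g y) x = c * Ek p j g x := by
  by_cases hj : j < N
  · rw [Ek_succ p hj, Ek_succ p hj]
    unfold A
    rw [Ek_smul (j+1) c g, Ek_smul (j+1) c g]
    ring
  · rw [Ek_stop p hj, Ek_stop p hj]
  termination_by N - j

/-- `Ek p j g` is invariant under updating coordinates ≥ j -/
lemma Ek_inv (j : ℕ) (g : (Fin N → Bool) → ℝ) (x : Fin N → Bool) (k : Fin N) (b : Bool)
    (hk : j ≤ (k : ℕ)) : Ek p j g (update x k b) = Ek p j g x := by
  by_cases hj : j < N
  · rw [Ek_succ p hj]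
    unfold A
    by_cases hkj : k = ⟨j, hj⟩
    · subst hkj
      rw [update_idem, update_idem]
    · have hkj' : j + 1 ≤ (k : ℕ) := by
        rcases lt_or_eq_of_le hk with h | h
        · omega
        · exfalso; apply hkj; exact Fin.ext h.symm
      rw [update_comm hkj, update_comm hkj,
        Ek_inv (j+1) g (update x ⟨j, hj⟩ true) k b hkj',
        Ek_inv (j+1) g (update x ⟨j, hj⟩ false) k b hkj']
  · exfalso; exact hj (lt_of_le_of_lt hk k.isLt)
  termination_by N - j

/-- pull out a factor invariant under coordinates ≥ j -/
lemma Ek_mul_left (j : ℕ) (φ g : (Fin N → Bool) → ℝ)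
    (hφ : ∀ (x : Fin N → Bool) (k : Fin N) (b : Bool), j ≤ (k : ℕ) → φ (update x k b) = φ x)
    (x : Fin N → Bool) :
    Ek p j (fun y => φ y * g y) x = φ x * Ek p j g x := by
  by_cases hj : j < N
  · rw [Ek_succ p hj, Ek_succ p hj]
    unfold A
    have hφ' : ∀ (x : Fin N → Bool) (k : Fin N) (b : Bool), j + 1 ≤ (k : ℕ) →
        φ (update x k b) = φ x := fun x k b hk => hφ x k b (by omega)
    rw [Ek_mul_left (j+1) φ g hφ', Ek_mul_left (j+1) φ g hφ',
      hφ x ⟨j, hj⟩ true le_rfl, hφ x ⟨j, hj⟩ false le_rfl]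
    ring
  · rw [Ek_stop p hj, Ek_stop p hj]
  termination_by N - j

lemma Ek_abs (hp0 : ∀ k, 0 ≤ p k) (hp1 : ∀ k, p k ≤ 1) (j : ℕ) (g : (Fin N → Bool) → ℝ) (x : Fin N → Bool) :
    |Ek p j g x| ≤ Ek p j (fun y => |g y|) x := by
  by_cases hj : j < N
  · rw [Ek_succ p hj, Ek_succ p hj]
    unfold A
    set k : Fin N := ⟨j, hj⟩
    have h1 := Ek_abs hp0 hp1 (j+1) g (update x k true)
    have h2 := Ek_abs hp0 hp1 (j+1) g (update x k false)
    have hk0 := hp0 k; have hk1 := hp1 k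
    calc |p k * Ek p (j+1) g (update x k true) + (1 - p k) * Ek p (j+1) g (update x k false)|
        ≤ |p k * Ek p (j+1) g (update x k true)| + |(1 - p k) * Ek p (j+1) g (update x k false)| :=
          abs_add_le _ _
      _ = p k * |Ek p (j+1) g (update x k true)| + (1 - p k) * |Ek p (j+1) g (update x k false)| := by
          rw [abs_mul, abs_mul, abs_of_nonneg hk0, abs_of_nonneg (show (0:ℝ) ≤ 1 - p k by linarith)]
      _ ≤ p k * Ek p (j+1) (fun y => |g y|) (update x k true)
            + (1 - p k) * Ek p (j+1) (fun y => |g y|) (update x k false) := by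
          have := mul_le_mul_of_nonneg_left h1 hk0
          have := mul_le_mul_of_nonneg_left h2 (by linarith : (0:ℝ) ≤ 1 - p k)
          linarith
  · rw [Ek_stop p hj, Ek_stop p hj]
  termination_by N - j

end Basic








variable (p : Fin N → ℝ)

lemma master (k : Fin N) (ψ : (Fin N → Bool) → ℝ)
    (hψ : ∀ x b, ψ (update x k b) = ψ x) (φ : Bool → ℝ) :
    ∑ x : Fin N → Bool, φ (x k) * ψ x = (φ true + φ false)/2 * ∑ x : Fin N → Bool, ψ x := by
  classical
  set σ : (Fin N → Bool) → (Fin N → Bool) := fun x => update x k (!(x k)) with hσ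
  have hinv : Function.Involutive σ := by
    intro x; funext i
    by_cases hik : i = k
    · subst hik; simp [σ]
    · simp [σ, hik]
  have hre : ∑ x : Fin N → Bool, φ ((σ x) k) * ψ (σ x) = ∑ x : Fin N → Bool, φ (x k) * ψ x := by
    have := Equiv.sum_comp hinv.toPerm (fun x => φ (x k) * ψ x)
    simpa [Function.Involutive.coe_toPerm] using this
  have hσk : ∀ x : Fin N → Bool, (σ x) k = !(x k) := by intro x; simp [σ]
  have hψσ : ∀ x, ψ (σ x) = ψ x := fun x => hψ x _
  have hT : ∑ x : Fin N → Bool, φ (!(x k)) * ψ x = ∑ x : Fin N → Bool, φ (x k) * ψ x := by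
    rw [← hre]
    apply Finset.sum_congr rfl
    intro x _
    rw [hσk, hψσ]
  have hsum : (∑ x : Fin N → Bool, φ (x k) * ψ x) + (∑ x : Fin N → Bool, φ (!(x k)) * ψ x)
      = (φ true + φ false) * ∑ x : Fin N → Bool, ψ x := by
    rw [← Finset.sum_add_distrib, Finset.mul_sum]
    apply Finset.sum_congr rfl
    intro x _
    cases hxk : x k <;> simp <;> ring
  rw [hT] at hsum
  linarith

lemma sumA (k : Fin N) (h : (Fin N → Bool) → ℝ) :
    ∑ x : Fin N → Bool, w p x * A p k h x = ∑ x : Fin N → Bool, w p x * h x := by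
  classical
  set w' : (Fin N → Bool) → ℝ := fun x => ∏ i ∈ Finset.univ.erase k, cw p i (x i) with hw'
  have hw : ∀ x, w p x = cw p k (x k) * w' x := by
    intro x
    rw [w, hw', ← Finset.mul_prod_erase Finset.univ (fun i => cw p i (x i)) (Finset.mem_univ k)]
  have hw'inv : ∀ x b, w' (update x k b) = w' x := by
    intro x b
    apply Finset.prod_congr rfl
    intro i hi
    rw [update_of_ne (Finset.mem_erase.mp hi).1]
  -- LHS via master
  set ψ : (Fin N → Bool) → ℝ :=
    fun x => w' x * (p k * h (update x k true) + (1 - p k) * h (update x k false)) with hψdef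
  have hψinv : ∀ x b, ψ (update x k b) = ψ x := by
    intro x b
    simp only [hψdef]
    rw [hw'inv, update_idem, update_idem]
  have hL : ∑ x : Fin N → Bool, w p x * A p k h x
      = (1:ℝ)/2 * ∑ x : Fin N → Bool, ψ x := by
    have := master k ψ hψinv (cw p k)
    have hcw : cw p k true + cw p k false = 1 := by simp [cw]
    rw [hcw] at this
    rw [← this]
    apply Finset.sum_congr rfl
    intro x _
    rw [hw x]
    unfold A
    simp only [hψdef]
    ring
  -- RHS via master with indicators
  set ψT : (Fin N → Bool) → ℝ := fun x => w' x * h (update x k true) with hψT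
  set ψF : (Fin N → Bool) → ℝ := fun x => w' x * h (update x k false) with hψF
  have hψTinv : ∀ x b, ψT (update x k b) = ψT x := by
    intro x b; simp only [hψT]; rw [hw'inv, update_idem]
  have hψFinv : ∀ x b, ψF (update x k b) = ψF x := by
    intro x b; simp only [hψF]; rw [hw'inv, update_idem]
  set ιT : Bool → ℝ := fun b => if b then 1 else 0 with hιT
  set ιF : Bool → ℝ := fun b => if b then 0 else 1 with hιF
  have hR : ∑ x : Fin N → Bool, w p x * h x
      = p k * ∑ x : Fin N → Bool, ιT (x k) * ψT x
        + (1 - p k) * ∑ x : Fin N → Bool, ιF (x k) * ψF x := by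
    rw [Finset.mul_sum, Finset.mul_sum, ← Finset.sum_add_distrib]
    apply Finset.sum_congr rfl
    intro x _
    rw [hw x]
    simp only [hψT, hψF, hιT, hιF]
    cases hxk : x k
    · have hupd : update x k false = x := by rw [← hxk]; exact update_eq_self k x
      rw [hupd]
      simp [cw, hxk]
      ring
    · have hupd : update x k true = x := by rw [← hxk]; exact update_eq_self k x
      rw [hupd]
      simp [cw, hxk]
      ring
  have mT := master k ψT hψTinv ιT
  have mF := master k ψF hψFinv ιF
  have hι1 : (ιT true + ιT false) = 1 := by simp [hιT]
  have hι2 : (ιF true + ιF false) = 1 := by simp [hιF]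
  rw [hι1] at mT; rw [hι2] at mF
  have hψsum : ∑ x : Fin N → Bool, ψ x
      = p k * ∑ x : Fin N → Bool, ψT x + (1 - p k) * ∑ x : Fin N → Bool, ψF x := by
    rw [Finset.mul_sum, Finset.mul_sum, ← Finset.sum_add_distrib]
    apply Finset.sum_congr rfl
    intro x _
    simp only [hψdef, hψT, hψF]
    ring
  rw [hL, hR, mT, mF, hψsum]
  ring







lemma hp0' (P : Fin N → Measure Bool) (p : Fin N → ℝ) (hp : ∀ k, p k = (P k {true}).toReal)
    (k : Fin N) : 0 ≤ p k := by rw [hp k]; exact ENNReal.toReal_nonneg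

lemma hp1' (P : Fin N → Measure Bool) [∀ k, IsProbabilityMeasure (P k)]
    (p : Fin N → ℝ) (hp : ∀ k, p k = (P k {true}).toReal) (k : Fin N) : p k ≤ 1 := by
  rw [hp k]
  have h := prob_le_one (μ := P k) (s := {true})
  have := ENNReal.toReal_mono (by norm_num) h
  simpa using this

lemma cw_nonneg (p : Fin N → ℝ) (hp0 : ∀ k, 0 ≤ p k) (hp1 : ∀ k, p k ≤ 1)
    (k : Fin N) (b : Bool) : 0 ≤ cw p k b := by
  cases b <;> simp only [cw, if_pos, if_neg, Bool.false_eq_true, if_false, if_true]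
  · linarith [hp1 k]
  · exact hp0 k

lemma w_nonneg (p : Fin N → ℝ) (hp0 : ∀ k, 0 ≤ p k) (hp1 : ∀ k, p k ≤ 1)
    (x : Fin N → Bool) : 0 ≤ w p x :=
  Finset.prod_nonneg fun k _ => cw_nonneg p hp0 hp1 k (x k)

lemma meas_bool (P : Fin N → Measure Bool) [∀ k, IsProbabilityMeasure (P k)]
    (p : Fin N → ℝ) (hp : ∀ k, p k = (P k {true}).toReal) (k : Fin N) (b : Bool) :
    P k {b} = ENNReal.ofReal (cw p k b) := by
  cases b
  · have hcompl : ({false} : Set Bool) = ({true} : Set Bool)ᶜ := by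
      ext b; cases b <;> simp
    have h1 : P k {true} ≤ 1 := prob_le_one
    have hne : P k {true} ≠ ⊤ := ne_top_of_le_ne_top (by norm_num) h1
    rw [hcompl, measure_compl (by trivial) hne, measure_univ]
    have : cw p k false = 1 - p k := by simp [cw]
    rw [this, hp k]
    rw [ENNReal.ofReal_sub _ ENNReal.toReal_nonneg, ENNReal.ofReal_one,
      ENNReal.ofReal_toReal hne]
  · have : cw p k true = p k := by simp [cw]
    rw [this, hp k, ENNReal.ofReal_toReal]
    exact ne_top_of_le_ne_top (by norm_num) prob_le_one

lemma pi_singleton (P : Fin N → Measure Bool) [∀ k, IsProbabilityMeasure (P k)]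
    (p : Fin N → ℝ) (hp : ∀ k, p k = (P k {true}).toReal) (x : Fin N → Bool) :
    Measure.pi P {x} = ENNReal.ofReal (w p x) := by
  rw [← Set.univ_pi_singleton, Measure.pi_pi, w,
    ENNReal.ofReal_prod_of_nonneg
      (fun k _ => cw_nonneg p (hp0' P p hp) (hp1' P p hp) k (x k))]
  exact Finset.prod_congr rfl fun k _ => meas_bool P p hp k (x k)

open Classical in
lemma meas_set (P : Fin N → Measure Bool) [∀ k, IsProbabilityMeasure (P k)]
    (p : Fin N → ℝ) (hp : ∀ k, p k = (P k {true}).toReal) (S : Set (Fin N → Bool)) :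
    Measure.pi P S = ENNReal.ofReal (∑ x ∈ Finset.univ.filter (· ∈ S), w p x) := by
  have hS : S = ⋃ x ∈ Finset.univ.filter (· ∈ S), ({x} : Set (Fin N → Bool)) := by
    ext y; simp
  conv_lhs => rw [hS]
  rw [measure_biUnion_finset]
  · rw [ENNReal.ofReal_sum_of_nonneg (fun x _ => w_nonneg p (hp0' P p hp) (hp1' P p hp) x)]
    exact Finset.sum_congr rfl fun x _ => pi_singleton P p hp x
  · intro a _ b _ hab
    simp [Set.disjoint_singleton, hab]
  · intro x _; exact measurableSet_singleton x

lemma integral_eq (P : Fin N → Measure Bool) [∀ k, IsProbabilityMeasure (P k)]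
    (p : Fin N → ℝ) (hp : ∀ k, p k = (P k {true}).toReal) (f : (Fin N → Bool) → ℝ) :
    ∫ y, f y ∂(Measure.pi P) = ∑ x, w p x * f x := by
  rw [integral_fintype (Integrable.of_finite)]
  apply Finset.sum_congr rfl
  intro x _
  rw [measureReal_def, pi_singleton P p hp,
    ENNReal.toReal_ofReal (w_nonneg p (hp0' P p hp) (hp1' P p hp) x)]
  simp [mul_comm]

open Classical in
lemma sum_w_one (P : Fin N → Measure Bool) [∀ k, IsProbabilityMeasure (P k)]
    (p : Fin N → ℝ) (hp : ∀ k, p k = (P k {true}).toReal) : ∑ x, w p x = 1 := by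
  have h := meas_set P p hp Set.univ
  rw [measure_univ] at h
  simp only [Set.mem_univ, Finset.filter_true] at h
  exact (ENNReal.ofReal_eq_one.mp h.symm)



section More
variable {N : ℕ} (p : Fin N → ℝ)

lemma Ek_update (j : ℕ) (g : (Fin N → Bool) → ℝ) (k : Fin N) (hk : (k : ℕ) < j) (b : Bool)
    (x : Fin N → Bool) :
    Ek p j (fun y => g (update y k b)) x = Ek p j g (update x k b) := by
  by_cases hj : j < N
  · rw [Ek_succ p hj, Ek_succ p hj]
    unfold A
    have hne : (⟨j, hj⟩ : Fin N) ≠ k := by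
      intro h
      have : (k : ℕ) = j := by rw [← h]
      omega
    rw [Ek_update (j+1) g k (by omega) b, Ek_update (j+1) g k (by omega) b,
      update_comm hne, update_comm hne]
  · rw [Ek_stop p hj, Ek_stop p hj]
  termination_by N - j

lemma sumEk (j : ℕ) (g : (Fin N → Bool) → ℝ) :
    ∑ x : Fin N → Bool, w p x * Ek p j g x = ∑ x : Fin N → Bool, w p x * g x := by
  by_cases hj : j < N
  · have h1 : ∑ x : Fin N → Bool, w p x * Ek p j g x
        = ∑ x : Fin N → Bool, w p x * A p ⟨j, hj⟩ (Ek p (j+1) g) x := by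
      apply Finset.sum_congr rfl
      intro x _
      rw [Ek_succ p hj]
    rw [h1, sumA p ⟨j, hj⟩ (Ek p (j+1) g)]
    exact sumEk (j+1) g
  · apply Finset.sum_congr rfl
    intro x _
    rw [Ek_stop p hj]
  termination_by N - j

/-- pull-in: expectation of invariant-factor times conditional expectation -/
lemma sum_pull (j : ℕ) (φ g : (Fin N → Bool) → ℝ)
    (hφ : ∀ (x : Fin N → Bool) (k : Fin N) (b : Bool), j ≤ (k : ℕ) → φ (update x k b) = φ x) :
    ∑ x : Fin N → Bool, w p x * (φ x * Ek p j g x)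
      = ∑ x : Fin N → Bool, w p x * (φ x * g x) := by
  have h1 : ∑ x : Fin N → Bool, w p x * (φ x * Ek p j g x)
      = ∑ x : Fin N → Bool, w p x * Ek p j (fun y => φ y * g y) x := by
    apply Finset.sum_congr rfl
    intro x _
    rw [Ek_mul_left p j φ g hφ x]
  rw [h1, sumEk p j (fun y => φ y * g y)]

end More

section Peel
variable {N : ℕ} (p : Fin N → ℝ)

lemma Ek_dep (j : ℕ) (g : (Fin N → Bool) → ℝ) (x y : Fin N → Bool)
    (hxy : ∀ i : Fin N, (i : ℕ) < j → x i = y i) : Ek p j g x = Ek p j g y := by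
  by_cases hj : j < N
  · rw [Ek_succ p hj]
    unfold A
    have h1 : ∀ b, ∀ i : Fin N, (i:ℕ) < j + 1 →
        update x ⟨j, hj⟩ b i = update y ⟨j, hj⟩ b i := by
      intro b i hi
      by_cases hij : i = ⟨j, hj⟩
      · subst hij; simp
      · rw [update_of_ne hij, update_of_ne hij]
        apply hxy
        have : (i : ℕ) ≠ j := fun h => hij (Fin.ext h)
        omega
    rw [Ek_dep (j+1) g _ _ (h1 true), Ek_dep (j+1) g _ _ (h1 false)]
  · rw [Ek_stop p hj]
    have : x = y := funext fun i => hxy i (lt_of_lt_of_le i.isLt (not_lt.mp hj))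
    rw [this]
  termination_by N - j

lemma Ek_zero (hsum1 : ∑ y, w p y = 1) (g : (Fin N → Bool) → ℝ) (x : Fin N → Bool) :
    Ek p 0 g x = ∑ y, w p y * g y := by
  have hconst : ∀ y, Ek p 0 g y = Ek p 0 g x :=
    fun y => Ek_dep p 0 g y x (fun i hi => by omega)
  have h1 : ∑ y, w p y * Ek p 0 g y = ∑ y, w p y * g y := sumEk p 0 g
  have h2 : ∑ y, w p y * Ek p 0 g y = Ek p 0 g x := by
    calc ∑ y, w p y * Ek p 0 g y = ∑ y, w p y * Ek p 0 g x :=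
          Finset.sum_congr rfl fun y _ => by rw [hconst y]
      _ = (∑ y, w p y) * Ek p 0 g x := by rw [← Finset.sum_mul]
      _ = Ek p 0 g x := by rw [hsum1, one_mul]
  rw [← h2, h1]

lemma Ek_sub (j : ℕ) (g h : (Fin N → Bool) → ℝ) (x : Fin N → Bool) :
    Ek p j (fun y => g y - h y) x = Ek p j g x - Ek p j h x := by
  have h1 : (fun y => g y - h y) = fun y => g y + (-1 : ℝ) * h y := by
    funext y; ring
  rw [h1, Ek_add p j g (fun y => (-1:ℝ) * h y), Ek_smul p j (-1) h]
  ring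

lemma goodDelta (hp0 : ∀ k, 0 ≤ p k) (hp1 : ∀ k, p k ≤ 1)
    (f χ : (Fin N → Bool) → ℝ) (c d γ : Fin N → ℝ)
    (hχ0 : ∀ x, 0 ≤ χ x) (hχ1 : ∀ x, χ x ≤ 1)
    (hdc : ∀ k, 0 ≤ d k - c k)
    (hptw : ∀ (k : Fin N) (y : Fin N → Bool), |f (update y k true) - f (update y k false)|
      ≤ c k + (d k - c k) * (χ (update y k true) * χ (update y k false)))
    (k : Fin N) (x : Fin N → Bool) (hx : ¬ γ k ≤ Ek p (k : ℕ) χ x) :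
    |Ek p ((k:ℕ)+1) f (update x k true) - Ek p ((k:ℕ)+1) f (update x k false)|
      ≤ c k + γ k * (d k - c k) := by
  set j := (k : ℕ) with hj
  have hjN : j < N := k.isLt
  have hkj : (⟨j, hjN⟩ : Fin N) = k := Fin.ext rfl
  -- express the difference as Ek of a pointwise difference
  have hu : Ek p (j+1) f (update x k true)
      = Ek p (j+1) (fun y => f (update y k true)) x := (Ek_update p (j+1) f k (by omega) true x).symm
  have hv : Ek p (j+1) f (update x k false)
      = Ek p (j+1) (fun y => f (update y k false)) x := (Ek_update p (j+1) f k (by omega) false x).symm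
  set Q : ℝ := Ek p (j+1) (fun y => χ (update y k true) * χ (update y k false)) x with hQ
  have hQle : Q ≤ Ek p j χ x := by
    have hsucc : Ek p j χ x = p k * Ek p (j+1) χ (update x k true)
        + (1 - p k) * Ek p (j+1) χ (update x k false) := by
      rw [Ek_succ p hjN]
      unfold A
      rw [hkj]
    have hQT : Q ≤ Ek p (j+1) χ (update x k true) := by
      rw [← Ek_update p (j+1) χ k (by omega) true x]
      apply Ek_mono p hp0 hp1 (j+1)
      intro y
      calc χ (update y k true) * χ (update y k false)
          ≤ χ (update y k true) * 1 := by
            apply mul_le_mul_of_nonneg_left (hχ1 _) (hχ0 _)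
        _ = χ (update y k true) := mul_one _
    have hQF : Q ≤ Ek p (j+1) χ (update x k false) := by
      rw [← Ek_update p (j+1) χ k (by omega) false x]
      apply Ek_mono p hp0 hp1 (j+1)
      intro y
      calc χ (update y k true) * χ (update y k false)
          ≤ 1 * χ (update y k false) := by
            apply mul_le_mul_of_nonneg_right (hχ1 _) (hχ0 _)
        _ = χ (update y k false) := one_mul _
    have h0 := hp0 k; have h1 := hp1 k
    nlinarith
  have hQ0 : 0 ≤ Q :=
    Ek_nonneg p hp0 hp1 (j+1) _ (fun y => mul_nonneg (hχ0 _) (hχ0 _)) x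
  have habs : |Ek p (j+1) f (update x k true) - Ek p (j+1) f (update x k false)|
      ≤ c k + (d k - c k) * Q := by
    rw [hu, hv, ← Ek_sub p (j+1)]
    calc |Ek p (j+1) (fun y => f (update y k true) - f (update y k false)) x|
        ≤ Ek p (j+1) (fun y => |f (update y k true) - f (update y k false)|) x :=
          Ek_abs p hp0 hp1 (j+1) _ x
      _ ≤ Ek p (j+1) (fun y => c k + (d k - c k) * (χ (update y k true) * χ (update y k false))) x := by
          apply Ek_mono p hp0 hp1 (j+1)
          intro y
          exact hptw k y
      _ = c k + (d k - c k) * Q := by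
          rw [Ek_add p (j+1) (fun _ => c k)
            (fun y => (d k - c k) * (χ (update y k true) * χ (update y k false))),
            Ek_const p (j+1) (c k), Ek_smul p (j+1) (d k - c k)]
  have hQγ : Q ≤ γ k := le_trans hQle (le_of_not_ge hx)
  calc |Ek p (j+1) f (update x k true) - Ek p (j+1) f (update x k false)|
      ≤ c k + (d k - c k) * Q := habs
    _ ≤ c k + (d k - c k) * γ k := by
        have := mul_le_mul_of_nonneg_left hQγ (hdc k)
        linarith
    _ = c k + γ k * (d k - c k) := by ring

end Peel

section PeelMain
variable {N : ℕ}

lemma peel (p : Fin N → ℝ) (hp0 : ∀ k, 0 ≤ p k) (hp1 : ∀ k, p k ≤ 1)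
    (f χ : (Fin N → Bool) → ℝ) (γ a : Fin N → ℝ) (C l : ℝ)
    (hl : 0 ≤ l) (haC : ∀ k, a k ≤ C)
    (hcond : ∀ k : Fin N, p k * (1 - p k) * (a k)^2 = 0 ∨ l * C < 3)
    (hΔ : ∀ (k : Fin N) (x : Fin N → Bool), ¬ γ k ≤ Ek p (k : ℕ) χ x →
      |Ek p ((k:ℕ)+1) f (update x k true) - Ek p ((k:ℕ)+1) f (update x k false)| ≤ a k)
    (j : ℕ) (x : Fin N → Bool) :
    Ek p j (fun y => ∏ k ∈ Finset.univ.filter (fun k : Fin N => j ≤ (k:ℕ)),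
        (Real.exp (l * (Ek p ((k:ℕ)+1) f y - Ek p (k:ℕ) f y)) *
          (if γ k ≤ Ek p (k:ℕ) χ y then 0 else 1))) x
      ≤ ∏ k ∈ Finset.univ.filter (fun k : Fin N => j ≤ (k:ℕ)),
        Real.exp (l^2 * (p k * (1 - p k) * (a k)^2) / (2*(1 - l*C/3))) := by
  by_cases hj : j < N
  · set kj : Fin N := ⟨j, hj⟩ with hkj
    have hsplit : Finset.univ.filter (fun k : Fin N => j ≤ (k:ℕ))
        = insert kj (Finset.univ.filter (fun k : Fin N => j+1 ≤ (k:ℕ))) := by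
      ext k
      simp only [Finset.mem_filter, Finset.mem_insert, Finset.mem_univ, true_and, hkj,
        Fin.ext_iff]
      omega
    have hnotmem : kj ∉ Finset.univ.filter (fun k : Fin N => j+1 ≤ (k:ℕ)) := by
      simp [hkj]
    set F : (Fin N → Bool) → ℝ := fun y =>
      Real.exp (l * (Ek p (j+1) f y - Ek p j f y)) *
        (if γ kj ≤ Ek p j χ y then 0 else 1) with hF
    set G' : (Fin N → Bool) → ℝ := fun y =>
      ∏ k ∈ Finset.univ.filter (fun k : Fin N => j+1 ≤ (k:ℕ)),
        (Real.exp (l * (Ek p ((k:ℕ)+1) f y - Ek p (k:ℕ) f y)) *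
          (if γ k ≤ Ek p (k:ℕ) χ y then 0 else 1)) with hG'
    have hfun : (fun y => ∏ k ∈ Finset.univ.filter (fun k : Fin N => j ≤ (k:ℕ)),
        (Real.exp (l * (Ek p ((k:ℕ)+1) f y - Ek p (k:ℕ) f y)) *
          (if γ k ≤ Ek p (k:ℕ) χ y then 0 else 1))) = fun y => F y * G' y := by
      funext y
      rw [hsplit, Finset.prod_insert hnotmem]
    rw [hfun]
    have hFinv : ∀ (y : Fin N → Bool) (k : Fin N) (b : Bool), j+1 ≤ (k:ℕ) →
        F (update y k b) = F y := by
      intro y k b hk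
      simp only [hF]
      rw [Ek_inv p (j+1) f y k b hk, Ek_inv p j f y k b (by omega),
        Ek_inv p j χ y k b (by omega)]
    have hFnonneg : ∀ y, 0 ≤ F y := by
      intro y
      apply mul_nonneg (le_of_lt (Real.exp_pos _))
      split <;> norm_num
    set K : ℝ := ∏ k ∈ Finset.univ.filter (fun k : Fin N => j+1 ≤ (k:ℕ)),
        Real.exp (l^2 * (p k * (1 - p k) * (a k)^2) / (2*(1 - l*C/3))) with hK
    have hKnonneg : 0 ≤ K :=
      Finset.prod_nonneg fun k _ => le_of_lt (Real.exp_pos _)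
    have hptIH : ∀ y, Ek p (j+1) (fun z => F z * G' z) y ≤ F y * K := by
      intro y
      rw [Ek_mul_left p (j+1) F G' hFinv y]
      have IH := peel p hp0 hp1 f χ γ a C l hl haC hcond hΔ (j+1) y
      rw [← hG', ← hK] at IH
      exact mul_le_mul_of_nonneg_left IH (hFnonneg y)
    rw [Ek_succ p hj]
    have hAF : A p kj (fun y => F y * K) x = K * A p kj F x := by
      unfold A; ring
    have step1 : A p kj (Ek p (j+1) (fun z => F z * G' z)) x ≤ A p kj (fun y => F y * K) x := by
      unfold A
      beta_reduce
      have h1 := hptIH (update x kj true)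
      have h2 := hptIH (update x kj false)
      have hk0 := hp0 kj; have hk1 := hp1 kj
      have := mul_le_mul_of_nonneg_left h1 hk0
      have := mul_le_mul_of_nonneg_left h2 (by linarith : (0:ℝ) ≤ 1 - p kj)
      linarith
    have step2 : A p kj F x ≤ Real.exp (l^2 * (p kj * (1 - p kj) * (a kj)^2) / (2*(1 - l*C/3))) := by
      unfold A
      simp only [hF]
      rw [Ek_inv p j χ x kj true le_rfl, Ek_inv p j χ x kj false le_rfl,
        Ek_inv p j f x kj true le_rfl, Ek_inv p j f x kj false le_rfl]
      by_cases hind : γ kj ≤ Ek p j χ x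
      · rw [if_pos hind]
        have : p kj * (Real.exp (l * (Ek p (j+1) f (update x kj true) - Ek p j f x)) * 0)
            + (1 - p kj) * (Real.exp (l * (Ek p (j+1) f (update x kj false) - Ek p j f x)) * 0)
            = 0 := by ring
        rw [this]
        exact le_of_lt (Real.exp_pos _)
      · rw [if_neg hind]
        set u : ℝ := Ek p (j+1) f (update x kj true) with hu
        set v : ℝ := Ek p (j+1) f (update x kj false) with hv
        have hEkj : Ek p j f x = p kj * u + (1 - p kj) * v := by
          rw [Ek_succ p hj]; unfold A; rw [hkj]
        have hΔ' : |u - v| ≤ a kj := hΔ kj x hind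
        have e1 : l * (u - Ek p j f x) = l * ((1 - p kj) * (u - v)) := by
          rw [hEkj]; ring
        have e2 : l * (v - Ek p j f x) = l * (-(p kj * (u - v))) := by
          rw [hEkj]; ring
        rw [e1, e2, mul_one, mul_one]
        exact tbd_mgf (p kj) (u - v) (a kj) C l (hp0 kj) (hp1 kj) hΔ' (haC kj) hl (hcond kj)
    calc A p kj (Ek p (j+1) (fun z => F z * G' z)) x
        ≤ A p kj (fun y => F y * K) x := step1
      _ = K * A p kj F x := hAF
      _ ≤ K * Real.exp (l^2 * (p kj * (1 - p kj) * (a kj)^2) / (2*(1 - l*C/3))) :=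
          mul_le_mul_of_nonneg_left step2 hKnonneg
      _ = ∏ k ∈ Finset.univ.filter (fun k : Fin N => j ≤ (k:ℕ)),
          Real.exp (l^2 * (p k * (1 - p k) * (a k)^2) / (2*(1 - l*C/3))) := by
          rw [hsplit, Finset.prod_insert hnotmem]
          ring
  · have hempty : Finset.univ.filter (fun k : Fin N => j ≤ (k:ℕ)) = ∅ := by
      apply Finset.filter_false_of_mem
      intro k _
      have := k.isLt
      omega
    rw [Ek_stop p hj, hempty]
    simp
  termination_by N - j

end PeelMain

end TBDaux
open TBDaux

/-- **Typical bounded differences inequality for 0-1 variables** (Theorem 1.3 of Warnke).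
The coordinates are independent `Bool`-valued random variables (`true` := 1), modeled by
the product measure `Measure.pi P`, with `p k = P(X_k = 1)`. -/
theorem typical_bounded_differences_bool {N : ℕ}
    (P : Fin N → Measure Bool) [∀ k, IsProbabilityMeasure (P k)]
    (p : Fin N → ℝ) (hp : ∀ k, p k = (P k {true}).toReal)
    (f : (Fin N → Bool) → ℝ)
    (Γ : Set (Fin N → Bool))
    (c d : Fin N → ℝ) (hcd : ∀ k, c k ≤ d k)
    -- the typical Lipschitz condition (TL)
    (hTL : ∀ (k : Fin N) (x x' : Fin N → Bool), (∀ j, j ≠ k → x j = x' j) →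
      (x ∈ Γ → |f x - f x'| ≤ c k) ∧ (x ∉ Γ → |f x - f x'| ≤ d k))
    (γ : Fin N → ℝ) (hγ : ∀ k, γ k ∈ Set.Ioc (0 : ℝ) 1)
    -- `C = max_k (c_k + e_k)` where `e_k = γ_k (d_k - c_k)`
    (C : ℝ) (hC : IsGreatest (Set.range fun k => c k + γ k * (d k - c k)) C) :
    ∃ B : Set (Fin N → Bool), MeasurableSet B ∧
      Measure.pi P B ≤ ∑ k, ENNReal.ofReal ((γ k)⁻¹) * Measure.pi P Γᶜ ∧
      Bᶜ ⊆ Γ ∧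
      ∀ t : ℝ, 0 ≤ t →
        Measure.pi P {x | f x ≥ (∫ y, f y ∂(Measure.pi P)) + t ∧ x ∉ B} ≤
          ENNReal.ofReal (Real.exp (-t ^ 2 /
            (2 * ∑ k, (1 - p k) * p k * (c k + γ k * (d k - c k)) ^ 2 +
              2 * C * t / 3))) := by
  classical
  have hp0 : ∀ k, 0 ≤ p k := hp0' P p hp
  have hp1 : ∀ k, p k ≤ 1 := hp1' P p hp
  obtain ⟨k₀, hk₀⟩ := hC.1
  have hγinv : ∀ k, (1:ℝ) ≤ (γ k)⁻¹ := by
    intro k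
    have h1 := (hγ k).1; have h2 := (hγ k).2
    have h3 := mul_inv_cancel₀ (ne_of_gt h1)
    have h4 : 0 ≤ (γ k)⁻¹ := inv_nonneg.mpr h1.le
    nlinarith
  have hW0 : ∀ x, 0 ≤ w p x := w_nonneg p hp0 hp1
  have hind0 : ∀ (S : Set (Fin N → Bool)) x, 0 ≤ S.indicator (w p) x :=
    fun S x => Set.indicator_nonneg (fun y _ => hW0 y) x
  have hmeas : ∀ S : Set (Fin N → Bool),
      Measure.pi P S = ENNReal.ofReal (∑ x, S.indicator (w p) x) := by
    intro S
    rw [meas_set P p hp S, Finset.sum_filter]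
    exact congrArg _ (Finset.sum_congr rfl fun x _ => (Set.indicator_apply S (w p) x).symm)
  have hsum1 : ∑ x, w p x = 1 := sum_w_one P p hp
  have hms1 : ∀ S : Set (Fin N → Bool), (∑ x, S.indicator (w p) x) ≤ 1 := by
    intro S
    rw [← hsum1]
    exact Finset.sum_le_sum fun x _ => Set.indicator_le_self' (fun y _ => hW0 y) x
  by_cases hΓe : Γ = ∅
  · -- degenerate case: Γ empty, take B = univ
    refine ⟨Set.univ, MeasurableSet.univ, ?_, by simp, ?_⟩
    · have h1 : Measure.pi P Γᶜ = 1 := by rw [hΓe, Set.compl_empty]; exact measure_univ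
      have h2 : Measure.pi P Set.univ = 1 := measure_univ
      rw [h1, h2]
      calc (1:ENNReal) ≤ ENNReal.ofReal ((γ k₀)⁻¹) * 1 := by
            rw [mul_one, ← ENNReal.ofReal_one]
            exact ENNReal.ofReal_le_ofReal (hγinv k₀)
        _ ≤ ∑ k, ENNReal.ofReal ((γ k)⁻¹) * 1 :=
            Finset.single_le_sum (f := fun k => ENNReal.ofReal ((γ k)⁻¹) * 1)
              (fun k _ => zero_le) (Finset.mem_univ k₀)
    · intro t ht
      have hempty : {x : Fin N → Bool | f x ≥ (∫ y, f y ∂(Measure.pi P)) + t ∧ x ∉ Set.univ} = ∅ := by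
        ext x; simp
      rw [hempty]
      simp
  · -- main case
    obtain ⟨x₀, hx₀⟩ := Set.nonempty_iff_ne_empty.mpr hΓe
    set χ : (Fin N → Bool) → ℝ := fun x => if x ∈ Γ then 0 else 1 with hχdef
    have hχ0 : ∀ x, 0 ≤ χ x := by intro x; simp only [hχdef]; split <;> norm_num
    have hχ1 : ∀ x, χ x ≤ 1 := by intro x; simp only [hχdef]; split <;> norm_num
    have hdc : ∀ k, 0 ≤ d k - c k := fun k => by linarith [hcd k]
    have hc0 : ∀ k, 0 ≤ c k := by
      intro k
      have hagree : ∀ j, j ≠ k → x₀ j = (Function.update x₀ k (!(x₀ k))) j :=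
        fun j hj => (Function.update_of_ne hj _ _).symm
      have := (hTL k x₀ _ hagree).1 hx₀
      exact le_trans (abs_nonneg _) this
    have ha0 : ∀ k, 0 ≤ c k + γ k * (d k - c k) :=
      fun k => add_nonneg (hc0 k) (mul_nonneg (le_of_lt (hγ k).1) (hdc k))
    have haC : ∀ k, c k + γ k * (d k - c k) ≤ C := fun k => hC.2 ⟨k, rfl⟩
    have hC0 : 0 ≤ C := le_trans (ha0 k₀) (haC k₀)
    set Bk : Fin N → Set (Fin N → Bool) := fun k => {x | γ k ≤ Ek p (k:ℕ) χ x} with hBkdef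
    set B : Set (Fin N → Bool) := Γᶜ ∪ ⋃ k, Bk k with hBdef
    have hh0 : ∀ (k : Fin N) x, 0 ≤ Ek p (k:ℕ) χ x :=
      fun k x => Ek_nonneg p hp0 hp1 _ χ hχ0 x
    -- Markov bound
    have hmark : ∀ k : Fin N, (∑ x, (Γᶜ ∪ Bk k).indicator (w p) x)
        ≤ (γ k)⁻¹ * (∑ x, Γᶜ.indicator (w p) x) := by
      intro k
      set ι : (Fin N → Bool) → ℝ := fun x => if γ k ≤ Ek p (k:ℕ) χ x then 1 else 0 with hιdef
      have hιinv : ∀ (x : Fin N → Bool) (k' : Fin N) (b : Bool), (k:ℕ) ≤ (k':ℕ) →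
          ι (Function.update x k' b) = ι x := by
        intro x k' b hk'
        simp only [hιdef]
        rw [Ek_inv p (k:ℕ) χ x k' b hk']
      have hpoint : ∀ x, γ k * (Γᶜ ∪ Bk k).indicator (w p) x
          ≤ w p x * (ι x * Ek p (k:ℕ) χ x + (1 - ι x) * χ x) := by
        intro x
        by_cases hb : γ k ≤ Ek p (k:ℕ) χ x
        · have hι1 : ι x = 1 := if_pos hb
          rw [hι1]
          have hR : w p x * (1 * Ek p (k:ℕ) χ x + (1-1) * χ x) = w p x * Ek p (k:ℕ) χ x := by ring
          rw [hR]
          by_cases hmem : x ∈ Γᶜ ∪ Bk k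
          · rw [Set.indicator_of_mem hmem]
            calc γ k * w p x ≤ Ek p (k:ℕ) χ x * w p x :=
                  mul_le_mul_of_nonneg_right hb (hW0 x)
              _ = w p x * Ek p (k:ℕ) χ x := by ring
          · rw [Set.indicator_of_notMem hmem, mul_zero]
            exact mul_nonneg (hW0 x) (hh0 k x)
        · have hι0 : ι x = 0 := if_neg hb
          rw [hι0]
          have hR : w p x * (0 * Ek p (k:ℕ) χ x + (1-0) * χ x) = w p x * χ x := by ring
          rw [hR]
          by_cases hmem : x ∈ Γᶜ ∪ Bk k
          · rw [Set.indicator_of_mem hmem]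
            have hxΓ : x ∈ Γᶜ := by
              rcases hmem with h | h
              · exact h
              · exact absurd h hb
            have hχx : χ x = 1 := if_neg hxΓ
            rw [hχx, mul_one]
            calc γ k * w p x ≤ 1 * w p x :=
                mul_le_mul_of_nonneg_right (hγ k).2 (hW0 x)
              _ = w p x := one_mul _
          · rw [Set.indicator_of_notMem hmem, mul_zero]
            exact mul_nonneg (hW0 x) (hχ0 x)
      have hsum : γ k * (∑ x, (Γᶜ ∪ Bk k).indicator (w p) x)
          ≤ ∑ x, Γᶜ.indicator (w p) x := by
        rw [Finset.mul_sum]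
        calc ∑ x, γ k * (Γᶜ ∪ Bk k).indicator (w p) x
            ≤ ∑ x, w p x * (ι x * Ek p (k:ℕ) χ x + (1 - ι x) * χ x) :=
              Finset.sum_le_sum fun x _ => hpoint x
          _ = (∑ x, w p x * (ι x * Ek p (k:ℕ) χ x)) + ∑ x, w p x * ((1 - ι x) * χ x) := by
              rw [← Finset.sum_add_distrib]
              exact Finset.sum_congr rfl fun x _ => by ring
          _ = (∑ x, w p x * (ι x * χ x)) + ∑ x, w p x * ((1 - ι x) * χ x) := by
              rw [sum_pull p (k:ℕ) ι χ hιinv]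
          _ = ∑ x, w p x * χ x := by
              rw [← Finset.sum_add_distrib]
              exact Finset.sum_congr rfl fun x _ => by ring
          _ = ∑ x, Γᶜ.indicator (w p) x := by
              apply Finset.sum_congr rfl
              intro x _
              by_cases hxΓ : x ∈ Γᶜ
              · rw [Set.indicator_of_mem hxΓ]
                have : χ x = 1 := if_neg hxΓ
                rw [this, mul_one]
              · rw [Set.indicator_of_notMem hxΓ]
                have hxΓ' : x ∈ Γ := not_not.mp hxΓ
                have : χ x = 0 := if_pos hxΓ'
                rw [this, mul_zero]
      have heq : (∑ x, (Γᶜ ∪ Bk k).indicator (w p) x)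
          = (γ k)⁻¹ * (γ k * (∑ x, (Γᶜ ∪ Bk k).indicator (w p) x)) := by
        rw [← mul_assoc, inv_mul_cancel₀ (ne_of_gt (hγ k).1), one_mul]
      rw [heq]
      exact mul_le_mul_of_nonneg_left hsum (inv_nonneg.mpr (hγ k).1.le)
    refine ⟨B, (Set.toFinite B).measurableSet, ?_, ?_, ?_⟩
    · -- measure of B
      haveI : Nonempty (Fin N) := ⟨k₀⟩
      have hBeq : B ⊆ ⋃ k, (Γᶜ ∪ Bk k) := by
        rw [hBdef, Set.union_iUnion]
      have hsubadd : (∑ x, B.indicator (w p) x)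
          ≤ ∑ k : Fin N, ∑ x, (Γᶜ ∪ Bk k).indicator (w p) x := by
        rw [Finset.sum_comm]
        apply Finset.sum_le_sum
        intro x _
        by_cases hxB : x ∈ B
        · rw [Set.indicator_of_mem hxB]
          obtain ⟨k₁, hk₁⟩ := Set.mem_iUnion.mp (hBeq hxB)
          calc w p x = (Γᶜ ∪ Bk k₁).indicator (w p) x := (Set.indicator_of_mem hk₁ _).symm
            _ ≤ ∑ k : Fin N, (Γᶜ ∪ Bk k).indicator (w p) x :=
              Finset.single_le_sum (f := fun k => (Γᶜ ∪ Bk k).indicator (w p) x)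
                (fun k _ => hind0 _ x) (Finset.mem_univ k₁)
        · rw [Set.indicator_of_notMem hxB]
          exact Finset.sum_nonneg fun k _ => hind0 _ x
      rw [hmeas B]
      refine le_trans (ENNReal.ofReal_le_ofReal
        (le_trans hsubadd (Finset.sum_le_sum fun k _ => hmark k))) ?_
      have hofsum := ENNReal.ofReal_sum_of_nonneg (s := Finset.univ)
        (f := fun k : Fin N => (γ k)⁻¹ * (∑ x, Γᶜ.indicator (w p) x))
        (fun k _ => mul_nonneg (inv_nonneg.mpr (hγ k).1.le)
          (Finset.sum_nonneg fun x _ => hind0 _ x))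
      rw [hofsum]
      apply le_of_eq
      apply Finset.sum_congr rfl
      intro k _
      rw [ENNReal.ofReal_mul (inv_nonneg.mpr (hγ k).1.le), hmeas Γᶜ]
    · -- Bᶜ ⊆ Γ
      intro x hx
      by_contra hxg
      exact hx (Or.inl hxg)
    · -- the tail bound
      intro t ht
      set μ0 := ∫ y, f y ∂(Measure.pi P) with hμ0def
      have hμ0 : μ0 = ∑ y, w p y * f y := by rw [hμ0def]; exact integral_eq P p hp f
      set E : Set (Fin N → Bool) := {x | f x ≥ μ0 + t ∧ x ∉ B} with hEdef
      rw [hmeas E]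
      -- pointwise TL bound
      have hptw : ∀ (k : Fin N) (y : Fin N → Bool),
          |f (Function.update y k true) - f (Function.update y k false)|
          ≤ c k + (d k - c k) * (χ (Function.update y k true) * χ (Function.update y k false)) := by
        intro k y
        have hagree : ∀ j, j ≠ k → (Function.update y k true) j = (Function.update y k false) j := by
          intro j hj; rw [Function.update_of_ne hj, Function.update_of_ne hj]
        have hagree' : ∀ j, j ≠ k → (Function.update y k false) j = (Function.update y k true) j :=
          fun j hj => (hagree j hj).symm
        have hprod : 0 ≤ χ (Function.update y k true) * χ (Function.update y k false) :=
          mul_nonneg (hχ0 _) (hχ0 _)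
        by_cases h1 : Function.update y k true ∈ Γ
        · have hb := (hTL k _ _ hagree).1 h1
          nlinarith [mul_nonneg (hdc k) hprod]
        · by_cases h2 : Function.update y k false ∈ Γ
          · have hb := (hTL k _ _ hagree').1 h2
            rw [abs_sub_comm] at hb
            nlinarith [mul_nonneg (hdc k) hprod]
          · have hb := (hTL k _ _ hagree).2 h1
            have hT : χ (Function.update y k true) = 1 := if_neg h1
            have hF : χ (Function.update y k false) = 1 := if_neg h2
            rw [hT, hF]
            calc |f (Function.update y k true) - f (Function.update y k false)| ≤ d k := hb
              _ = c k + (d k - c k) * (1 * 1) := by ring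
      have hΔ : ∀ (k : Fin N) (x : Fin N → Bool), ¬ γ k ≤ Ek p (k:ℕ) χ x →
          |Ek p ((k:ℕ)+1) f (Function.update x k true)
            - Ek p ((k:ℕ)+1) f (Function.update x k false)|
            ≤ (fun k => c k + γ k * (d k - c k)) k :=
        fun k x hx => goodDelta p hp0 hp1 f χ c d γ hχ0 hχ1 hdc hptw k x hx
      -- the key Chernoff estimate
      have KEY : ∀ l : ℝ, 0 ≤ l →
          (∀ k : Fin N, p k * (1 - p k) * ((fun k => c k + γ k * (d k - c k)) k)^2 = 0 ∨ l * C < 3) →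
          (∑ x, E.indicator (w p) x) ≤ Real.exp (-(l*t)) *
            Real.exp (∑ k : Fin N, l^2 * (p k * (1 - p k) *
              ((fun k => c k + γ k * (d k - c k)) k)^2) / (2*(1 - l*C/3))) := by
        intro l hl hcond
        have hpeel := peel p hp0 hp1 f χ γ (fun k => c k + γ k * (d k - c k)) C l hl
          (fun k => haC k) hcond hΔ 0
        have hfil : Finset.univ.filter (fun k : Fin N => 0 ≤ (k:ℕ)) = Finset.univ :=
          Finset.filter_true_of_mem (fun k _ => Nat.zero_le _)
        rw [hfil] at hpeel
        set G0 : (Fin N → Bool) → ℝ := fun y => ∏ k : Fin N,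
          (Real.exp (l * (Ek p ((k:ℕ)+1) f y - Ek p (k:ℕ) f y)) *
            (if γ k ≤ Ek p (k:ℕ) χ y then 0 else 1)) with hG0def
        have hG0nonneg : ∀ x, 0 ≤ G0 x := by
          intro x
          apply Finset.prod_nonneg
          intro k _
          apply mul_nonneg (Real.exp_pos _).le
          split <;> norm_num
        have hpoint : ∀ x, E.indicator (w p) x ≤ Real.exp (-(l*t)) * (w p x * G0 x) := by
          intro x
          by_cases hxE : x ∈ E
          · rw [Set.indicator_of_mem hxE]
            obtain ⟨hfx, hxB⟩ := hxE
            have hG0x : G0 x = Real.exp (l * (f x - μ0)) := by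
              have hindx : ∀ k : Fin N, (if γ k ≤ Ek p (k:ℕ) χ x then (0:ℝ) else 1) = 1 := by
                intro k
                rw [if_neg]
                intro hge
                exact hxB (Or.inr (Set.mem_iUnion.mpr ⟨k, hge⟩))
              calc G0 x = ∏ k : Fin N,
                    Real.exp (l * (Ek p ((k:ℕ)+1) f x - Ek p (k:ℕ) f x)) := by
                    apply Finset.prod_congr rfl
                    intro k _
                    rw [hindx k, mul_one]
                _ = Real.exp (∑ k : Fin N, l * (Ek p ((k:ℕ)+1) f x - Ek p (k:ℕ) f x)) :=
                    (Real.exp_sum _ _).symm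
                _ = Real.exp (l * (f x - μ0)) := by
                    congr 1
                    rw [← Finset.mul_sum]
                    congr 1
                    have htel : ∑ k : Fin N, (Ek p ((k:ℕ)+1) f x - Ek p (k:ℕ) f x)
                        = Ek p N f x - Ek p 0 f x := by
                      rw [Fin.sum_univ_eq_sum_range (fun i => Ek p (i+1) f x - Ek p i f x) N]
                      exact Finset.sum_range_sub (fun i => Ek p i f x) N
                    rw [htel, Ek_stop p (lt_irrefl N) f, Ek_zero p hsum1 f x, ← hμ0]
            rw [hG0x]
            have h1 : Real.exp (-(l*t)) * (w p x * Real.exp (l*(f x - μ0)))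
                = w p x * Real.exp (l*(f x - μ0) + -(l*t)) := by
              rw [Real.exp_add]; ring
            rw [h1]
            calc w p x = w p x * 1 := (mul_one _).symm
              _ ≤ w p x * Real.exp (l*(f x - μ0) + -(l*t)) := by
                  apply mul_le_mul_of_nonneg_left _ (hW0 x)
                  apply Real.one_le_exp
                  have hfx' : μ0 + t ≤ f x := hfx
                  nlinarith
          · rw [Set.indicator_of_notMem hxE]
            exact mul_nonneg (Real.exp_pos _).le (mul_nonneg (hW0 x) (hG0nonneg x))
        calc ∑ x, E.indicator (w p) x
            ≤ ∑ x, Real.exp (-(l*t)) * (w p x * G0 x) := Finset.sum_le_sum fun x _ => hpoint x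
          _ = Real.exp (-(l*t)) * ∑ x, w p x * G0 x := by rw [← Finset.mul_sum]
          _ ≤ Real.exp (-(l*t)) * Real.exp (∑ k : Fin N, l^2 * (p k * (1 - p k) *
              ((fun k => c k + γ k * (d k - c k)) k)^2) / (2*(1 - l*C/3))) := by
              apply mul_le_mul_of_nonneg_left _ (Real.exp_pos _).le
              calc ∑ x, w p x * G0 x = ∑ x, w p x * Ek p 0 G0 x := (sumEk p 0 G0).symm
                _ ≤ ∑ x, w p x * (∏ k : Fin N, Real.exp (l^2 * (p k * (1 - p k) *
                    ((fun k => c k + γ k * (d k - c k)) k)^2) / (2*(1 - l*C/3)))) :=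
                    Finset.sum_le_sum fun x _ => mul_le_mul_of_nonneg_left (hpeel x) (hW0 x)
                _ = (∑ x, w p x) * ∏ k : Fin N, Real.exp (l^2 * (p k * (1 - p k) *
                    ((fun k => c k + γ k * (d k - c k)) k)^2) / (2*(1 - l*C/3))) := by
                    rw [← Finset.sum_mul]
                _ = ∏ k : Fin N, Real.exp (l^2 * (p k * (1 - p k) *
                    ((fun k => c k + γ k * (d k - c k)) k)^2) / (2*(1 - l*C/3))) := by
                    rw [hsum1, one_mul]
                _ = Real.exp (∑ k : Fin N, l^2 * (p k * (1 - p k) *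
                    ((fun k => c k + γ k * (d k - c k)) k)^2) / (2*(1 - l*C/3))) :=
                    (Real.exp_sum _ _).symm
      -- choose λ and conclude
      have hterm0 : ∀ k : Fin N, 0 ≤ (1 - p k) * p k * (c k + γ k * (d k - c k))^2 :=
        fun k => mul_nonneg (mul_nonneg (by linarith [hp1 k]) (hp0 k)) (sq_nonneg _)
      rcases eq_or_lt_of_le ht with ht0 | htpos
      · -- t = 0
        rw [← ht0]
        have hzero : -(0:ℝ)^2 / (2 * (∑ k : Fin N, (1 - p k) * p k *
            (c k + γ k * (d k - c k))^2) + 2*C*0/3) = 0 := by norm_num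
        rw [hzero, Real.exp_zero]
        exact ENNReal.ofReal_le_ofReal (hms1 E)
      · set V : ℝ := ∑ k : Fin N, (1 - p k) * p k * (c k + γ k * (d k - c k))^2 with hVdef
        have hV0 : 0 ≤ V := Finset.sum_nonneg fun k _ => hterm0 k
        by_cases hVz : V = 0
        · have hterm : ∀ k : Fin N, p k * (1 - p k) * ((fun k => c k + γ k * (d k - c k)) k)^2 = 0 := by
            intro k
            have hz := (Finset.sum_eq_zero_iff_of_nonneg (fun k _ => hterm0 k)).mp
              (hVdef ▸ hVz) k (Finset.mem_univ k)
            linear_combination hz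
          by_cases hCz : C = 0
          · have hzero : -t^2 / (2*V + 2*C*t/3) = 0 := by rw [hVz, hCz]; norm_num
            rw [hzero, Real.exp_zero]
            exact ENNReal.ofReal_le_ofReal (hms1 E)
          · have hCpos : 0 < C := lt_of_le_of_ne hC0 (Ne.symm hCz)
            have hl : (0:ℝ) ≤ 3/(2*C) := by positivity
            have hKEY := KEY (3/(2*C)) hl (fun k => Or.inl (hterm k))
            have hSzero : ∑ k : Fin N, (3/(2*C))^2 * (p k * (1 - p k) *
                ((fun k => c k + γ k * (d k - c k)) k)^2) / (2*(1 - (3/(2*C))*C/3)) = 0 :=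
              Finset.sum_eq_zero fun k _ => by rw [hterm k]; simp
            rw [hSzero, Real.exp_zero, mul_one] at hKEY
            apply ENNReal.ofReal_le_ofReal
            refine le_trans hKEY (le_of_eq ?_)
            have heq : -t^2 / (2*V + 2*C*t/3) = -((3/(2*C))*t) := by
              rw [hVz]
              field_simp
              ring
            rw [heq]
        · have hVpos : 0 < V := lt_of_le_of_ne hV0 (Ne.symm hVz)
          have hden : 0 < V + C*t/3 :=
            add_pos_of_pos_of_nonneg hVpos (by positivity)
          set l := t/(V + C*t/3) with hldef
          have hl : 0 ≤ l := le_of_lt (div_pos htpos hden)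
          have hlC : l*C < 3 := by
            rw [hldef, div_mul_eq_mul_div, div_lt_iff₀ hden]
            nlinarith
          have hKEY := KEY l hl (fun k => Or.inr hlC)
          apply ENNReal.ofReal_le_ofReal
          refine le_trans hKEY (le_of_eq ?_)
          rw [← Real.exp_add]
          congr 1
          have hS : ∑ k : Fin N, l^2 * (p k * (1 - p k) *
              ((fun k => c k + γ k * (d k - c k)) k)^2) / (2*(1 - l*C/3))
              = V * (l^2 / (2*(1 - l*C/3))) := by
            rw [hVdef, Finset.sum_mul]
            apply Finset.sum_congr rfl
            intro k _
            ring
          rw [hS]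
          have hdenne : V + C*t/3 ≠ 0 := ne_of_gt hden
          have h1mlC : 1 - l*C/3 = V / (V + C*t/3) := by
            rw [hldef]
            field_simp
            ring
          rw [h1mlC, hldef]
          have hVne : V ≠ 0 := ne_of_gt hVpos
          have hdenne2 : 2*V + 2*C*t/3 ≠ 0 := by
            intro h
            nlinarith [mul_nonneg hC0 ht]
          field_simp
          ring
end

section
/- Bounded differences inequality for 0-1 variables. Let X=(X_1,...,X_N) be a family of independent random variables with X_k ∈ {0,1} and p_k = P(X_k = 1). Assume the function f: {0,1}^N → ℝ satisfies the Lipschitz condition (L) with coefficients (c_k)_{k∈[N]}. Let μ = E f(X) and C = max_{k∈[N]} c_k. Then for every t ≥ 0, P(f(X) ≥ μ + t) ≤ exp(−t² / (2 Σ_{k∈[N]} (1−p_k)p_k c_k² + 2Ct/3)). -/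
open Real

private lemma aux_nonneg (g g' : ℝ → ℝ) (hg : ∀ x, HasDerivAt g (g' x) x) (h0 : g 0 = 0)
    (hd : ∀ u, 0 ≤ u → 0 ≤ g' u) : ∀ u, 0 ≤ u → 0 ≤ g u := by
  intro u hu
  have hdiff : Differentiable ℝ g := fun x => (hg x).differentiableAt
  have hm : MonotoneOn g (Set.Ici (0:ℝ)) := by
    apply monotoneOn_of_deriv_nonneg (convex_Ici 0) hdiff.continuous.continuousOn
      (fun x _ => (hdiff x).differentiableWithinAt)
    intro x hx
    rw [(hg x).deriv]
    exact hd x (le_of_lt (by simpa using hx))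
  simpa [h0] using hm Set.self_mem_Ici (Set.mem_Ici.2 hu) hu

private lemma aux_exp_le_neg {u : ℝ} (hu : u ≤ 0) : Real.exp u ≤ 1 + u + u^2/2 := by
  have h1 : ∀ v, 0 ≤ v → (0:ℝ) ≤ -1 + v + Real.exp (-v) := by
    apply aux_nonneg _ (fun v => 1 - Real.exp (-v))
    · intro v
      have := ((Real.hasDerivAt_exp (-v)).comp v (hasDerivAt_neg v))
      refine ((hasDerivAt_id v).const_add (-1) |>.add this).congr_deriv ?_
      ring
    · simp
    · intro w hw
      have : Real.exp (-w) ≤ 1 := Real.exp_le_one_iff.2 (by linarith)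
      linarith
  have key : ∀ v, 0 ≤ v → 0 ≤ 1 - v + v^2/2 - Real.exp (-v) := by
    apply aux_nonneg _ (fun v => -1 + v + Real.exp (-v))
    · intro v
      have he := ((Real.hasDerivAt_exp (-v)).comp v (hasDerivAt_neg v))
      have h2 : HasDerivAt (fun v : ℝ => 1 - v + v^2/2) (-1 + v) v := by
        have := ((hasDerivAt_pow 2 v).div_const 2)
        refine (((hasDerivAt_id v).const_sub 1).add this).congr_deriv ?_
        ring
      refine (h2.sub he).congr_deriv ?_
      ring
    · simp
    · exact h1
  have h3 := key (-u) (by linarith)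
  simp only [neg_neg] at h3
  nlinarith

private lemma aux_H_nonneg : ∀ u, 0 ≤ u → 0 ≤ u^2/2 - (1 - u/3)*(Real.exp u - 1 - u) := by
  have h2 : ∀ u, 0 ≤ u → (0:ℝ) ≤ (1 + (u-1)*Real.exp u)/3 := by
    apply aux_nonneg _ (fun u => u * Real.exp u / 3)
    · intro u
      have he := Real.hasDerivAt_exp u
      have hm : HasDerivAt (fun u : ℝ => (u-1)*Real.exp u) (1 * Real.exp u + (u-1)*Real.exp u) u :=
        (((hasDerivAt_id u).sub_const 1).mul he)
      refine ((hm.const_add 1).div_const 3).congr_deriv ?_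
      ring
    · simp
    · intro u hu
      positivity
  have h1 : ∀ u, 0 ≤ u → (0:ℝ) ≤ (u + 2 + (u-2)*Real.exp u)/3 := by
    apply aux_nonneg _ (fun u => (1 + (u-1)*Real.exp u)/3)
    · intro u
      have he := Real.hasDerivAt_exp u
      have hm : HasDerivAt (fun u : ℝ => (u-2)*Real.exp u) (1 * Real.exp u + (u-2)*Real.exp u) u :=
        (((hasDerivAt_id u).sub_const 2).mul he)
      refine ((((hasDerivAt_id u).add_const 2).add hm).div_const 3).congr_deriv ?_
      ring
    · simp
    · exact h2
  apply aux_nonneg _ (fun u => (u + 2 + (u-2)*Real.exp u)/3)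
  · intro u
    have he := Real.hasDerivAt_exp u
    have ha : HasDerivAt (fun u : ℝ => u^2/2) u u := by
      have := (hasDerivAt_pow 2 u).div_const 2
      refine this.congr_deriv ?_; push_cast; ring
    have hb : HasDerivAt (fun u : ℝ => (1 - u/3)) (-(1/3)) u := by
      have := ((hasDerivAt_id u).div_const 3).const_sub 1
      simpa using this
    have hc : HasDerivAt (fun u : ℝ => Real.exp u - 1 - u) (Real.exp u - 1) u :=
      (he.sub_const 1).sub (hasDerivAt_id u)
    refine (ha.sub (hb.mul hc)).congr_deriv ?_
    ring
  · simp
  · exact h1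

private lemma aux_pt (l C y : ℝ) (hl : 0 ≤ l) (hC : 0 ≤ C) (h3 : l * C < 3) (hy : y ≤ C) :
    Real.exp (l*y) ≤ 1 + l*y + l^2*y^2 * (1/(2*(1 - l*C/3))) := by
  have hden : 0 < 1 - l*C/3 := by linarith
  have hden1 : 1 - l*C/3 ≤ 1 := by nlinarith
  rcases le_or_gt (l*y) 0 with h | h
  · have := aux_exp_le_neg h
    have h4 : (l*y)^2/2 ≤ (l*y)^2 * (1/(2*(1 - l*C/3))) := by
      have h5 : (1:ℝ)/2 ≤ 1/(2*(1 - l*C/3)) := by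
        rw [div_le_div_iff₀ (by norm_num) (by positivity)]
        nlinarith
      nlinarith [sq_nonneg (l*y)]
    nlinarith [this, h4]
  · have hu3 : l*y ≤ l*C := by nlinarith
    have hH := aux_H_nonneg (l*y) (le_of_lt h)
    have hden2 : 0 < 1 - l*y/3 := by linarith
    -- exp u - 1 - u ≤ u^2/(2(1-u/3)) ≤ u^2 * (1/(2 den))
    have step1 : Real.exp (l*y) - 1 - l*y ≤ (l*y)^2 / (2*(1 - l*y/3)) := by
      rw [le_div_iff₀ (by positivity)]
      nlinarith
    have step2 : (l*y)^2 / (2*(1 - l*y/3)) ≤ (l*y)^2 * (1/(2*(1 - l*C/3))) := by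
      rw [div_le_iff₀ (by positivity), mul_comm ((l*y)^2), mul_assoc]
      have : (1:ℝ) ≤ (1/(2*(1 - l*C/3))) * (2*(1 - l*y/3)) := by
        rw [div_mul_eq_mul_div, le_div_iff₀ (by positivity)]
        nlinarith
      nlinarith [sq_nonneg (l*y)]
    nlinarith [step1, step2]


private lemma aux_bernoulli (q a b cc C l D : ℝ) (hq0 : 0 ≤ q) (hq1 : q ≤ 1)
    (hab : |a - b| ≤ cc) (hcC : cc ≤ C) (hD : 0 ≤ D) (hl : 0 ≤ l)
    (hpt : ∀ y, y ≤ C → Real.exp (l*y) ≤ 1 + l*y + l^2*y^2*D) :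
    (1-q) * Real.exp (l * (a - ((1-q)*a + q*b))) + q * Real.exp (l * (b - ((1-q)*a + q*b)))
      ≤ Real.exp (l^2 * D * ((1-q) * q * cc^2)) := by
  have habs := abs_le.1 hab
  have h1 : a - ((1-q)*a + q*b) = q*(a-b) := by ring
  have h2 : b - ((1-q)*a + q*b) = (1-q)*(b-a) := by ring
  have e1 := hpt (q*(a-b)) (by nlinarith [habs.1, habs.2])
  have e2 := hpt ((1-q)*(b-a)) (by nlinarith [habs.1, habs.2])
  rw [h1, h2]
  have hsum : (1-q) * (1 + l*(q*(a-b)) + l^2*(q*(a-b))^2*D)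
      + q * (1 + l*((1-q)*(b-a)) + l^2*((1-q)*(b-a))^2*D)
      = 1 + l^2 * D * ((1-q)*q*(a-b)^2) := by ring
  have hcc : (a-b)^2 ≤ cc^2 := by nlinarith [habs.1, habs.2, abs_nonneg (a-b)]
  have hfin : 1 + l^2 * D * ((1-q)*q*(a-b)^2) ≤ Real.exp (l^2 * D * ((1-q)*q*cc^2)) := by
    have hexp := Real.add_one_le_exp (l^2 * D * ((1-q)*q*cc^2))
    have h0 : 0 ≤ l^2 * D * ((1-q)*q) :=
      mul_nonneg (mul_nonneg (sq_nonneg l) hD) (mul_nonneg (by linarith) hq0)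
    have hmono := mul_le_mul_of_nonneg_left hcc h0
    nlinarith [hmono, hexp]
  calc (1-q) * Real.exp (l * (q*(a-b))) + q * Real.exp (l * ((1-q)*(b-a)))
      ≤ (1-q) * (1 + l*(q*(a-b)) + l^2*(q*(a-b))^2*D)
        + q * (1 + l*((1-q)*(b-a)) + l^2*((1-q)*(b-a))^2*D) := by
        apply add_le_add
        · exact mul_le_mul_of_nonneg_left e1 (by linarith)
        · exact mul_le_mul_of_nonneg_left e2 hq0
    _ = 1 + l^2 * D * ((1-q)*q*(a-b)^2) := hsum
    _ ≤ Real.exp (l^2 * D * ((1-q)*q*cc^2)) := hfin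

private lemma aux_tensor (N : ℕ) (p c : Fin N → ℝ) (hp0 : ∀ k, 0 ≤ p k) (hp1 : ∀ k, p k ≤ 1)
    (f : (Fin N → Bool) → ℝ)
    (hL : ∀ (k : Fin N) (x x' : Fin N → Bool), (∀ j, j ≠ k → x j = x' j) → |f x - f x'| ≤ c k)
    (C l D : ℝ) (hcC : ∀ k, c k ≤ C) (hl : 0 ≤ l) (hD : 0 ≤ D)
    (hpt : ∀ y, y ≤ C → Real.exp (l*y) ≤ 1 + l*y + l^2*y^2*D) :
    ∑ x, (∏ k, (if x k then p k else 1 - p k)) *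
        Real.exp (l * (f x - ∑ x', (∏ k, (if x' k then p k else 1 - p k)) * f x'))
      ≤ Real.exp (l^2 * D * ∑ k, (1 - p k) * p k * c k ^ 2) := by
  induction N with
  | zero =>
    simp [Fintype.sum_unique]
  | succ N IH =>
    set q := p 0 with hq
    set p' : Fin N → ℝ := fun k => p k.succ with hp'
    set c' : Fin N → ℝ := fun k => c k.succ with hc'
    set W : (Fin (N+1) → Bool) → ℝ := fun x => ∏ k, (if x k then p k else 1 - p k) with hWdef
    set W' : (Fin N → Bool) → ℝ := fun z => ∏ k, (if z k then p' k else 1 - p' k) with hW'def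
    set fF : (Fin N → Bool) → ℝ := fun z => f (Fin.cons false z) with hfF
    set fT : (Fin N → Bool) → ℝ := fun z => f (Fin.cons true z) with hfT
    set h : (Fin N → Bool) → ℝ := fun z => (1-q) * fF z + q * fT z with hh
    -- sum reindexing
    have hsum : ∀ (F : (Fin (N+1) → Bool) → ℝ),
        ∑ x, F x = ∑ z : Fin N → Bool, (F (Fin.cons false z) + F (Fin.cons true z)) := by
      intro F
      rw [← (Fin.consEquiv (fun _ => Bool)).sum_comp F]
      rw [Fintype.sum_prod_type_right]
      apply Finset.sum_congr rfl
      intro z _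
      rw [Fintype.sum_bool]
      simp [Fin.consEquiv, add_comm]
    have hW : ∀ b z, W (Fin.cons b z) = (if b then q else 1 - q) * W' z := by
      intro b z
      rw [hWdef]
      simp only []
      rw [Fin.prod_univ_succ]
      simp [Fin.cons_succ, Fin.cons_zero, hW'def, hp', hq]
    have hW'0 : ∀ z, 0 ≤ W' z := by
      intro z
      apply Finset.prod_nonneg
      intro k _
      by_cases hz : z k <;> simp [hz, hp0, hp1, sub_nonneg, hp']
    -- the mean
    set μ : ℝ := ∑ x, W x * f x with hμdef
    have hμ : μ = ∑ z, W' z * h z := by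
      rw [hμdef, hsum (fun x => W x * f x)]
      apply Finset.sum_congr rfl
      intro z _
      rw [hW, hW]
      norm_num [hh]
      ring
    -- Lipschitz for h
    have hLh : ∀ (k : Fin N) (z z' : Fin N → Bool), (∀ j, j ≠ k → z j = z' j) →
        |h z - h z'| ≤ c' k := by
      intro k z z' hzz
      have hcons : ∀ b : Bool, ∀ j : Fin (N+1), j ≠ k.succ →
          (Fin.cons b z : Fin (N+1) → Bool) j = (Fin.cons b z' : Fin (N+1) → Bool) j := by
        intro b j
        refine Fin.cases ?_ ?_ j
        · intro _; simp
        · intro i hi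
          simp only [Fin.cons_succ]
          exact hzz i (fun he => hi (by rw [he]))
      have d1 := hL k.succ (Fin.cons false z) (Fin.cons false z') (hcons false)
      have d2 := hL k.succ (Fin.cons true z) (Fin.cons true z') (hcons true)
      have e1 := abs_le.1 d1
      have e2 := abs_le.1 d2
      have hq0 : 0 ≤ q := hp0 0
      have hq1 : q ≤ 1 := hp1 0
      rw [hh, hc']
      simp only [hfF, hfT]
      rw [abs_le]
      constructor
      · nlinarith [e1.1, e1.2, e2.1, e2.2]
      · nlinarith [e1.1, e1.2, e2.1, e2.2]
    -- Bernoulli bound per point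
    have hq0 : 0 ≤ q := hp0 0
    have hq1 : q ≤ 1 := hp1 0
    have hber : ∀ z, (1-q) * Real.exp (l * (fF z - h z)) + q * Real.exp (l * (fT z - h z))
        ≤ Real.exp (l^2 * D * ((1-q) * q * (c 0)^2)) := by
      intro z
      have hab : |fF z - fT z| ≤ c 0 := by
        apply hL 0 (Fin.cons false z) (Fin.cons true z)
        intro j
        refine Fin.cases ?_ ?_ j
        · intro h0; exact absurd rfl h0
        · intro i _; simp
      have := aux_bernoulli q (fF z) (fT z) (c 0) C l D hq0 hq1 hab (hcC 0) hD hl hpt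
      simpa [hh] using this
    -- main chain
    set B : ℝ := Real.exp (l^2 * D * ((1-q) * q * (c 0)^2)) with hB
    have key : ∀ z, (1-q) * W' z * Real.exp (l * (fF z - μ)) + q * W' z * Real.exp (l * (fT z - μ))
        ≤ B * (W' z * Real.exp (l * (h z - μ))) := by
      intro z
      have hsplit : ∀ v : ℝ, Real.exp (l * (v - μ))
          = Real.exp (l * (v - h z)) * Real.exp (l * (h z - μ)) := by
        intro v
        rw [← Real.exp_add]
        ring_nf
      rw [hsplit (fF z), hsplit (fT z)]
      have he : (0:ℝ) ≤ Real.exp (l * (h z - μ)) := (Real.exp_pos _).le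
      calc (1-q) * W' z * (Real.exp (l * (fF z - h z)) * Real.exp (l * (h z - μ)))
            + q * W' z * (Real.exp (l * (fT z - h z)) * Real.exp (l * (h z - μ)))
          = (W' z * ((1-q) * Real.exp (l * (fF z - h z)) + q * Real.exp (l * (fT z - h z))))
            * Real.exp (l * (h z - μ)) := by ring
        _ ≤ (W' z * B) * Real.exp (l * (h z - μ)) :=
            mul_le_mul_of_nonneg_right (mul_le_mul_of_nonneg_left (hber z) (hW'0 z)) he
        _ = B * (W' z * Real.exp (l * (h z - μ))) := by ring
    -- apply IH
    have hIH := IH p' c' (fun k => hp0 k.succ) (fun k => hp1 k.succ) h hLh (fun k => hcC k.succ)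
    rw [← hμ] at hIH
    calc ∑ x, W x * Real.exp (l * (f x - μ))
        = ∑ z, ((1-q) * W' z * Real.exp (l * (fF z - μ)) + q * W' z * Real.exp (l * (fT z - μ))) := by
          rw [hsum (fun x => W x * Real.exp (l * (f x - μ)))]
          apply Finset.sum_congr rfl
          intro z _
          rw [hW, hW]
          norm_num [hfF, hfT]
      _ ≤ ∑ z, B * (W' z * Real.exp (l * (h z - μ))) := Finset.sum_le_sum (fun z _ => key z)
      _ = B * ∑ z, W' z * Real.exp (l * (h z - μ)) := by rw [Finset.mul_sum]
      _ ≤ B * Real.exp (l^2 * D * ∑ k, (1 - p' k) * p' k * c' k ^ 2) := by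
          apply mul_le_mul_of_nonneg_left hIH (Real.exp_pos _).le
      _ = Real.exp (l^2 * D * ∑ k : Fin (N+1), (1 - p k) * p k * c k ^ 2) := by
          rw [hB, ← Real.exp_add, Fin.sum_univ_succ]
          congr 1
          simp only [hp', hc']
          ring


open MeasureTheory

/-- **Bounded differences inequality for 0-1 variables** (Corollary 1.4 of Warnke).
The coordinates are independent `Bool`-valued random variables (`true` := 1), modeled by
the product measure `Measure.pi P`, with `p k = P(X_k = 1)`. -/
theorem bounded_differences_bool {N : ℕ}
    (P : Fin N → Measure Bool) [∀ k, IsProbabilityMeasure (P k)]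
    (p : Fin N → ℝ) (hp : ∀ k, p k = (P k {true}).toReal)
    (f : (Fin N → Bool) → ℝ)
    (c : Fin N → ℝ)
    -- the Lipschitz condition (L)
    (hL : ∀ (k : Fin N) (x x' : Fin N → Bool), (∀ j, j ≠ k → x j = x' j) →
      |f x - f x'| ≤ c k)
    -- `C = max_k c_k`
    (C : ℝ) (hC : IsGreatest (Set.range c) C)
    (t : ℝ) (ht : 0 ≤ t) :
    Measure.pi P {x | f x ≥ (∫ y, f y ∂(Measure.pi P)) + t} ≤
      ENNReal.ofReal (Real.exp (-t ^ 2 /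
        (2 * ∑ k, (1 - p k) * p k * c k ^ 2 + 2 * C * t / 3))) := by
  classical
  obtain ⟨k0, hk0⟩ := hC.1
  have hc0 : ∀ k, 0 ≤ c k := by
    intro k
    have := hL k (fun _ => false) (fun _ => false) (fun _ _ => rfl)
    simpa using this
  have hC0 : 0 ≤ C := hk0 ▸ hc0 k0
  have hcC : ∀ k, c k ≤ C := fun k => hC.2 ⟨k, rfl⟩
  have hp0 : ∀ k, 0 ≤ p k := fun k => (hp k) ▸ ENNReal.toReal_nonneg
  have hp1 : ∀ k, p k ≤ 1 := by
    intro k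
    rw [hp k]
    have h1 : (P k {true}).toReal ≤ (1 : ENNReal).toReal :=
      ENNReal.toReal_mono (by simp) prob_le_one
    simpa using h1
  set μ : Measure (Fin N → Bool) := Measure.pi P with hμdef
  set W : (Fin N → Bool) → ℝ := fun x => ∏ k, (if x k then p k else 1 - p k) with hWdef
  have hwt : ∀ x : Fin N → Bool, (μ {x}).toReal = W x := by
    intro x
    rw [show ({x} : Set (Fin N → Bool)) = Set.univ.pi (fun k => {x k}) from
      (Set.univ_pi_singleton x).symm, hμdef, Measure.pi_pi, ENNReal.toReal_prod]
    apply Finset.prod_congr rfl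
    intro k _
    cases hx : x k
    · rw [show ({false} : Set Bool) = {true}ᶜ from by ext b; cases b <;> simp,
        measure_compl (by measurability) (measure_ne_top _ _), measure_univ,
        ENNReal.toReal_sub_of_le prob_le_one (by simp)]
      simp [hp k]
    · simp [hp k]
  have hW0 : ∀ x, 0 ≤ W x := by
    intro x
    apply Finset.prod_nonneg
    intro k _
    by_cases hx : x k <;> simp [hx, hp0, hp1, sub_nonneg]
  set m : ℝ := ∫ y, f y ∂μ with hmdef
  have hint : m = ∑ x, W x * f x := by
    rw [hmdef, integral_fintype (by exact Integrable.of_finite)]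
    apply Finset.sum_congr rfl
    intro x _
    rw [measureReal_def, hwt, smul_eq_mul]
  set V : ℝ := ∑ k, (1 - p k) * p k * c k ^ 2 with hVdef
  have hV0 : 0 ≤ V := by
    apply Finset.sum_nonneg
    intro k _
    have h1 := hp0 k
    have h2 := hp1 k
    have : 0 ≤ 1 - p k := by linarith
    exact mul_nonneg (mul_nonneg this h1) (sq_nonneg _)
  set d : ℝ := 2 * V + 2 * C * t / 3 with hddef
  -- Chernoff bound for any admissible l
  have main : ∀ l : ℝ, 0 ≤ l → l * C < 3 →
      μ {x | f x ≥ m + t} ≤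
        ENNReal.ofReal (Real.exp (-(l*t) + l^2 * (1/(2*(1 - l*C/3))) * V)) := by
    intro l hl h3
    set D : ℝ := 1/(2*(1 - l*C/3)) with hDdef
    have hden : 0 < 1 - l*C/3 := by linarith
    have hD0 : 0 ≤ D := by rw [hDdef]; positivity
    have hpt : ∀ y, y ≤ C → Real.exp (l*y) ≤ 1 + l*y + l^2*y^2*D :=
      fun y hy => aux_pt l C y hl hC0 h3 hy
    have htensor := aux_tensor N p c hp0 hp1 f hL C l D hcC hl hD0 hpt
    rw [← hint] at htensor
    set T : Finset (Fin N → Bool) := Finset.univ.filter (fun x => m + t ≤ f x) with hTdef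
    have hST : {x | f x ≥ m + t} = (↑T : Set (Fin N → Bool)) := by
      ext x; simp [hTdef, ge_iff_le]
    have hmeas : μ (↑T : Set (Fin N → Bool)) = ∑ x ∈ T, μ {x} := by
      have := measure_biUnion_finset (μ := μ) (s := T)
        (f := fun x => ({x} : Set (Fin N → Bool)))
        (fun x _ y _ hxy => by simp [Set.disjoint_singleton, hxy]) (fun x _ => measurableSet_eq)
      rw [← this]
      congr 1
      ext y; simp
    have htoReal : (μ (↑T : Set (Fin N → Bool))).toReal = ∑ x ∈ T, W x := by
      rw [hmeas, ENNReal.toReal_sum (fun x _ => measure_ne_top _ _)]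
      exact Finset.sum_congr rfl (fun x _ => hwt x)
    have hchernoff : ∑ x ∈ T, W x ≤ Real.exp (-(l*t)) * Real.exp (l^2 * D * V) := by
      calc ∑ x ∈ T, W x ≤ ∑ x ∈ T, W x * Real.exp (l * (f x - m - t)) := by
            apply Finset.sum_le_sum
            intro x hx
            have hfx : m + t ≤ f x := by
              rw [hTdef] at hx
              exact (Finset.mem_filter.1 hx).2
            have h1 : (1:ℝ) ≤ Real.exp (l * (f x - m - t)) := by
              rw [show (1:ℝ) = Real.exp 0 from (Real.exp_zero).symm]
              apply Real.exp_le_exp.2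
              nlinarith
            nlinarith [hW0 x]
        _ ≤ ∑ x, W x * Real.exp (l * (f x - m - t)) := by
            apply Finset.sum_le_sum_of_subset_of_nonneg (Finset.subset_univ T)
            intro x _ _
            exact mul_nonneg (hW0 x) (Real.exp_pos _).le
        _ = Real.exp (-(l*t)) * ∑ x, W x * Real.exp (l * (f x - m)) := by
            rw [Finset.mul_sum]
            apply Finset.sum_congr rfl
            intro x _
            rw [show l * (f x - m - t) = -(l*t) + l * (f x - m) from by ring, Real.exp_add]
            ring
        _ ≤ Real.exp (-(l*t)) * Real.exp (l^2 * D * V) :=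
            mul_le_mul_of_nonneg_left htensor (Real.exp_pos _).le
    rw [hST]
    calc μ (↑T : Set (Fin N → Bool))
        = ENNReal.ofReal ((μ (↑T : Set (Fin N → Bool))).toReal) :=
          (ENNReal.ofReal_toReal (measure_ne_top _ _)).symm
      _ ≤ ENNReal.ofReal (Real.exp (-(l*t) + l^2 * D * V)) := by
          apply ENNReal.ofReal_le_ofReal
          rw [Real.exp_add]
          rw [htoReal]
          exact hchernoff
  -- now choose l
  rcases eq_or_lt_of_le ht with ht0 | htpos
  · -- t = 0
    have : -t^2/d = 0 := by rw [← ht0]; simp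
    rw [this]
    simpa using prob_le_one
  · rcases eq_or_lt_of_le hV0 with hV0' | hVpos
    · -- V = 0
      have hdeq : d = 2 * C * t / 3 := by rw [hddef, ← hV0']; ring
      rcases eq_or_lt_of_le hC0 with hC0' | hCpos
      · -- C = 0, d = 0
        have : -t^2/d = 0 := by rw [hdeq, ← hC0']; simp
        rw [this]
        simpa using prob_le_one
      · have hl3 : (3/(2*C)) * C < 3 := by
          rw [div_mul_eq_mul_div, mul_comm]
          rw [div_lt_iff₀ (by positivity)]
          nlinarith
        have hb := main (3/(2*C)) (by positivity) hl3
        apply le_trans hb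
        apply ENNReal.ofReal_le_ofReal
        apply Real.exp_le_exp.2
        rw [← hV0', hdeq]
        have : -t^2/(2*C*t/3) = -(3/(2*C)*t) := by
          field_simp
        rw [this]
        simp
    · -- V > 0
      obtain ⟨s, hsdef⟩ : ∃ s : ℝ, s = V + C*t/3 := ⟨_, rfl⟩
      have hs : 0 < s := by
        have h1 : 0 ≤ C*t/3 := by positivity
        rw [hsdef]; linarith
      have hsne : s ≠ 0 := ne_of_gt hs
      have hVne : V ≠ 0 := ne_of_gt hVpos
      have hl0 : 0 ≤ t/s := div_nonneg ht hs.le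
      have hl3 : (t/s) * C < 3 := by
        rw [div_mul_eq_mul_div, div_lt_iff₀ hs, hsdef]
        nlinarith
      have hb := main (t/s) hl0 hl3
      apply le_trans hb
      apply ENNReal.ofReal_le_ofReal
      apply Real.exp_le_exp.2
      have hden : 1 - (t/s)*C/3 = V/s := by
        rw [hsdef]; field_simp; ring
      have hdd : d = 2*s := by rw [hddef, hsdef]; ring
      rw [hden, hdd]
      have hexp : -(t/s*t) + (t/s)^2 * (1/(2*(V/s))) * V = -t^2/(2*s) := by
        field_simp
        ring
      exact le_of_eq hexp
end

section
/- Bennett-type refinement of the bounded differences inequality for 0-1 variables. Let X=(X_1,...,X_N) be a family of independent random variables with X_k ∈ {0,1} and p_k = P(X_k = 1). Assume f: {0,1}^N → ℝ satisfies the Lipschitz condition (L) with coefficients (c_k)_{k∈[N]}. Let μ = E f(X), C = max_{k∈[N]} c_k, V = Σ_{k∈[N]} (1−p_k)p_k c_k², and φ(x) = (1+x)log(1+x) − x. Then for every t ≥ 0, P(f(X) ≥ μ + t) ≤ exp(−(V/C²)·φ(Ct/V)). -/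
open MeasureTheory

set_option synthInstance.maxHeartbeats 1000000
set_option maxHeartbeats 1000000

section BennettAux

open Real Nat

private lemma bennett_exp_eq_series (x : ℝ) :
    Real.exp x = 1 + x + ∑' n : ℕ, x ^ (n+2) / (n+2)! := by
  have hs : Summable (fun n : ℕ => x ^ n / n !) := Real.summable_pow_div_factorial x
  have h0 : Real.exp x = ∑' n : ℕ, x ^ n / n ! := by
    rw [Real.exp_eq_exp_ℝ, NormedSpace.exp_eq_tsum_div]
  rw [h0, ← hs.sum_add_tsum_nat_add 2]
  simp [Finset.sum_range_succ]

private lemma bennett_summable_series (x : ℝ) : Summable (fun n : ℕ => x ^ (n+2) / (n+2)!) :=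
  (Real.summable_pow_div_factorial x).comp_injective (add_left_injective 2)

private lemma bennett_exp_aux (u v : ℝ) (h : |u| ≤ v) :
    v ^ 2 * (Real.exp u - 1 - u) ≤ u ^ 2 * (Real.exp v - 1 - v) := by
  have hv : 0 ≤ v := le_trans (abs_nonneg u) h
  have hTu : Real.exp u - 1 - u = ∑' n : ℕ, u ^ (n+2) / (n+2)! := by
    rw [bennett_exp_eq_series u]; ring
  have hTv : Real.exp v - 1 - v = ∑' n : ℕ, v ^ (n+2) / (n+2)! := by
    rw [bennett_exp_eq_series v]; ring
  have hsu := bennett_summable_series u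
  have hsv := bennett_summable_series v
  have h1 : ∀ n : ℕ, v^2 * (u^(n+2)/(n+2)!) ≤ u^2 * (v^(n+2)/(n+2)!) := by
    intro n
    have habs : u ^ (n+2) ≤ |u| ^ (n+2) := by rw [← abs_pow]; exact le_abs_self _
    have h2 : |u| ^ (n+2) = u^2 * |u|^n := by
      rw [pow_add, sq_abs]; ring
    have h3 : |u| ^ n ≤ v ^ n := pow_le_pow_left₀ (abs_nonneg u) h n
    have key : v^2*u^(n+2) ≤ u^2*v^(n+2) := by
      calc v^2*u^(n+2) ≤ v^2*|u|^(n+2) :=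
            mul_le_mul_of_nonneg_left habs (sq_nonneg v)
        _ = v^2*(u^2*|u|^n) := by rw [h2]
        _ ≤ v^2*(u^2*v^n) := by
            apply mul_le_mul_of_nonneg_left _ (sq_nonneg v)
            exact mul_le_mul_of_nonneg_left h3 (sq_nonneg u)
        _ = u^2*v^(n+2) := by rw [pow_add]; ring
    have hf : (0:ℝ) ≤ (((n+2)! : ℕ) : ℝ)⁻¹ := by positivity
    calc v^2 * (u^(n+2)/(n+2)!) = (v^2*u^(n+2)) * (((n+2)! : ℕ) : ℝ)⁻¹ := by ring
      _ ≤ (u^2*v^(n+2)) * (((n+2)! : ℕ) : ℝ)⁻¹ := mul_le_mul_of_nonneg_right key hf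
      _ = u^2 * (v^(n+2)/(n+2)!) := by ring
  rw [hTu, hTv, ← tsum_mul_left, ← tsum_mul_left]
  exact Summable.tsum_le_tsum h1 (hsu.mul_left _) (hsv.mul_left _)

private lemma bennett_exp_pointwise (y C l : ℝ) (hy : |y| ≤ C) (hl : 0 ≤ l) (hC : 0 < C) :
    Real.exp (l*y) ≤ 1 + l*y + y^2 * (Real.exp (l*C) - 1 - l*C)/C^2 := by
  rcases eq_or_lt_of_le hl with rfl|hl
  · simp
  have h := bennett_exp_aux (l*y) (l*C)
    (by rw [abs_mul, abs_of_pos hl]; exact mul_le_mul_of_nonneg_left hy hl.le)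
  have hl2 : (0:ℝ) < l^2 := by positivity
  have h' : C^2*(Real.exp (l*y)-1-l*y) ≤ y^2*(Real.exp (l*C)-1-l*C) := by
    refine (mul_le_mul_iff_right₀ hl2).mp ?_
    rw [show l^2*(C^2*(Real.exp (l*y)-1-l*y)) = (l*C)^2*(Real.exp (l*y)-1-l*y) by ring,
      show l^2*(y^2*(Real.exp (l*C)-1-l*C)) = (l*y)^2*(Real.exp (l*C)-1-l*C) by ring]
    exact h
  have key : Real.exp (l*y) - 1 - l*y ≤ (y^2 * (Real.exp (l*C) - 1 - l*C))/C^2 := by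
    rw [le_div_iff₀ (by positivity : (0:ℝ) < C^2)]
    nlinarith [h']
  calc Real.exp (l*y) = (Real.exp (l*y) - 1 - l*y) + 1 + l*y := by ring
    _ ≤ (y^2 * (Real.exp (l*C) - 1 - l*C))/C^2 + 1 + l*y := by linarith
    _ = 1 + l*y + y^2 * (Real.exp (l*C) - 1 - l*C)/C^2 := by ring

private lemma bennett_two_point (p q a b C l : ℝ) (hp : 0 ≤ p) (hq : 0 ≤ q) (hpq : p + q = 1)
    (hab : |a - b| ≤ C) (hl : 0 ≤ l) :
    p * Real.exp (l*a) + q * Real.exp (l*b) ≤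
      Real.exp (l*(p*a+q*b) + p*q*(a-b)^2 * (Real.exp (l*C) - 1 - l*C)/C^2) := by
  have hC0 : 0 ≤ C := le_trans (abs_nonneg _) hab
  rcases eq_or_lt_of_le hC0 with rfl|hC
  · have hab0 : a = b := by
      have := abs_nonpos_iff.mp hab; linarith [sub_eq_zero.mp this]
    subst hab0
    simp only [sub_self, ne_eq, OfNat.ofNat_ne_zero, not_false_eq_true, zero_pow, mul_zero,
      zero_mul, zero_div, add_zero, mul_zero]
    rw [show l*(p*a+q*a) = l*a by linear_combination (l*a)*hpq]
    rw [show p * Real.exp (l*a) + q * Real.exp (l*a) = (p+q) * Real.exp (l*a) by ring, hpq,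
      one_mul]
  · have h1 := bennett_exp_pointwise (q*(a-b)) C l (by
      rw [abs_mul, abs_of_nonneg hq]
      calc q*|a-b| ≤ 1*|a-b| := mul_le_mul_of_nonneg_right (by linarith) (abs_nonneg _)
        _ ≤ C := by rw [one_mul]; exact hab) hl hC
    have h2 := bennett_exp_pointwise (-(p*(a-b))) C l (by
      rw [abs_neg, abs_mul, abs_of_nonneg hp]
      calc p*|a-b| ≤ 1*|a-b| := mul_le_mul_of_nonneg_right (by linarith) (abs_nonneg _)
        _ ≤ C := by rw [one_mul]; exact hab) hl hC
    have ea : l*a = l*(p*a+q*b) + l*(q*(a-b)) := by linear_combination (-(l*a))*hpq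
    have eb : l*b = l*(p*a+q*b) + l*(-(p*(a-b))) := by linear_combination (-(l*b))*hpq
    calc p * Real.exp (l*a) + q * Real.exp (l*b)
        = Real.exp (l*(p*a+q*b)) *
          (p * Real.exp (l*(q*(a-b))) + q * Real.exp (l*(-(p*(a-b))))) := by
          rw [ea, eb, Real.exp_add, Real.exp_add]; ring
      _ ≤ Real.exp (l*(p*a+q*b)) *
          (1 + p*q*(a-b)^2 * (Real.exp (l*C) - 1 - l*C)/C^2) := by
          apply mul_le_mul_of_nonneg_left _ (Real.exp_pos _).le
          calc p * Real.exp (l*(q*(a-b))) + q * Real.exp (l*(-(p*(a-b))))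
              ≤ p*(1 + l*(q*(a-b)) + (q*(a-b))^2 * (Real.exp (l*C) - 1 - l*C)/C^2)
                + q*(1 + l*(-(p*(a-b))) + (-(p*(a-b)))^2 * (Real.exp (l*C) - 1 - l*C)/C^2) :=
                add_le_add (mul_le_mul_of_nonneg_left h1 hp) (mul_le_mul_of_nonneg_left h2 hq)
            _ = 1 + p*q*(a-b)^2 * (Real.exp (l*C) - 1 - l*C)/C^2 := by
                linear_combination (1 + p*q*(a-b)^2*(Real.exp (l*C)-1-l*C)/C^2)*hpq
      _ ≤ Real.exp (l*(p*a+q*b)) * Real.exp (p*q*(a-b)^2 * (Real.exp (l*C) - 1 - l*C)/C^2) :=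
          mul_le_mul_of_nonneg_left (Real.add_one_le_exp _ |>.trans_eq' (by ring))
            (Real.exp_pos _).le
      _ = Real.exp (l*(p*a+q*b) + p*q*(a-b)^2 * (Real.exp (l*C) - 1 - l*C)/C^2) :=
          (Real.exp_add _ _).symm

private lemma bennett_sum_split (N : ℕ) (F : (Fin (N+1) → Bool) → ℝ) :
    ∑ x, F x = ∑ y : Fin N → Bool, (F (Fin.cons true y) + F (Fin.cons false y)) := by
  rw [← Equiv.sum_comp (Fin.consEquiv (fun _ => Bool)) F, Fintype.sum_prod_type]
  rw [Fintype.sum_bool, ← Finset.sum_add_distrib]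
  rfl

private lemma bennett_mgf_tensor (N : ℕ) : ∀ (w : Fin N → Bool → ℝ), (∀ k b, 0 ≤ w k b) →
    (∀ k, w k true + w k false = 1) → ∀ (f : (Fin N → Bool) → ℝ) (c : Fin N → ℝ),
    (∀ (k : Fin N) (x x' : Fin N → Bool), (∀ j, j ≠ k → x j = x' j) → |f x - f x'| ≤ c k) →
    ∀ (C l : ℝ), (∀ k, c k ≤ C) → 0 < C → 0 ≤ l →
    ∑ x, (∏ k, w k (x k)) * Real.exp (l * f x) ≤
      Real.exp (l * (∑ x, (∏ k, w k (x k)) * f x)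
        + (∑ k, w k true * w k false * c k ^ 2) * (Real.exp (l*C) - 1 - l*C)/C^2) := by
  induction N with
  | zero =>
    intro w hw0 hw1 f c hL C l hc hC hl
    simp
  | succ N IH =>
    intro w hw0 hw1 f c hL C l hc hC hl
    have hE0 : 0 ≤ Real.exp (l*C) - 1 - l*C := by
      have := Real.add_one_le_exp (l*C); linarith
    set p := w 0 true with hp
    set q := w 0 false with hq
    have hp0 : 0 ≤ p := hw0 0 true
    have hq0 : 0 ≤ q := hw0 0 false
    have hpq : p + q = 1 := hw1 0
    set w' : Fin N → Bool → ℝ := fun k => w k.succ with hw'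
    set g : (Fin N → Bool) → ℝ :=
      fun y => p * f (Fin.cons true y) + q * f (Fin.cons false y) with hg
    set c' : Fin N → ℝ := fun k => c k.succ with hc'
    -- product splits
    have hprod : ∀ (b : Bool) (y : Fin N → Bool),
        (∏ k, w k ((Fin.cons b y : Fin (N+1) → Bool) k)) = w 0 b * ∏ k, w' k (y k) := by
      intro b y
      rw [Fin.prod_univ_succ]
      simp [hw']
    have hW0 : ∀ y : Fin N → Bool, 0 ≤ ∏ k, w' k (y k) :=
      fun y => Finset.prod_nonneg fun k _ => hw0 _ _
    -- Lipschitz for g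
    have hLg : ∀ (k : Fin N) (y y' : Fin N → Bool), (∀ j, j ≠ k → y j = y' j) →
        |g y - g y'| ≤ c' k := by
      intro k y y' hyy
      have hcons : ∀ b : Bool, ∀ j, j ≠ k.succ →
          (Fin.cons b y : Fin (N+1) → Bool) j = (Fin.cons b y' : Fin (N+1) → Bool) j := by
        intro b j
        refine Fin.cases ?_ ?_ j
        · intro _; simp
        · intro i hik
          simp only [Fin.cons_succ]
          exact hyy i (fun h => hik (congrArg Fin.succ h))
      have h1 := hL k.succ _ _ (hcons true)
      have h2 := hL k.succ _ _ (hcons false)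
      have hgd : g y - g y' = p * (f (Fin.cons true y) - f (Fin.cons true y'))
          + q * (f (Fin.cons false y) - f (Fin.cons false y')) := by
        simp only [hg]; ring
      rw [hgd]
      calc |p * (f (Fin.cons true y) - f (Fin.cons true y'))
            + q * (f (Fin.cons false y) - f (Fin.cons false y'))|
          ≤ |p * (f (Fin.cons true y) - f (Fin.cons true y'))|
            + |q * (f (Fin.cons false y) - f (Fin.cons false y'))| := abs_add_le _ _
        _ = p * |f (Fin.cons true y) - f (Fin.cons true y')|
            + q * |f (Fin.cons false y) - f (Fin.cons false y')| := by
            rw [abs_mul, abs_mul, abs_of_nonneg hp0, abs_of_nonneg hq0]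
        _ ≤ p * c k.succ + q * c k.succ :=
            add_le_add (mul_le_mul_of_nonneg_left h1 hp0) (mul_le_mul_of_nonneg_left h2 hq0)
        _ = c' k := by simp only [hc']; linear_combination (c k.succ) * hpq
    -- mean identity
    have hmean : ∑ y, (∏ k, w' k (y k)) * g y = ∑ x, (∏ k, w k (x k)) * f x := by
      rw [bennett_sum_split N (fun x => (∏ k, w k (x k)) * f x)]
      refine Finset.sum_congr rfl fun y _ => ?_
      rw [hprod true y, hprod false y]
      simp only [hg]
      ring
    have hdiff : ∀ y : Fin N → Bool, ∀ j, j ≠ (0 : Fin (N+1)) →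
        (Fin.cons true y : Fin (N+1) → Bool) j = (Fin.cons false y : Fin (N+1) → Bool) j := by
      intro y j
      refine Fin.cases ?_ ?_ j
      · intro h; exact absurd rfl h
      · intro i _; simp
    calc ∑ x, (∏ k, w k (x k)) * Real.exp (l * f x)
        = ∑ y : Fin N → Bool, (∏ k, w' k (y k)) *
            (p * Real.exp (l * f (Fin.cons true y)) + q * Real.exp (l * f (Fin.cons false y))) := by
          rw [bennett_sum_split N (fun x => (∏ k, w k (x k)) * Real.exp (l * f x))]
          refine Finset.sum_congr rfl fun y _ => ?_
          rw [hprod true y, hprod false y]; ring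
      _ ≤ ∑ y : Fin N → Bool, (∏ k, w' k (y k)) *
            (Real.exp (p*q*(c 0)^2 * (Real.exp (l*C) - 1 - l*C)/C^2) * Real.exp (l * g y)) := by
          refine Finset.sum_le_sum fun y _ => ?_
          refine mul_le_mul_of_nonneg_left ?_ (hW0 y)
          have habd : |f (Fin.cons true y) - f (Fin.cons false y)| ≤ c 0 := hL 0 _ _ (hdiff y)
          have htp := bennett_two_point p q (f (Fin.cons true y)) (f (Fin.cons false y)) C l
            hp0 hq0 hpq (le_trans habd (hc 0)) hl
          refine le_trans htp ?_
          rw [← Real.exp_add]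
          apply Real.exp_le_exp.mpr
          have hd2 : (f (Fin.cons true y) - f (Fin.cons false y))^2 ≤ (c 0)^2 := by
            rw [← sq_abs]
            exact pow_le_pow_left₀ (abs_nonneg _) habd 2
          have hmono : p*q*(f (Fin.cons true y) - f (Fin.cons false y))^2
                * (Real.exp (l*C) - 1 - l*C)/C^2
              ≤ p*q*(c 0)^2 * (Real.exp (l*C) - 1 - l*C)/C^2 := by
            apply div_le_div_of_nonneg_right ?_ (by positivity)
            exact mul_le_mul_of_nonneg_right
              (mul_le_mul_of_nonneg_left hd2 (mul_nonneg hp0 hq0)) hE0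
          have hgy : l * (p * f (Fin.cons true y) + q * f (Fin.cons false y)) = l * g y := rfl
          linarith [hmono]
      _ = Real.exp (p*q*(c 0)^2 * (Real.exp (l*C) - 1 - l*C)/C^2) *
            ∑ y : Fin N → Bool, (∏ k, w' k (y k)) * Real.exp (l * g y) := by
          rw [Finset.mul_sum]
          exact Finset.sum_congr rfl fun y _ => by ring
      _ ≤ Real.exp (p*q*(c 0)^2 * (Real.exp (l*C) - 1 - l*C)/C^2) *
            Real.exp (l * (∑ y : Fin N → Bool, (∏ k, w' k (y k)) * g y)
              + (∑ k, w' k true * w' k false * c' k ^ 2) * (Real.exp (l*C) - 1 - l*C)/C^2) := by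
          refine mul_le_mul_of_nonneg_left ?_ (Real.exp_pos _).le
          exact IH w' (fun k b => hw0 _ _) (fun k => hw1 _) g c' hLg C l (fun k => hc _) hC hl
      _ = Real.exp (l * (∑ x, (∏ k, w k (x k)) * f x)
            + (∑ k, w k true * w k false * c k ^ 2) * (Real.exp (l*C) - 1 - l*C)/C^2) := by
          rw [← Real.exp_add]
          congr 1
          rw [hmean, Fin.sum_univ_succ]
          simp only [hw', hc']
          ring

end BennettAux

/-- **Bennett-type refinement of the bounded differences inequality for 0-1 variables**
(Remark 1.5 of Warnke, applied to Corollary 1.4).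
The coordinates are independent `Bool`-valued random variables (`true` := 1), modeled by
the product measure `Measure.pi P`, with `p k = P(X_k = 1)`;
`φ(x) = (1+x) log (1+x) - x`. -/
theorem bennett_bounded_differences_bool {N : ℕ}
    (P : Fin N → Measure Bool) [∀ k, IsProbabilityMeasure (P k)]
    (p : Fin N → ℝ) (hp : ∀ k, p k = (P k {true}).toReal)
    (f : (Fin N → Bool) → ℝ)
    (c : Fin N → ℝ)
    -- the Lipschitz condition (L)
    (hL : ∀ (k : Fin N) (x x' : Fin N → Bool), (∀ j, j ≠ k → x j = x' j) →
      |f x - f x'| ≤ c k)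
    -- `C = max_k c_k` and `V = ∑_k (1-p_k) p_k c_k²`
    (C : ℝ) (hC : IsGreatest (Set.range c) C)
    (V : ℝ) (hV : V = ∑ k, (1 - p k) * p k * c k ^ 2)
    (t : ℝ) (ht : 0 ≤ t) :
    Measure.pi P {x | f x ≥ (∫ y, f y ∂(Measure.pi P)) + t} ≤
      ENNReal.ofReal (Real.exp (-(V / C ^ 2) *
        ((1 + C * t / V) * Real.log (1 + C * t / V) - C * t / V))) := by
  haveI : IsProbabilityMeasure (Measure.pi P) := inferInstance
  -- weights
  set w : Fin N → Bool → ℝ := fun k b => (P k {b}).toReal with hw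
  have hw0 : ∀ k b, 0 ≤ w k b := fun k b => ENNReal.toReal_nonneg
  have hw1 : ∀ k, w k true + w k false = 1 := by
    intro k
    have hcm : ({true} : Set Bool)ᶜ = {false} := by ext b; cases b <;> simp
    have h1 : P k {true} + P k {false} = 1 := by
      rw [← hcm, measure_add_measure_compl (measurableSet_singleton true), measure_univ]
    simp only [hw]
    rw [← ENNReal.toReal_add (measure_ne_top _ _) (measure_ne_top _ _), h1, ENNReal.toReal_one]
  -- expressing p
  have hpw : ∀ k, p k = w k true := fun k => hp k
  have hp01 : ∀ k, 0 ≤ p k ∧ p k ≤ 1 := by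
    intro k
    constructor
    · rw [hpw k]; exact hw0 k true
    · rw [hpw k]; have := hw1 k; have := hw0 k false; linarith
  -- nonnegativity of c
  have hc0 : ∀ k, 0 ≤ c k := by
    intro k
    have := hL k (fun _ => true) (fun _ => true) (fun j _ => rfl)
    simpa using this
  have hC0 : 0 ≤ C := by
    obtain ⟨k, hk⟩ := hC.1
    rw [← hk]; exact hc0 k
  have hVnn : 0 ≤ V := by
    rw [hV]
    refine Finset.sum_nonneg fun k _ => ?_
    obtain ⟨h1, h2⟩ := hp01 k
    exact mul_nonneg (mul_nonneg (by linarith) h1) (sq_nonneg _)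
  -- trivial bound when the exponent vanishes
  have htriv : C * t / V = 0 →
      Measure.pi P {x | f x ≥ (∫ y, f y ∂(Measure.pi P)) + t} ≤
      ENNReal.ofReal (Real.exp (-(V / C ^ 2) *
        ((1 + C * t / V) * Real.log (1 + C * t / V) - C * t / V))) := by
    intro h0
    rw [h0]
    simp only [add_zero, Real.log_one, mul_zero, sub_zero, mul_zero, zero_sub, mul_one]
    rw [Real.exp_zero, ENNReal.ofReal_one]
    exact prob_le_one
  by_cases hVz : V = 0
  · exact htriv (by rw [hVz, div_zero])
  by_cases htz : t = 0
  · exact htriv (by rw [htz, mul_zero, zero_div])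
  by_cases hCz : C = 0
  · exact htriv (by rw [hCz, zero_mul, zero_div])
  -- main case
  have hCpos : 0 < C := lt_of_le_of_ne hC0 (Ne.symm hCz)
  have hVpos : 0 < V := lt_of_le_of_ne hVnn (Ne.symm hVz)
  have htpos : 0 < t := lt_of_le_of_ne ht (Ne.symm htz)
  have hs : 0 < C * t / V := by positivity
  have h1s : (0:ℝ) < 1 + C * t / V := by linarith
  set l := Real.log (1 + C * t / V) / C with hl_def
  have hlnn : 0 ≤ l := div_nonneg (Real.log_nonneg (by linarith)) hC0
  have hlC : l * C = Real.log (1 + C * t / V) := by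
    rw [hl_def]; field_simp
  have hexplC : Real.exp (l * C) = 1 + C * t / V := by rw [hlC, Real.exp_log h1s]
  have hint : Integrable (fun ω => Real.exp (l * f ω)) (Measure.pi P) := Integrable.of_finite
  have key := ProbabilityTheory.measure_ge_le_exp_mul_mgf (X := f) (μ := Measure.pi P)
    ((∫ y, f y ∂(Measure.pi P)) + t) hlnn hint
  have hsing : ∀ x : Fin N → Bool, (Measure.pi P {x}).toReal = ∏ k, w k (x k) := by
    intro x; rw [← Set.univ_pi_singleton, Measure.pi_pi, ENNReal.toReal_prod]
  have hmgf : ProbabilityTheory.mgf f (Measure.pi P) l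
      = ∑ x, (∏ k, w k (x k)) * Real.exp (l * f x) := by
    rw [ProbabilityTheory.mgf, integral_fintype _]
    refine Finset.sum_congr rfl fun x _ => ?_
    rw [measureReal_def, hsing x, smul_eq_mul]
    exact Integrable.of_finite
  have hmu : (∫ y, f y ∂(Measure.pi P)) = ∑ x, (∏ k, w k (x k)) * f x := by
    rw [integral_fintype _]
    refine Finset.sum_congr rfl fun x _ => ?_
    rw [measureReal_def, hsing x, smul_eq_mul]
    exact Integrable.of_finite
  have hVw : V = ∑ k, w k true * w k false * c k ^ 2 := by
    rw [hV]
    refine Finset.sum_congr rfl fun k _ => ?_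
    have h := hw1 k
    rw [hpw k]
    linear_combination (-(w k true * c k ^ 2)) * h
  have htensor := bennett_mgf_tensor N w hw0 hw1 f c hL C l
    (fun k => hC.2 ⟨k, rfl⟩) hCpos hlnn
  have hreal : (Measure.pi P {x | (∫ y, f y ∂(Measure.pi P)) + t ≤ f x}).toReal ≤
      Real.exp (-(V / C ^ 2) *
        ((1 + C * t / V) * Real.log (1 + C * t / V) - C * t / V)) := by
    refine le_trans key ?_
    calc Real.exp (-l * ((∫ y, f y ∂(Measure.pi P)) + t)) *
          ProbabilityTheory.mgf f (Measure.pi P) l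
        ≤ Real.exp (-l * ((∫ y, f y ∂(Measure.pi P)) + t)) *
          Real.exp (l * (∫ y, f y ∂(Measure.pi P))
            + V * (Real.exp (l * C) - 1 - l * C)/C^2) := by
          refine mul_le_mul_of_nonneg_left ?_ (Real.exp_pos _).le
          rw [hmgf, hmu, hVw]
          exact htensor
      _ = Real.exp (-(l * t) + V * (Real.exp (l * C) - 1 - l * C)/C^2) := by
          rw [← Real.exp_add]
          congr 1
          ring
      _ = Real.exp (-(V / C ^ 2) *
            ((1 + C * t / V) * Real.log (1 + C * t / V) - C * t / V)) := by
          congr 1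
          rw [hexplC, hlC, hl_def]
          field_simp
          ring
  have hset : {x : Fin N → Bool | f x ≥ (∫ y, f y ∂(Measure.pi P)) + t}
      = {x : Fin N → Bool | (∫ y, f y ∂(Measure.pi P)) + t ≤ f x} := rfl
  rw [hset, ← ENNReal.ofReal_toReal (measure_ne_top (Measure.pi P)
    {x : Fin N → Bool | (∫ y, f y ∂(Measure.pi P)) + t ≤ f x})]
  exact ENNReal.ofReal_le_ofReal hreal
end

section
/- Truncation inequality in the product case. Let X=(X_1,...,X_N) be a family of independent random variables with X_k taking values in Λ_k, let Γ_k ⊆ Λ_k with P(X ∈ ∏_{j∈[N]} Γ_j) > 0, and assume f: ∏_{j∈[N]} Λ_j → ℝ satisfies |f(x) − f(x̃)| ≤ c_k whenever x, x̃ ∈ ∏_{j∈[N]} Γ_j differ only in the k-th coordinate, and |f(x) − f(x̃)| ≤ s for all x, x̃ in the full product space. Then, setting μ = E f(X), Γ = ∏_{j∈[N]} Γ_j and Δ = s·P(X ∉ Γ), for every t ≥ 0 one has P(f(X) ≥ μ + t + Δ and X ∈ Γ) ≤ exp(−2t² / Σ_{k∈[N]} c_k²). -/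
open MeasureTheory Real

universe u

lemma tpc_scalar (p : ℝ) (hp0 : 0 ≤ p) (hp1 : p ≤ 1) (u : ℝ) :
    (1 - p) * Real.exp (-p * u) + p * Real.exp ((1 - p) * u) ≤ Real.exp (u ^ 2 / 8) := by
  set A : ℝ → ℝ := fun v => (1 - p) * Real.exp (-p * v) with hA_def
  set B : ℝ → ℝ := fun v => p * Real.exp ((1 - p) * v) with hB_def
  set F : ℝ → ℝ := fun v => A v + B v with hF_def
  set Fd : ℝ → ℝ := fun v => (1 - p) * (-p) * Real.exp (-p * v)
      + p * (1 - p) * Real.exp ((1 - p) * v) with hFd_def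
  set Fdd : ℝ → ℝ := fun v => (1 - p) * (-p) * (-p) * Real.exp (-p * v)
      + p * (1 - p) * (1 - p) * Real.exp ((1 - p) * v) with hFdd_def
  have hAnn : ∀ v, 0 ≤ A v := fun v => mul_nonneg (by linarith) (Real.exp_nonneg _)
  have hBnn : ∀ v, 0 ≤ B v := fun v => mul_nonneg hp0 (Real.exp_nonneg _)
  have hFpos : ∀ v, 0 < F v := by
    intro v
    rcases lt_or_eq_of_le hp1 with h | h
    · have : 0 < A v := mul_pos (by linarith) (Real.exp_pos _)
      have := hBnn v; simp only [hF_def]; linarith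
    · have hb : 0 < B v := by simp only [hB_def, h]; positivity
      have := hAnn v; simp only [hF_def]; linarith
  have hF' : ∀ v, HasDerivAt F (Fd v) v := by
    intro v
    have h1 : HasDerivAt (fun w : ℝ => -p * w) (-p) v := by
      simpa using (hasDerivAt_id v).const_mul (-p)
    have h2 : HasDerivAt (fun w : ℝ => (1 - p) * w) (1 - p) v := by
      simpa using (hasDerivAt_id v).const_mul (1 - p)
    have h1' := (h1.exp.const_mul (1 - p))
    have h2' := (h2.exp.const_mul p)
    have := h1'.add h2'
    refine this.congr_deriv ?_
    simp [hFd_def]; ring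
  have hFd' : ∀ v, HasDerivAt Fd (Fdd v) v := by
    intro v
    have h1 : HasDerivAt (fun w : ℝ => -p * w) (-p) v := by
      simpa using (hasDerivAt_id v).const_mul (-p)
    have h2 : HasDerivAt (fun w : ℝ => (1 - p) * w) (1 - p) v := by
      simpa using (hasDerivAt_id v).const_mul (1 - p)
    have h1' := (h1.exp.const_mul ((1 - p) * (-p)))
    have h2' := (h2.exp.const_mul (p * (1 - p)))
    have := h1'.add h2'
    refine this.congr_deriv ?_
    simp [hFdd_def]; ring
  have hkey : ∀ v, Fdd v * F v - Fd v ^ 2 = A v * B v := by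
    intro v
    simp only [hFdd_def, hFd_def, hF_def, hA_def, hB_def]
    ring
  set φ : ℝ → ℝ := fun v => v ^ 2 / 8 - Real.log (F v) with hφ_def
  set φd : ℝ → ℝ := fun v => v / 4 - Fd v / F v with hφd_def
  have hφ' : ∀ v, HasDerivAt φ (φd v) v := by
    intro v
    have h1 : HasDerivAt (fun w : ℝ => w ^ 2 / 8) (2 * v ^ 1 / 8) v :=
      (hasDerivAt_pow 2 v).div_const 8
    have h2 : HasDerivAt (fun w : ℝ => Real.log (F w)) (Fd v / F v) v :=
      (hF' v).log (ne_of_gt (hFpos v))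
    have := h1.sub h2
    refine this.congr_deriv ?_
    simp [hφd_def]; ring
  have hφd' : ∀ v, HasDerivAt φd (1 / 4 - (Fdd v * F v - Fd v ^ 2) / F v ^ 2) v := by
    intro v
    have h1 : HasDerivAt (fun w : ℝ => w / 4) (1 / 4) v := by
      simpa using (hasDerivAt_id v).div_const 4
    have h2 : HasDerivAt (fun w : ℝ => Fd w / F w)
        ((Fdd v * F v - Fd v * Fd v) / F v ^ 2) v :=
      (hFd' v).div (hF' v) (ne_of_gt (hFpos v))
    have := h1.sub h2
    refine this.congr_deriv ?_
    ring
  have hφdd_nonneg : ∀ v, 0 ≤ 1 / 4 - (Fdd v * F v - Fd v ^ 2) / F v ^ 2 := by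
    intro v
    rw [hkey v]
    have h4 : 4 * (A v * B v) ≤ F v ^ 2 := by
      have := sq_nonneg (A v - B v)
      simp only [hF_def]; nlinarith
    have hF2 : 0 < F v ^ 2 := pow_pos (hFpos v) 2
    rw [sub_nonneg, div_le_iff₀ hF2]
    have hFe : F v = A v + B v := rfl
    nlinarith [sq_nonneg (A v - B v), hAnn v, hBnn v]
  have hφd_mono : Monotone φd := by
    apply monotone_of_deriv_nonneg
    · exact fun v => (hφd' v).differentiableAt
    · intro v
      rw [(hφd' v).deriv]
      exact hφdd_nonneg v
  have hφd0 : φd 0 = 0 := by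
    have hF0 : F 0 = 1 := by simp [hF_def, hA_def, hB_def]
    have hFd0 : Fd 0 = 0 := by simp [hFd_def]; ring
    simp [hφd_def, hFd0, hF0]
  have hφ0 : φ 0 = 0 := by
    have hF0 : F 0 = 1 := by simp [hF_def, hA_def, hB_def]
    simp [hφ_def, hF0]
  have hφ_nonneg : 0 ≤ φ u := by
    rcases le_or_gt 0 u with hu | hu
    · have hmono : MonotoneOn φ (Set.Ici 0) := by
        apply monotoneOn_of_deriv_nonneg (convex_Ici 0)
        · exact fun v _ => ((hφ' v).differentiableAt).continuousAt.continuousWithinAt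
        · exact fun v _ => ((hφ' v).differentiableAt).differentiableWithinAt
        · intro v hv
          rw [(hφ' v).deriv]
          rw [interior_Ici] at hv
          have : φd 0 ≤ φd v := hφd_mono (le_of_lt hv)
          linarith [hφd0 ▸ this]
      have := hmono (Set.self_mem_Ici) (Set.mem_Ici.mpr hu) hu
      linarith [hφ0 ▸ this]
    · have hmono : AntitoneOn φ (Set.Iic 0) := by
        apply antitoneOn_of_deriv_nonpos (convex_Iic 0)
        · exact fun v _ => ((hφ' v).differentiableAt).continuousAt.continuousWithinAt
        · exact fun v _ => ((hφ' v).differentiableAt).differentiableWithinAt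
        · intro v hv
          rw [(hφ' v).deriv]
          rw [interior_Iic] at hv
          have : φd v ≤ φd 0 := hφd_mono (le_of_lt hv)
          linarith [hφd0 ▸ this]
      have := hmono (Set.mem_Iic.mpr (le_of_lt hu)) (Set.self_mem_Iic) (le_of_lt hu)
      linarith [hφ0 ▸ this]
  have hlog : Real.log (F u) ≤ u ^ 2 / 8 := by
    simp only [hφ_def] at hφ_nonneg; linarith
  calc (1 - p) * Real.exp (-p * u) + p * Real.exp ((1 - p) * u) = F u := rfl
    _ = Real.exp (Real.log (F u)) := (Real.exp_log (hFpos u)).symm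
    _ ≤ Real.exp (u ^ 2 / 8) := Real.exp_le_exp.mpr hlog

lemma tpc_int {α : Type*} [MeasurableSpace α] (μ : Measure α) [IsFiniteMeasure μ] {g : α → ℝ}
    (hg : AEStronglyMeasurable g μ) {M : ℝ} (hb : ∀ x, |g x| ≤ M) : Integrable g μ :=
  (integrable_const M).mono' hg (ae_of_all _ (by simpa [Real.norm_eq_abs] using hb))

lemma tpc_nonempty {α : Type*} [MeasurableSpace α] (μ : Measure α) [IsProbabilityMeasure μ] :
    Nonempty α := by
  by_contra h
  rw [not_nonempty_iff] at h
  have h1 : μ Set.univ = 1 := measure_univ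
  rw [Set.univ_eq_empty_iff.mpr h, measure_empty] at h1
  exact zero_ne_one h1


lemma tpc_hoeffding {α : Type*} [MeasurableSpace α] (μ : Measure α) [IsProbabilityMeasure μ]
    (Y : α → ℝ) (hY : Measurable Y) (c L : ℝ) (hosc : ∀ a b, |Y a - Y b| ≤ c)
    (hmean : ∫ a, Y a ∂μ = 0) :
    ∫ a, Real.exp (L * Y a) ∂μ ≤ Real.exp (L ^ 2 * c ^ 2 / 8) := by
  have hne : Nonempty α := by
    by_contra h
    rw [not_nonempty_iff] at h
    have h1 : μ Set.univ = 1 := measure_univ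
    rw [Set.univ_eq_empty_iff.mpr h, measure_empty] at h1
    exact zero_ne_one h1
  obtain ⟨a₀⟩ := hne
  have hc0 : 0 ≤ c := by simpa using hosc a₀ a₀
  -- integrability of Y
  have hYbd : ∀ a, |Y a| ≤ |Y a₀| + c := by
    intro a
    calc |Y a| = |Y a - Y a₀ + Y a₀| := by ring_nf
      _ ≤ |Y a - Y a₀| + |Y a₀| := abs_add_le _ _
      _ ≤ c + |Y a₀| := by linarith [hosc a a₀]
      _ = |Y a₀| + c := by ring
  have hYint : Integrable Y μ :=
    (integrable_const (|Y a₀| + c)).mono' hY.aestronglyMeasurable (ae_of_all _ hYbd)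
  have hexpint : Integrable (fun a => Real.exp (L * Y a)) μ := by
    apply (integrable_const (Real.exp (|L| * (|Y a₀| + c)))).mono'
      ((hY.const_mul L).exp.aestronglyMeasurable)
    refine ae_of_all _ fun a => ?_
    rw [Real.norm_eq_abs, abs_of_nonneg (Real.exp_nonneg _)]
    apply Real.exp_le_exp.mpr
    calc L * Y a ≤ |L * Y a| := le_abs_self _
      _ = |L| * |Y a| := abs_mul _ _
      _ ≤ |L| * (|Y a₀| + c) := by
          exact mul_le_mul_of_nonneg_left (hYbd a) (abs_nonneg L)
  have : Nonempty α := ⟨a₀⟩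
  rcases eq_or_lt_of_le hc0 with hc | hc
  · -- c = 0 : Y ≡ 0
    have hY0 : ∀ a, Y a = 0 := by
      intro a
      have h1 := hosc a a₀
      have h2 := hosc a₀ a
      rw [← hc] at h1
      have : Y a = Y a₀ := by
        have := abs_nonpos_iff.mp h1
        linarith [sub_eq_zero.mp this]
      have hca : ∀ b, Y b = Y a₀ := by
        intro b
        have hb := hosc b a₀
        rw [← hc] at hb
        linarith [sub_eq_zero.mp (abs_nonpos_iff.mp hb)]
      have : ∫ b, Y b ∂μ = Y a₀ := by
        rw [show (fun b => Y b) = (fun _ => Y a₀) from funext hca]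
        simp [measure_univ]
      rw [hmean] at this
      rw [hca a, ← this]
    simp only [hY0, mul_zero, Real.exp_zero]
    rw [integral_const]
    simp [measure_univ, ← hc]
  · -- c > 0
    have hbdd : BddBelow (Set.range Y) := ⟨Y a₀ - c, by
      rintro y ⟨a, rfl⟩
      have := hosc a₀ a
      have := abs_le.mp this
      linarith [this.1]⟩
    set lo : ℝ := ⨅ a, Y a with hlo_def
    have hlo_le : ∀ a, lo ≤ Y a := fun a => ciInf_le hbdd a
    have hle_hi : ∀ a, Y a ≤ lo + c := by
      intro a
      have : Y a - c ≤ lo := by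
        apply le_ciInf
        intro b
        have := abs_le.mp (hosc a b)
        linarith [this.1]
      linarith
    have hlo_nonpos : lo ≤ 0 := by
      have : ∫ a, (fun _ => lo) a ∂μ ≤ ∫ a, Y a ∂μ :=
        integral_mono (integrable_const lo) hYint hlo_le
      rw [hmean, integral_const] at this
      simpa [measure_univ] using this
    have hhi_nonneg : 0 ≤ lo + c := by
      have : ∫ a, Y a ∂μ ≤ ∫ a, (fun _ => lo + c) a ∂μ :=
        integral_mono hYint (integrable_const (lo + c)) hle_hi
      rw [hmean, integral_const] at this
      simpa [measure_univ] using this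
    set p : ℝ := -lo / c with hp_def
    have hp0 : 0 ≤ p := div_nonneg (by linarith) (le_of_lt hc)
    have hp1 : p ≤ 1 := by
      rw [hp_def, div_le_one hc]; linarith
    have hlo_eq : lo = -(p * c) := by
      rw [hp_def]; field_simp
    set e1 : ℝ := Real.exp (L * lo) with he1
    set e2 : ℝ := Real.exp (L * (lo + c)) with he2
    set q1 : ℝ := ((lo + c) * e1 - lo * e2) / c with hq1
    set q2 : ℝ := (e2 - e1) / c with hq2
    -- pointwise convexity bound
    have hpt : ∀ a, Real.exp (L * Y a) ≤ q1 + q2 * Y a := by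
      intro a
      have hwa : (0:ℝ) ≤ (lo + c - Y a) / c := div_nonneg (by linarith [hle_hi a]) hc.le
      have hwb : (0:ℝ) ≤ (Y a - lo) / c := div_nonneg (by linarith [hlo_le a]) hc.le
      have hab : (lo + c - Y a) / c + (Y a - lo) / c = 1 := by field_simp; ring
      have hcvx := convexOn_exp.2 (Set.mem_univ (L * lo)) (Set.mem_univ (L * (lo + c)))
        hwa hwb hab
      simp only [smul_eq_mul] at hcvx
      have harg : (lo + c - Y a) / c * (L * lo) + (Y a - lo) / c * (L * (lo + c)) = L * Y a := by
        field_simp; ring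
      rw [harg] at hcvx
      calc Real.exp (L * Y a) ≤ (lo + c - Y a) / c * e1 + (Y a - lo) / c * e2 := hcvx
        _ = q1 + q2 * Y a := by rw [hq1, hq2]; field_simp; ring
    -- integrate
    have hint : ∫ a, Real.exp (L * Y a) ∂μ ≤ q1 := by
      have h1 : ∫ a, (q1 + q2 * Y a) ∂μ = q1 := by
        rw [integral_add (integrable_const q1) (hYint.const_mul q2)]
        rw [integral_const, integral_const_mul, hmean]
        simp [measure_univ]
      calc ∫ a, Real.exp (L * Y a) ∂μ ≤ ∫ a, (q1 + q2 * Y a) ∂μ :=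
            integral_mono hexpint ((integrable_const q1).add (hYint.const_mul q2)) hpt
        _ = q1 := h1
    -- scalar bound
    have hq1le : q1 ≤ Real.exp ((L * c) ^ 2 / 8) := by
      have he1' : e1 = Real.exp (-p * (L * c)) := by
        rw [he1, hlo_eq]; congr 1; ring
      have he2' : e2 = Real.exp ((1 - p) * (L * c)) := by
        rw [he2, hlo_eq]; congr 1; ring
      have hq1' : q1 = (1 - p) * Real.exp (-p * (L * c)) + p * Real.exp ((1 - p) * (L * c)) := by
        rw [hq1, he1', he2', hlo_eq]
        field_simp
        ring
      rw [hq1']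
      exact tpc_scalar p hp0 hp1 (L * c)
    have : (L * c) ^ 2 / 8 = L ^ 2 * c ^ 2 / 8 := by ring
    rw [this] at hq1le
    linarith

lemma tpc_mgf (L D : ℝ) (N : ℕ) :
    ∀ {Λ : Fin N → Type u} [inst : ∀ k, MeasurableSpace (Λ k)]
    (P : ∀ k, Measure (Λ k)) [hP : ∀ k, IsProbabilityMeasure (P k)]
    (g : (∀ k, Λ k) → ℝ), Measurable g →
    (∀ x x', |g x - g x'| ≤ D) →
    ∀ (c : Fin N → ℝ),
    (∀ (k : Fin N) (x x' : ∀ j, Λ j), (∀ j, j ≠ k → x j = x' j) → |g x - g x'| ≤ c k) →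
    ∫ x, Real.exp (L * (g x - ∫ y, g y ∂Measure.pi P)) ∂Measure.pi P
      ≤ Real.exp (L ^ 2 * (∑ k, c k ^ 2) / 8) := by
  induction N with
  | zero =>
    intro Λ inst P hP g hg hosc c hc
    have hgc : g = fun _ => g (fun k => k.elim0) :=
      funext fun x => congrArg g (funext fun k => k.elim0)
    rw [hgc]
    simp [integral_const, measure_univ]
  | succ n ih =>
    intro Λ inst P hP g hg hosc c hc
    -- nonemptiness & boundedness
    have hΛne : ∀ k, Nonempty (Λ k) := fun k => tpc_nonempty (P k)
    obtain ⟨x₀⟩ : Nonempty (∀ k, Λ k) := ⟨fun k => Classical.choice (hΛne k)⟩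
    have hD0 : 0 ≤ D := by simpa using hosc x₀ x₀
    set M : ℝ := |g x₀| + D with hM
    have hgbd : ∀ x, |g x| ≤ M := by
      intro x
      calc |g x| = |g x - g x₀ + g x₀| := by ring_nf
        _ ≤ |g x - g x₀| + |g x₀| := abs_add_le _ _
        _ ≤ M := by have := hosc x x₀; simp only [hM]; linarith
    have hMnn : 0 ≤ M := le_trans (abs_nonneg _) (hgbd x₀)
    set m : ℝ := ∫ x, g x ∂Measure.pi P with hm
    -- the decomposition
    set Q := Measure.pi (fun j : Fin n => P ((0 : Fin (n+1)).succAbove j)) with hQ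
    set e := MeasurableEquiv.piFinSuccAbove Λ 0 with he
    have hmp : MeasurePreserving (⇑e.symm) ((P 0).prod Q) (Measure.pi P) :=
      (measurePreserving_piFinSuccAbove P 0).symm e
    set ins : Λ 0 → (∀ j : Fin n, Λ ((0 : Fin (n+1)).succAbove j)) → ∀ k, Λ k :=
      fun a y => Fin.insertNth 0 a y with hins
    have hesymm : ∀ a y, e.symm (a, y) = ins a y := fun a y => rfl
    have hins_meas : ∀ y, Measurable fun a => ins a y := by
      intro y
      have : (fun a => ins a y) = fun a => e.symm (a, y) := rfl
      rw [this]
      exact e.symm.measurable.comp (measurable_id.prodMk measurable_const)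
    have hins_pair : Measurable fun p : Λ 0 × (∀ j : Fin n, Λ ((0:Fin (n+1)).succAbove j)) =>
        g (ins p.1 p.2) := by
      have : (fun p : Λ 0 × (∀ j : Fin n, Λ ((0:Fin (n+1)).succAbove j)) => g (ins p.1 p.2))
          = fun p => g (e.symm p) := rfl
      rw [this]; exact hg.comp e.symm.measurable
    -- integrability of sections
    have hsec_int : ∀ y, Integrable (fun a => g (ins a y)) (P 0) := fun y =>
      tpc_int _ ((hg.comp (hins_meas y)).aestronglyMeasurable) (fun a => hgbd _)
    -- the conditioned function h
    set h : (∀ j : Fin n, Λ ((0 : Fin (n+1)).succAbove j)) → ℝ :=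
      fun y => ∫ a, g (ins a y) ∂(P 0) with hh
    have hh_sm : StronglyMeasurable h := hins_pair.stronglyMeasurable.integral_prod_left'
    have hh_meas : Measurable h := hh_sm.measurable
    have hh_bd : ∀ y, |h y| ≤ M := by
      intro y
      calc |h y| = ‖∫ a, g (ins a y) ∂(P 0)‖ := by rw [Real.norm_eq_abs]
        _ ≤ ∫ a, ‖g (ins a y)‖ ∂(P 0) := norm_integral_le_integral_norm _
        _ ≤ ∫ _a, M ∂(P 0) := by
            apply integral_mono (hsec_int y).norm (integrable_const M)
            intro a; simpa [Real.norm_eq_abs] using hgbd (ins a y)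
        _ = M := by simp [measure_univ]
    have hkey : ∀ (y y' : ∀ j : Fin n, Λ ((0 : Fin (n+1)).succAbove j)) (r : ℝ),
        (∀ a, |g (ins a y) - g (ins a y')| ≤ r) → |h y - h y'| ≤ r := by
      intro y y' r hr
      have hsub : h y - h y' = ∫ a, (g (ins a y) - g (ins a y')) ∂(P 0) :=
        (integral_sub (hsec_int y) (hsec_int y')).symm
      rw [hsub]
      calc |∫ a, (g (ins a y) - g (ins a y')) ∂(P 0)|
          ≤ ∫ a, |g (ins a y) - g (ins a y')| ∂(P 0) := by
            simpa [Real.norm_eq_abs] using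
              norm_integral_le_integral_norm (μ := P 0)
                (fun a => g (ins a y) - g (ins a y'))
        _ ≤ ∫ _a, r ∂(P 0) := by
            apply integral_mono ((hsec_int y).sub (hsec_int y')).abs (integrable_const r) hr
        _ = r := by simp [measure_univ]
    have hh_osc : ∀ y y', |h y - h y'| ≤ D := fun y y' => hkey y y' D fun a => hosc _ _
    have hch : ∀ (j : Fin n) (y y' : ∀ l : Fin n, Λ ((0 : Fin (n+1)).succAbove l)),
        (∀ l, l ≠ j → y l = y' l) → |h y - h y'| ≤ c ((0 : Fin (n+1)).succAbove j) := by
      intro j y y' hyy'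
      apply hkey y y' _
      intro a
      apply hc ((0 : Fin (n+1)).succAbove j) (ins a y) (ins a y')
      intro l hl
      rcases eq_or_ne l 0 with rfl | hl0
      · simp [hins, Fin.insertNth_apply_same]
      · obtain ⟨j', rfl⟩ := Fin.exists_succAbove_eq hl0
        simp only [hins, Fin.insertNth_apply_succAbove]
        apply hyy'
        intro hj; exact hl (by rw [hj])
    -- Fubini for g itself : ∫ h dQ = m
    have hgint_prod : Integrable (fun p : Λ 0 × (∀ j : Fin n, Λ ((0:Fin (n+1)).succAbove j)) =>
        g (e.symm p)) ((P 0).prod Q) :=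
      tpc_int _ (hg.comp e.symm.measurable).aestronglyMeasurable (fun p => hgbd _)
    have hQm : ∫ y, h y ∂Q = m := by
      rw [hm]
      rw [← hmp.integral_comp' g]
      rw [integral_prod_symm _ hgint_prod]
      rfl
    -- the main exponential integrand on the product
    have hGmeas : Measurable fun p : Λ 0 × (∀ j : Fin n, Λ ((0:Fin (n+1)).succAbove j)) =>
        Real.exp (L * (g (e.symm p) - m)) :=
      (((hg.comp e.symm.measurable).sub measurable_const).const_mul L).exp
    have hexpbd : ∀ v : ℝ, |v| ≤ M → |Real.exp (L * (v - m))| ≤ Real.exp (|L| * (M + M)) := by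
      intro v hv
      rw [abs_of_nonneg (Real.exp_nonneg _)]
      apply Real.exp_le_exp.mpr
      have hmbd : |m| ≤ M := by
        rw [hm]
        calc |∫ x, g x ∂Measure.pi P| = ‖∫ x, g x ∂Measure.pi P‖ := (Real.norm_eq_abs _).symm
          _ ≤ ∫ x, ‖g x‖ ∂Measure.pi P := norm_integral_le_integral_norm _
          _ ≤ ∫ _x, M ∂Measure.pi P := by
              apply integral_mono (tpc_int _ hg.aestronglyMeasurable hgbd).norm
                (integrable_const M)
              intro x; simpa [Real.norm_eq_abs] using hgbd x
          _ = M := by simp [measure_univ]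
      calc L * (v - m) ≤ |L * (v - m)| := le_abs_self _
        _ = |L| * |v - m| := abs_mul _ _
        _ ≤ |L| * (M + M) := by
            apply mul_le_mul_of_nonneg_left _ (abs_nonneg L)
            calc |v - m| ≤ |v| + |m| := abs_sub _ _
              _ ≤ M + M := add_le_add hv hmbd
    have hGint : Integrable (fun p : Λ 0 × (∀ j : Fin n, Λ ((0:Fin (n+1)).succAbove j)) =>
        Real.exp (L * (g (e.symm p) - m))) ((P 0).prod Q) :=
      tpc_int _ hGmeas.aestronglyMeasurable (fun p => hexpbd _ (hgbd _))
    -- pointwise (in y) conditional Hoeffding bound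
    have hpt : ∀ y, ∫ a, Real.exp (L * (g (ins a y) - m)) ∂(P 0)
        ≤ Real.exp (L ^ 2 * c 0 ^ 2 / 8) * Real.exp (L * (h y - m)) := by
      intro y
      have hsplit : (fun a => Real.exp (L * (g (ins a y) - m)))
          = fun a => Real.exp (L * (h y - m)) * Real.exp (L * (g (ins a y) - h y)) := by
        funext a; rw [← Real.exp_add]; congr 1; ring
      rw [hsplit, integral_const_mul]
      have hmean : ∫ a, (g (ins a y) - h y) ∂(P 0) = 0 := by
        rw [integral_sub (hsec_int y) (integrable_const _), integral_const]
        simp [measure_univ, hh]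
      have hosc0 : ∀ a b, |(g (ins a y) - h y) - (g (ins b y) - h y)| ≤ c 0 := by
        intro a b
        have : (g (ins a y) - h y) - (g (ins b y) - h y) = g (ins a y) - g (ins b y) := by ring
        rw [this]
        apply hc 0 (ins a y) (ins b y)
        intro l hl
        obtain ⟨j', rfl⟩ := Fin.exists_succAbove_eq hl
        simp only [hins]
        rw [Fin.insertNth_apply_succAbove, Fin.insertNth_apply_succAbove]
      have hhoeff := tpc_hoeffding (P 0) (fun a => g (ins a y) - h y)
        ((hg.comp (hins_meas y)).sub measurable_const) (c 0) L hosc0 hmean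
      calc Real.exp (L * (h y - m)) * ∫ a, Real.exp (L * (g (ins a y) - h y)) ∂(P 0)
          ≤ Real.exp (L * (h y - m)) * Real.exp (L ^ 2 * c 0 ^ 2 / 8) :=
            mul_le_mul_of_nonneg_left hhoeff (Real.exp_nonneg _)
        _ = Real.exp (L ^ 2 * c 0 ^ 2 / 8) * Real.exp (L * (h y - m)) := mul_comm _ _
    -- integrability of both iterated integrands over Q
    have hint1 : Integrable (fun y => ∫ a, Real.exp (L * (g (ins a y) - m)) ∂(P 0)) Q := by
      exact hGint.integral_prod_right
    have hint2 : Integrable (fun y => Real.exp (L ^ 2 * c 0 ^ 2 / 8)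
        * Real.exp (L * (h y - m))) Q := by
      apply tpc_int _ ((((hh_meas.sub measurable_const).const_mul L).exp.const_mul
        _).aestronglyMeasurable)
        (M := Real.exp (L ^ 2 * c 0 ^ 2 / 8) * Real.exp (|L| * (M + M)))
      intro y
      rw [abs_mul, abs_of_nonneg (Real.exp_nonneg _)]
      exact mul_le_mul_of_nonneg_left (hexpbd _ (hh_bd y)) (Real.exp_nonneg _)
    -- assemble
    have hih := ih (fun j => P ((0 : Fin (n+1)).succAbove j)) h hh_meas hh_osc
      (fun j => c ((0 : Fin (n+1)).succAbove j)) hch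
    rw [← hQ, hQm] at hih
    calc ∫ x, Real.exp (L * (g x - m)) ∂Measure.pi P
        = ∫ p, Real.exp (L * (g (e.symm p) - m)) ∂((P 0).prod Q) :=
          (hmp.integral_comp' _).symm
      _ = ∫ y, ∫ a, Real.exp (L * (g (ins a y) - m)) ∂(P 0) ∂Q := by
          rw [integral_prod_symm _ hGint]
          rfl
      _ ≤ ∫ y, Real.exp (L ^ 2 * c 0 ^ 2 / 8) * Real.exp (L * (h y - m)) ∂Q :=
          integral_mono hint1 hint2 hpt
      _ = Real.exp (L ^ 2 * c 0 ^ 2 / 8) * ∫ y, Real.exp (L * (h y - m)) ∂Q :=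
          integral_const_mul _ _
      _ ≤ Real.exp (L ^ 2 * c 0 ^ 2 / 8)
            * Real.exp (L ^ 2 * (∑ j, c ((0 : Fin (n+1)).succAbove j) ^ 2) / 8) :=
          mul_le_mul_of_nonneg_left hih (Real.exp_nonneg _)
      _ = Real.exp (L ^ 2 * (∑ k, c k ^ 2) / 8) := by
          rw [← Real.exp_add, Fin.sum_univ_succAbove (fun k => c k ^ 2) 0]
          congr 1; ring

/-- **Truncation inequality in the product case** (Remark 1.9 of Warnke:
the case `Γ = ∏_j Γ_j` with `B = ¬Γ`, `e_k = 0` and the exponent multiplied by 4).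
`X = (X_1, …, X_N)` is modeled by the product measure `Measure.pi P` of the laws
`P k` of the independent coordinates; `Δ = s · P(X ∉ ∏_j Γ_j)`. -/
theorem truncation_product_case {N : ℕ} {Λ : Fin N → Type*}
    [∀ k, MeasurableSpace (Λ k)]
    (P : ∀ k, Measure (Λ k)) [∀ k, IsProbabilityMeasure (P k)]
    (f : (∀ k, Λ k) → ℝ) (hf : Measurable f)
    (s : ℝ) (hs : ∀ x x' : ∀ j, Λ j, |f x - f x'| ≤ s)
    (Γloc : ∀ k, Set (Λ k)) (hΓloc : ∀ k, MeasurableSet (Γloc k))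
    (hpos : 0 < Measure.pi P (Set.univ.pi Γloc))
    (c : Fin N → ℝ)
    -- the Lipschitz condition (L), restricted to `∏_j Γ_j`
    (hL : ∀ (k : Fin N) (x x' : ∀ j, Λ j),
      x ∈ Set.univ.pi Γloc → x' ∈ Set.univ.pi Γloc → (∀ j, j ≠ k → x j = x' j) →
      |f x - f x'| ≤ c k)
    (t : ℝ) (ht : 0 ≤ t) :
    Measure.pi P {x | f x ≥ (∫ y, f y ∂(Measure.pi P)) + t +
        s * (Measure.pi P (Set.univ.pi Γloc)ᶜ).toReal ∧ x ∈ Set.univ.pi Γloc} ≤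
      ENNReal.ofReal (Real.exp (-2 * t ^ 2 / ∑ k, c k ^ 2)) := by
  classical
  set PP := Measure.pi P with hpi
  set Γ := Set.univ.pi Γloc with hΓ
  have hΓmeas : MeasurableSet Γ := MeasurableSet.univ_pi hΓloc
  -- each Γloc k is nonempty
  have hγex : ∀ k, ∃ a, a ∈ Γloc k := by
    intro k
    by_contra hk
    push_neg at hk
    have hempty : Γloc k = ∅ := Set.eq_empty_iff_forall_notMem.mpr hk
    have : PP Γ = ∏ j, P j (Γloc j) := Measure.pi_pi P Γloc
    rw [this] at hpos
    have : P k (Γloc k) = 0 := by rw [hempty]; exact measure_empty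
    rw [Finset.prod_eq_zero (Finset.mem_univ k) this] at hpos
    exact lt_irrefl 0 hpos
  choose γ hγ using hγex
  have hγΓ : (fun k => γ k) ∈ Γ := fun k _ => hγ k
  -- retraction onto Γ
  set r : (∀ k, Λ k) → ∀ k, Λ k := fun x k => if x k ∈ Γloc k then x k else γ k with hr
  have hr_meas : Measurable r := by
    apply measurable_pi_lambda
    intro k
    have : (fun x : ∀ j, Λ j => if x k ∈ Γloc k then x k else γ k)
        = (fun a : Λ k => if a ∈ Γloc k then a else γ k) ∘ fun x : ∀ j, Λ j => x k := rfl
    rw [this]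
    exact (Measurable.ite (hΓloc k) measurable_id measurable_const).comp (measurable_pi_apply k)
  have hr_mem : ∀ x, r x ∈ Γ := by
    intro x k _
    by_cases h : x k ∈ Γloc k
    · simpa [hr, h] using h
    · simpa [hr, h] using hγ k
  have hr_id : ∀ x, x ∈ Γ → r x = x := by
    intro x hx
    funext k
    simp [hr, hx k (Set.mem_univ k)]
  -- the truncated function
  set g : (∀ k, Λ k) → ℝ := fun x => f (r x) with hg
  have hg_meas : Measurable g := hf.comp hr_meas
  have hg_osc : ∀ x x', |g x - g x'| ≤ s := fun x x' => hs _ _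
  have hg_c : ∀ (k : Fin N) (x x' : ∀ j, Λ j), (∀ j, j ≠ k → x j = x' j)
      → |g x - g x'| ≤ c k := by
    intro k x x' hxx'
    apply hL k (r x) (r x') (hr_mem x) (hr_mem x')
    intro j hj
    simp only [hr, hxx' j hj]
  have hs0 : 0 ≤ s := by simpa using hs (fun k => γ k) (fun k => γ k)
  -- boundedness of f
  set M : ℝ := |f (fun k => γ k)| + s with hM
  have hf_bd : ∀ x, |f x| ≤ M := by
    intro x
    calc |f x| = |f x - f (fun k => γ k) + f (fun k => γ k)| := by ring_nf
      _ ≤ |f x - f (fun k => γ k)| + |f (fun k => γ k)| := abs_add_le _ _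
      _ ≤ M := by have := hs x (fun k => γ k); simp only [hM]; linarith
  have hf_int : Integrable f PP := tpc_int _ hf.aestronglyMeasurable hf_bd
  have hg_int : Integrable g PP := tpc_int _ hg_meas.aestronglyMeasurable fun x => hf_bd (r x)
  set μv : ℝ := ∫ y, f y ∂PP with hμv
  set m : ℝ := ∫ y, g y ∂PP with hm
  set Δ : ℝ := s * (PP Γᶜ).toReal with hΔ
  -- m ≤ μv + Δ
  have hmμ : m ≤ μv + Δ := by
    have hpt : ∀ x, g x - f x ≤ Γᶜ.indicator (fun _ => s) x := by
      intro x
      by_cases hx : x ∈ Γ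
      · rw [Set.indicator_of_notMem (by simpa using hx)]
        have hgf : g x = f x := by simp only [hg]; rw [hr_id x hx]
        rw [hgf]; simp
      · rw [Set.indicator_of_mem (by simpa using hx)]
        have := abs_le.mp (hs (r x) x)
        simpa [hg] using this.2
    have hind_int : Integrable (Γᶜ.indicator (fun _ => s)) PP :=
      (integrable_const s).indicator hΓmeas.compl
    have h1 : ∫ x, (g x - f x) ∂PP ≤ ∫ x, Γᶜ.indicator (fun _ => s) x ∂PP :=
      integral_mono (hg_int.sub hf_int) hind_int hpt
    rw [integral_sub hg_int hf_int] at h1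
    rw [integral_indicator_const _ hΓmeas.compl] at h1
    simp only [smul_eq_mul] at h1
    rw [hΔ, hμv, hm]
    rw [mul_comm] at h1
    rw [measureReal_def] at h1
    linarith
  -- event inclusion
  have hsub : {x | f x ≥ μv + t + Δ ∧ x ∈ Γ} ⊆ {x | t ≤ g x - m} := by
    intro x hx
    obtain ⟨hx1, hx2⟩ := hx
    have : g x = f x := by simp only [hg]; rw [hr_id x hx2]
    rw [Set.mem_setOf_eq, this]
    linarith
  refine le_trans (measure_mono hsub) ?_
  -- the Chernoff bound
  set S : ℝ := ∑ k, c k ^ 2 with hS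
  have hS0 : 0 ≤ S := Finset.sum_nonneg fun k _ => sq_nonneg _
  rcases eq_or_lt_of_le hS0 with hS0' | hSpos
  · rw [← hS0', div_zero, Real.exp_zero, ENNReal.ofReal_one]
    exact prob_le_one
  · set L : ℝ := 4 * t / S with hLdef
    have hL0 : 0 ≤ L := div_nonneg (by linarith) hSpos.le
    have hmgf_int : Integrable (fun x => Real.exp (L * (g x - m))) PP := by
      apply tpc_int _ ((((hg_meas.sub measurable_const).const_mul L).exp).aestronglyMeasurable)
        (M := Real.exp (|L| * (M + M)))
      intro x
      rw [abs_of_nonneg (Real.exp_nonneg _)]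
      apply Real.exp_le_exp.mpr
      have hmbd : |m| ≤ M := by
        rw [hm]
        calc |∫ y, g y ∂PP| = ‖∫ y, g y ∂PP‖ := (Real.norm_eq_abs _).symm
          _ ≤ ∫ y, ‖g y‖ ∂PP := norm_integral_le_integral_norm _
          _ ≤ ∫ _y, M ∂PP := by
              apply integral_mono hg_int.norm (integrable_const M)
              intro y; simpa [Real.norm_eq_abs] using hf_bd (r y)
          _ = M := by simp [measure_univ]
      calc L * (g x - m) ≤ |L * (g x - m)| := le_abs_self _
        _ = |L| * |g x - m| := abs_mul _ _
        _ ≤ |L| * (M + M) := by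
            apply mul_le_mul_of_nonneg_left _ (abs_nonneg L)
            calc |g x - m| ≤ |g x| + |m| := abs_sub _ _
              _ ≤ M + M := add_le_add (hf_bd (r x)) hmbd
    have hchern := ProbabilityTheory.measure_ge_le_exp_mul_mgf (μ := PP)
      (X := fun x => g x - m) t hL0 hmgf_int
    have hmgf_le : ProbabilityTheory.mgf (fun x => g x - m) PP L
        ≤ Real.exp (L ^ 2 * S / 8) := by
      have := tpc_mgf L s N P g hg_meas hg_osc c hg_c
      rw [← hm, ← hS] at this
      exact this
    have hfinal : (PP {x | t ≤ g x - m}).toReal ≤ Real.exp (-2 * t ^ 2 / S) := by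
      calc (PP {x | t ≤ g x - m}).toReal
          ≤ Real.exp (-L * t) * ProbabilityTheory.mgf (fun x => g x - m) PP L := hchern
        _ ≤ Real.exp (-L * t) * Real.exp (L ^ 2 * S / 8) :=
            mul_le_mul_of_nonneg_left hmgf_le (Real.exp_nonneg _)
        _ = Real.exp (-L * t + L ^ 2 * S / 8) := (Real.exp_add _ _).symm
        _ = Real.exp (-2 * t ^ 2 / S) := by
            congr 1
            rw [hLdef]
            field_simp
            ring
    rw [← ENNReal.ofReal_toReal (measure_ne_top PP _)]
    exact ENNReal.ofReal_le_ofReal hfinal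
end

section
/- Bounded differences martingale inequality with random accumulative bounds. Let (F_k)_{0≤k≤N} be an increasing sequence of σ-algebras and (M_k)_{0≤k≤N} an (F_k)-adapted bounded martingale. Let L_k and U_k be F_{k−1}-measurable random variables satisfying L_k ≤ M_k − M_{k−1} ≤ U_k almost surely, and set S_k = Σ_{i∈[k]} (U_i − L_i)². Then for every t ≥ 0 and S > 0, P(M_k ≥ M_0 + t and S_k ≤ S for some k ∈ [N]) ≤ exp(−2t²/S). -/
open Real MeasureTheory Filter

lemma hoeffding_core {p : ℝ} (hp0 : 0 ≤ p) (hp1 : p ≤ 1) (h : ℝ) :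
    1 - p + p * Real.exp h ≤ Real.exp (p * h + h ^ 2 / 8) := by
  set φ : ℝ → ℝ := fun x => 1 - p + p * Real.exp x with hφ
  have φpos : ∀ x, 0 < φ x := by
    intro x
    rcases eq_or_lt_of_le hp0 with hp | hp
    · simp [hφ, ← hp]
    · have h1 : 0 < p * Real.exp x := by positivity
      simp only [hφ]
      nlinarith
  set g : ℝ → ℝ := fun x => p * x + x ^ 2 / 8 - Real.log (φ x) with hg
  set g1 : ℝ → ℝ := fun x => p + x / 4 - p * Real.exp x / φ x with hg1
  have hφd : ∀ x, HasDerivAt φ (p * Real.exp x) x := fun x =>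
    (((Real.hasDerivAt_exp x).const_mul p).const_add (1 - p))
  have hgd : ∀ x, HasDerivAt g (g1 x) x := by
    intro x
    have h1 : HasDerivAt (fun x : ℝ => p * x) p x := (hasDerivAt_id x).const_mul p |>.congr_deriv (by ring)
    have h2 : HasDerivAt (fun x : ℝ => x ^ 2 / 8) (x / 4) x :=
      ((hasDerivAt_pow 2 x).div_const 8).congr_deriv (by ring)
    have h3 : HasDerivAt (fun x => Real.log (φ x)) (p * Real.exp x / φ x) x :=
      (hφd x).log (φpos x).ne'
    exact ((h1.add h2).sub h3)
  have hg1d : ∀ x, HasDerivAt g1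
      (1 / 4 - (p * Real.exp x * φ x - p * Real.exp x * (p * Real.exp x)) / φ x ^ 2) x := by
    intro x
    have h2 : HasDerivAt (fun x : ℝ => p + x / 4) (1 / 4) x :=
      ((hasDerivAt_id x).div_const 4).const_add p
    have h3 : HasDerivAt (fun x => p * Real.exp x / φ x)
        ((p * Real.exp x * φ x - p * Real.exp x * (p * Real.exp x)) / φ x ^ 2) x :=
      ((Real.hasDerivAt_exp x).const_mul p).div (hφd x) (φpos x).ne'
    exact h2.sub h3
  have hg2 : ∀ x, 0 ≤ 1 / 4 -
      (p * Real.exp x * φ x - p * Real.exp x * (p * Real.exp x)) / φ x ^ 2 := by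
    intro x
    have hb : 0 ≤ p * Real.exp x := by positivity
    have ha : 0 ≤ 1 - p := by linarith
    have hnum : p * Real.exp x * φ x - p * Real.exp x * (p * Real.exp x)
        = (1 - p) * (p * Real.exp x) := by simp only [hφ]; ring
    have hφx : 0 < φ x := φpos x
    rw [hnum, sub_nonneg, div_le_iff₀ (by positivity)]
    have hφeq : φ x = (1 - p) + p * Real.exp x := rfl
    nlinarith [sq_nonneg ((1 - p) - p * Real.exp x)]
  have hg1mono : Monotone g1 := by
    refine monotone_of_deriv_nonneg (fun x => (hg1d x).differentiableAt) fun x => ?_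
    rw [(hg1d x).deriv]; exact hg2 x
  have hg10 : g1 0 = 0 := by
    simp [hg1, hφ, Real.exp_zero]
  have hgcont : ∀ y ∈ (Set.univ : Set ℝ), ContinuousWithinAt g Set.univ y :=
    fun y _ => (hgd y).differentiableAt.continuousAt.continuousWithinAt
  have hgnonneg : ∀ x, 0 ≤ g x := by
    have hg0 : g 0 = 0 := by simp [hg, hφ, Real.exp_zero]
    intro x
    rcases le_total 0 x with hx | hx
    · have hmono : MonotoneOn g (Set.Ici 0) := by
        refine monotoneOn_of_deriv_nonneg (convex_Ici 0)
          (fun y _ => (hgd y).differentiableAt.continuousAt.continuousWithinAt) ?_ ?_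
        · exact fun y _ => (hgd y).differentiableAt.differentiableWithinAt
        · intro y hy
          rw [interior_Ici] at hy
          rw [(hgd y).deriv]
          calc (0:ℝ) = g1 0 := hg10.symm
            _ ≤ g1 y := hg1mono (le_of_lt hy)
      have := hmono Set.self_mem_Ici (Set.mem_Ici.mpr hx) hx
      linarith [hg0 ▸ this]
    · have hanti : AntitoneOn g (Set.Iic 0) := by
        refine antitoneOn_of_deriv_nonpos (convex_Iic 0)
          (fun y _ => (hgd y).differentiableAt.continuousAt.continuousWithinAt) ?_ ?_
        · exact fun y _ => (hgd y).differentiableAt.differentiableWithinAt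
        · intro y hy
          rw [interior_Iic] at hy
          rw [(hgd y).deriv]
          calc g1 y ≤ g1 0 := hg1mono (le_of_lt hy)
            _ = 0 := hg10
      have := hanti (Set.mem_Iic.mpr hx) Set.self_mem_Iic hx
      linarith [hg0 ▸ this]
  have := hgnonneg h
  have hlog : Real.log (φ h) ≤ p * h + h ^ 2 / 8 := by
    simp only [hg] at this; linarith
  calc φ h = Real.exp (Real.log (φ h)) := (Real.exp_log (φpos h)).symm
    _ ≤ _ := Real.exp_le_exp.mpr hlog

lemma convex_exp_bound {l u d c : ℝ} (hl : l ≤ d) (hu : d ≤ u) (hlu : l < u) :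
    Real.exp (c * d) ≤ (u * Real.exp (c * l) - l * Real.exp (c * u)) / (u - l)
      + (Real.exp (c * u) - Real.exp (c * l)) / (u - l) * d := by
  have hul : (0:ℝ) < u - l := by linarith
  have h := convexOn_exp.2 (Set.mem_univ (c * l)) (Set.mem_univ (c * u))
      (div_nonneg (by linarith : (0:ℝ) ≤ u - d) hul.le)
      (div_nonneg (by linarith : (0:ℝ) ≤ d - l) hul.le)
      (by field_simp; ring)
  simp only [smul_eq_mul] at h
  have harg : (u - d) / (u - l) * (c * l) + (d - l) / (u - l) * (c * u) = c * d := by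
    field_simp; ring
  rw [harg] at h
  refine h.trans (le_of_eq ?_)
  field_simp
  ring

lemma hoeffding_interval_bound {l u c : ℝ} (hl : l ≤ 0) (hu : 0 ≤ u) (hlu : l < u) :
    (u * Real.exp (c * l) - l * Real.exp (c * u)) / (u - l)
      ≤ Real.exp (c ^ 2 * (u - l) ^ 2 / 8) := by
  have hul : (0:ℝ) < u - l := by linarith
  set p := -l / (u - l) with hp
  have hp0 : 0 ≤ p := div_nonneg (by linarith) hul.le
  have hp1 : p ≤ 1 := by rw [hp, div_le_one hul]; linarith
  have hcore := hoeffding_core hp0 hp1 (c * (u - l))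
  have hLeq : (u * Real.exp (c * l) - l * Real.exp (c * u)) / (u - l)
      = Real.exp (c * l) * (1 - p + p * Real.exp (c * (u - l))) := by
    have he : Real.exp (c * u) = Real.exp (c * l) * Real.exp (c * (u - l)) := by
      rw [← Real.exp_add]; ring_nf
    rw [he, hp]; field_simp; ring
  rw [hLeq]
  calc Real.exp (c * l) * (1 - p + p * Real.exp (c * (u - l)))
      ≤ Real.exp (c * l) * Real.exp (p * (c * (u - l)) + (c * (u - l)) ^ 2 / 8) :=
        mul_le_mul_of_nonneg_left hcore (Real.exp_nonneg _)
    _ = Real.exp (c * l + (p * (c * (u - l)) + (c * (u - l)) ^ 2 / 8)) := by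
        rw [← Real.exp_add]
    _ = Real.exp (c ^ 2 * (u - l) ^ 2 / 8) := by
        congr 1
        have hpl : p * (c * (u - l)) = -l * c := by
          rw [hp]; field_simp
        rw [hpl]; ring

lemma cond_hoeffding {Ω : Type*} {m m0 : MeasurableSpace Ω} {P : Measure Ω}
    [IsProbabilityMeasure P] (hm : m ≤ m0)
    (D L U : Ω → ℝ) (hD : StronglyMeasurable D)
    (hL : StronglyMeasurable[m] L) (hU : StronglyMeasurable[m] U)
    {K : ℝ} (hK : 0 ≤ K)
    (hDb : ∀ ω, |D ω| ≤ K) (hLb : ∀ ω, |L ω| ≤ K) (hUb : ∀ ω, |U ω| ≤ K)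
    (hLDU : ∀ᵐ ω ∂P, L ω ≤ D ω ∧ D ω ≤ U ω)
    (hD0 : P[D | m] =ᵐ[P] 0) (c : ℝ) :
    P[fun ω => Real.exp (c * D ω) | m] ≤ᵐ[P]
      fun ω => Real.exp (c ^ 2 * (U ω - L ω) ^ 2 / 8) := by
  -- integrability of the basic functions
  have hintD : Integrable D P :=
    (integrable_const K).mono' hD.aestronglyMeasurable
      (Eventually.of_forall fun ω => by simpa using hDb ω)
  have hintL : Integrable L P :=
    (integrable_const K).mono' ((hL.mono hm).aestronglyMeasurable)
      (Eventually.of_forall fun ω => by simpa using hLb ω)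
  have hintU : Integrable U P :=
    (integrable_const K).mono' ((hU.mono hm).aestronglyMeasurable)
      (Eventually.of_forall fun ω => by simpa using hUb ω)
  -- a.e. sign facts : L ≤ 0 ≤ U
  have hL0 : ∀ᵐ ω ∂P, L ω ≤ 0 := by
    have h1 : P[L|m] = L := condExp_of_stronglyMeasurable hm hL hintL
    have h2 : P[L|m] ≤ᵐ[P] P[D|m] :=
      condExp_mono hintL hintD (hLDU.mono fun ω h => h.1)
    rw [h1] at h2
    filter_upwards [h2, hD0] with ω e2 e3
    exact e2.trans (le_of_eq e3)
  have hU0 : ∀ᵐ ω ∂P, 0 ≤ U ω := by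
    have h1 : P[U|m] = U := condExp_of_stronglyMeasurable hm hU hintU
    have h2 : P[D|m] ≤ᵐ[P] P[U|m] :=
      condExp_mono hintD hintU (hLDU.mono fun ω h => h.2)
    rw [h1] at h2
    filter_upwards [h2, hD0] with ω e2 e3
    exact (le_of_eq e3.symm).trans e2
  -- the approximating upper bounds
  set V : ℕ → Ω → ℝ := fun n ω => max (U ω) (L ω) + ((n : ℝ) + 1)⁻¹ with hV
  have hεpos : ∀ n : ℕ, (0:ℝ) < ((n : ℝ) + 1)⁻¹ := fun n => by positivity
  have hVmeas : ∀ n, Measurable[m] (V n) := fun n =>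
    ((hU.measurable.max hL.measurable).add measurable_const)
  have hVgt : ∀ (n : ℕ) ω, L ω < V n ω := fun n ω =>
    lt_of_le_of_lt (le_max_right (U ω) (L ω)) (lt_add_of_pos_right _ (hεpos n))
  have hVge : ∀ (n : ℕ) ω, U ω ≤ V n ω := fun n ω =>
    le_trans (le_max_left (U ω) (L ω)) (le_add_of_nonneg_right (hεpos n).le)
  have hVb : ∀ (n : ℕ) ω, |V n ω| ≤ K + 1 := by
    intro n ω
    have h1 : ((n:ℝ)+1)⁻¹ ≤ 1 := by
      rw [inv_le_one_iff₀]; right; linarith [Nat.cast_nonneg (α := ℝ) n]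
    have h2 := abs_le.mp (hUb ω); have h3 := abs_le.mp (hLb ω)
    rw [abs_le]
    constructor
    · have : -K ≤ max (U ω) (L ω) := le_trans h2.1 (le_max_left _ _)
      simp only [hV]; linarith [(hεpos n).le]
    · have : max (U ω) (L ω) ≤ K := max_le h2.2 h3.2
      simp only [hV]; linarith
  have hVLlow : ∀ (n : ℕ) ω, ((n : ℝ) + 1)⁻¹ ≤ V n ω - L ω := by
    intro n ω
    have : L ω ≤ max (U ω) (L ω) := le_max_right _ _
    simp only [hV]; linarith
  -- A and B
  set A : ℕ → Ω → ℝ := fun n ω =>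
    (V n ω * Real.exp (c * L ω) - L ω * Real.exp (c * V n ω)) / (V n ω - L ω) with hA
  set B : ℕ → Ω → ℝ := fun n ω =>
    (Real.exp (c * V n ω) - Real.exp (c * L ω)) / (V n ω - L ω) with hB
  have hexpb : ∀ x : ℝ, |x| ≤ K + 1 → Real.exp (c * x) ≤ Real.exp (|c| * (K + 1)) := by
    intro x hx
    apply Real.exp_le_exp.mpr
    calc c * x ≤ |c * x| := le_abs_self _
      _ = |c| * |x| := abs_mul _ _
      _ ≤ |c| * (K + 1) := mul_le_mul_of_nonneg_left hx (abs_nonneg _)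
  have hAb : ∀ (n : ℕ) ω, |A n ω| ≤ (2 * (K + 1) * Real.exp (|c| * (K + 1))) * ((n:ℝ) + 1) := by
    intro n ω
    have hden : (0:ℝ) < V n ω - L ω := lt_of_lt_of_le (hεpos n) (hVLlow n ω)
    rw [hA, abs_div, abs_of_pos hden, div_le_iff₀ hden]
    have e1 : Real.exp (c * L ω) ≤ Real.exp (|c| * (K + 1)) :=
      hexpb _ (le_trans (hLb ω) (by linarith))
    have e2 : Real.exp (c * V n ω) ≤ Real.exp (|c| * (K + 1)) := hexpb _ (hVb n ω)
    have h1 : |V n ω * Real.exp (c * L ω) - L ω * Real.exp (c * V n ω)|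
        ≤ 2 * (K + 1) * Real.exp (|c| * (K + 1)) := by
      calc |V n ω * Real.exp (c * L ω) - L ω * Real.exp (c * V n ω)|
          ≤ |V n ω| * Real.exp (c * L ω) + |L ω| * Real.exp (c * V n ω) := by
            refine (abs_sub _ _).trans ?_
            rw [abs_mul, abs_mul, abs_of_pos (Real.exp_pos _), abs_of_pos (Real.exp_pos _)]
        _ ≤ (K + 1) * Real.exp (|c| * (K + 1)) + (K + 1) * Real.exp (|c| * (K + 1)) := by
            refine add_le_add (mul_le_mul (hVb n ω) e1 (Real.exp_pos _).le (by linarith)) ?_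
            exact mul_le_mul (le_trans (hLb ω) (by linarith)) e2 (Real.exp_pos _).le (by linarith)
        _ = 2 * (K + 1) * Real.exp (|c| * (K + 1)) := by ring
    refine h1.trans ?_
    have h2 : (1:ℝ) ≤ ((n:ℝ) + 1) * (V n ω - L ω) := by
      rw [← div_le_iff₀' (by positivity : (0:ℝ) < (n:ℝ) + 1)]
      simpa [one_div] using hVLlow n ω
    have hpos : (0:ℝ) ≤ 2 * (K + 1) * Real.exp (|c| * (K + 1)) := by positivity
    calc 2 * (K + 1) * Real.exp (|c| * (K + 1))
        = 2 * (K + 1) * Real.exp (|c| * (K + 1)) * 1 := by ring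
      _ ≤ 2 * (K + 1) * Real.exp (|c| * (K + 1)) * (((n:ℝ) + 1) * (V n ω - L ω)) :=
          mul_le_mul_of_nonneg_left h2 hpos
      _ = 2 * (K + 1) * Real.exp (|c| * (K + 1)) * ((n:ℝ) + 1) * (V n ω - L ω) := by ring
  have hBb : ∀ (n : ℕ) ω, |B n ω| ≤ (2 * Real.exp (|c| * (K + 1))) * ((n:ℝ) + 1) := by
    intro n ω
    have hden : (0:ℝ) < V n ω - L ω := lt_of_lt_of_le (hεpos n) (hVLlow n ω)
    rw [hB, abs_div, abs_of_pos hden, div_le_iff₀ hden]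
    have e1 : Real.exp (c * L ω) ≤ Real.exp (|c| * (K + 1)) :=
      hexpb _ (le_trans (hLb ω) (by linarith))
    have e2 : Real.exp (c * V n ω) ≤ Real.exp (|c| * (K + 1)) := hexpb _ (hVb n ω)
    have h1 : |Real.exp (c * V n ω) - Real.exp (c * L ω)| ≤ 2 * Real.exp (|c| * (K + 1)) := by
      rw [abs_sub_le_iff]
      constructor <;> nlinarith [Real.exp_pos (c * V n ω), Real.exp_pos (c * L ω)]
    refine h1.trans ?_
    have h2 : (1:ℝ) ≤ ((n:ℝ) + 1) * (V n ω - L ω) := by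
      rw [← div_le_iff₀' (by positivity : (0:ℝ) < (n:ℝ) + 1)]
      simpa [one_div] using hVLlow n ω
    have hpos : (0:ℝ) ≤ 2 * Real.exp (|c| * (K + 1)) := by positivity
    calc 2 * Real.exp (|c| * (K + 1)) = 2 * Real.exp (|c| * (K + 1)) * 1 := by ring
      _ ≤ 2 * Real.exp (|c| * (K + 1)) * (((n:ℝ) + 1) * (V n ω - L ω)) :=
          mul_le_mul_of_nonneg_left h2 hpos
      _ = 2 * Real.exp (|c| * (K + 1)) * ((n:ℝ) + 1) * (V n ω - L ω) := by ring
  -- measurability of A, B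
  have hAm : ∀ n, StronglyMeasurable[m] (A n) := by
    intro n
    refine Measurable.stronglyMeasurable ?_
    exact ((hVmeas n).mul (Real.measurable_exp.comp (hL.measurable.const_mul c))
      |>.sub (hL.measurable.mul
        (Real.measurable_exp.comp ((hVmeas n).const_mul c)))).div
      ((hVmeas n).sub hL.measurable)
  have hBm : ∀ n, StronglyMeasurable[m] (B n) := by
    intro n
    refine Measurable.stronglyMeasurable ?_
    exact ((Real.measurable_exp.comp ((hVmeas n).const_mul c)).sub
      (Real.measurable_exp.comp (hL.measurable.const_mul c))).div
      ((hVmeas n).sub hL.measurable)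
  -- integrability
  have hintA : ∀ n, Integrable (A n) P := fun n =>
    (integrable_const _).mono' ((hAm n).mono hm).aestronglyMeasurable
      (Eventually.of_forall fun ω => by simpa using hAb n ω)
  have hintBD : ∀ n, Integrable (B n * D) P := by
    intro n
    refine (integrable_const ((2 * Real.exp (|c| * (K + 1))) * ((n:ℝ) + 1) * K)).mono'
      ((((hBm n).mono hm).measurable.mul hD.measurable).stronglyMeasurable.aestronglyMeasurable)
      (Eventually.of_forall fun ω => ?_)
    simp only [Pi.mul_apply, norm_mul, Real.norm_eq_abs]
    exact mul_le_mul (hBb n ω) (hDb ω) (abs_nonneg _) (by positivity)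
  have hintexp : Integrable (fun ω => Real.exp (c * D ω)) P := by
    refine (integrable_const (Real.exp (|c| * (K + 1)))).mono'
      (Real.continuous_exp.comp_stronglyMeasurable (hD.const_mul c)).aestronglyMeasurable
      (Eventually.of_forall fun ω => ?_)
    rw [Real.norm_eq_abs, abs_of_pos (Real.exp_pos _)]
    exact hexpb _ (le_trans (hDb ω) (by linarith))
  -- the conditional expectation inequality for each n
  have hmain : ∀ n : ℕ, P[fun ω => Real.exp (c * D ω)|m] ≤ᵐ[P]
      fun ω => Real.exp (c ^ 2 * (U ω + ((n:ℝ)+1)⁻¹ - L ω) ^ 2 / 8) := by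
    intro n
    have hptwise : (fun ω => Real.exp (c * D ω)) ≤ᵐ[P] A n + B n * D := by
      filter_upwards [hLDU] with ω hω
      have h1 : D ω ≤ V n ω := hω.2.trans (hVge n ω)
      simpa [hA, hB] using convex_exp_bound hω.1 h1 (hVgt n ω)
    have h1 : P[fun ω => Real.exp (c * D ω)|m] ≤ᵐ[P] P[A n + B n * D|m] :=
      condExp_mono hintexp ((hintA n).add (hintBD n)) hptwise
    have h2 : P[A n + B n * D|m] =ᵐ[P] P[A n|m] + P[B n * D|m] :=
      condExp_add (hintA n) (hintBD n) m
    have h3 : P[A n|m] = A n := condExp_of_stronglyMeasurable hm (hAm n) (hintA n)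
    have h4 : P[B n * D|m] =ᵐ[P] B n * P[D|m] :=
      condExp_stronglyMeasurable_mul_of_bound hm (hBm n) hintD _
        (Eventually.of_forall fun ω => by rw [Real.norm_eq_abs]; exact hBb n ω)
    have h5 : B n * P[D|m] =ᵐ[P] 0 := by
      filter_upwards [hD0] with ω hω
      simp only [Pi.mul_apply, Pi.zero_apply] at hω ⊢
      rw [hω, mul_zero]
    have h6 : A n ≤ᵐ[P] fun ω => Real.exp (c ^ 2 * (U ω + ((n:ℝ)+1)⁻¹ - L ω) ^ 2 / 8) := by
      filter_upwards [hL0, hU0] with ω e1 e2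
      have hVeq : V n ω = U ω + ((n:ℝ)+1)⁻¹ := by
        simp only [hV]; rw [max_eq_left (le_trans e1 e2)]
      have hb := hoeffding_interval_bound (c := c) e1
        (le_trans e2 (by linarith [(hεpos n).le] : U ω ≤ U ω + ((n:ℝ)+1)⁻¹))
        (by rw [← hVeq]; exact hVgt n ω)
      simp only [hA]
      rw [hVeq]
      exact hb
    filter_upwards [h1, h2, h4, h5, h6] with ω e1 e2 e4 e5 e6
    have h7 := e1.trans e2.le
    rw [Pi.add_apply, h3, e4, e5] at h7
    simp only [Pi.zero_apply, add_zero] at h7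
    exact h7.trans e6
  -- pass to the limit
  have hmain' : ∀ᵐ ω ∂P, ∀ n : ℕ, (P[fun ω => Real.exp (c * D ω)|m]) ω
      ≤ Real.exp (c ^ 2 * (U ω + ((n:ℝ)+1)⁻¹ - L ω) ^ 2 / 8) :=
    ae_all_iff.mpr fun n => hmain n
  filter_upwards [hmain', hL0, hU0] with ω hω e1 e2
  have h0 : Tendsto (fun n : ℕ => ((n:ℝ)+1)⁻¹) atTop (nhds 0) :=
    tendsto_one_div_add_atTop_nhds_zero_nat.congr (fun n => by rw [one_div])
  have h1 : Tendsto (fun n : ℕ => c ^ 2 * (U ω + ((n:ℝ)+1)⁻¹ - L ω) ^ 2 / 8) atTop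
      (nhds (c ^ 2 * (U ω - L ω) ^ 2 / 8)) := by
    have h2 : Tendsto (fun n : ℕ => U ω + ((n:ℝ)+1)⁻¹ - L ω) atTop (nhds (U ω - L ω)) := by
      have := ((tendsto_const_nhds (x := U ω) (f := atTop)).add h0).sub
        (tendsto_const_nhds (x := L ω) (f := atTop))
      simpa using this
    have h3 := (h2.pow 2).const_mul (c ^ 2)
    exact h3.div_const 8
  have htend := (Real.continuous_exp.tendsto _).comp h1
  exact ge_of_tendsto' htend hω

lemma clamp_sub_le {K l u : ℝ} (h : l ≤ u) :
    min (max u (-K)) K - min (max l (-K)) K ≤ u - l := by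
  simp only [min_def, max_def]
  split_ifs <;> linarith

/-- **Bounded differences martingale inequality** (Lemma 2.2 of Warnke), with random
accumulative bounds: `(M_k)_{0 ≤ k ≤ N}` is a bounded martingale for the filtration
`(F_k)`, `L_k ≤ M_k - M_{k-1} ≤ U_k` with `L_k, U_k` being `F_{k-1}`-measurable, and
`S_k = ∑_{i ∈ [k]} (U_i - L_i)²`. -/
theorem bounded_differences_martingale {Ω : Type*} {m0 : MeasurableSpace Ω}
    {P : Measure Ω} [IsProbabilityMeasure P]
    (N : ℕ) (ℱ : Filtration ℕ m0)
    (M : ℕ → Ω → ℝ) (hM : Martingale M ℱ P)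
    (hMbdd : ∃ R : ℝ, ∀ k ω, |M k ω| ≤ R)
    (L U : ℕ → Ω → ℝ)
    (hL : ∀ k, 1 ≤ k → k ≤ N → StronglyMeasurable[ℱ (k - 1)] (L k))
    (hU : ∀ k, 1 ≤ k → k ≤ N → StronglyMeasurable[ℱ (k - 1)] (U k))
    (hLU : ∀ k, 1 ≤ k → k ≤ N →
      ∀ᵐ ω ∂P, L k ω ≤ M k ω - M (k - 1) ω ∧ M k ω - M (k - 1) ω ≤ U k ω)
    (t S : ℝ) (ht : 0 ≤ t) (hS : 0 < S) :
    P {ω | ∃ k, 1 ≤ k ∧ k ≤ N ∧ M k ω ≥ M 0 ω + t ∧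
        ∑ i ∈ Finset.Icc 1 k, (U i ω - L i ω) ^ 2 ≤ S} ≤
      ENNReal.ofReal (Real.exp (-2 * t ^ 2 / S)) := by
  classical
  obtain ⟨R0, hR0⟩ := hMbdd
  set R : ℝ := max R0 0 with hRdef
  have hR : ∀ k ω, |M k ω| ≤ R := fun k ω => (hR0 k ω).trans (le_max_left _ _)
  have hRnn : (0:ℝ) ≤ R := le_max_right _ _
  set K : ℝ := 2 * R with hKdef
  have hK : (0:ℝ) ≤ K := by positivity
  -- clamped bounds
  set Lc : ℕ → Ω → ℝ := fun k ω => min (max (L k ω) (-K)) K with hLcdef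
  set Uc : ℕ → Ω → ℝ := fun k ω => min (max (U k ω) (-K)) K with hUcdef
  have hclampb : ∀ x : ℝ, |min (max x (-K)) K| ≤ K := by
    intro x
    rw [abs_le]
    constructor
    · exact le_min (le_max_right _ _) (by linarith)
    · exact min_le_right _ _
  -- the exponential weight
  set c : ℝ := 4 * t / S with hcdef
  have hcnn : (0:ℝ) ≤ c := by positivity
  -- the increments are bounded by K
  have hDb : ∀ j k : ℕ, ∀ ω, |M j ω - M k ω| ≤ K := by
    intro j k ω
    have h1 := abs_le.mp (hR j ω); have h2 := abs_le.mp (hR k ω)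
    rw [abs_le, hKdef]; constructor <;> linarith
  -- the processes
  set W : ℕ → Ω → ℝ := fun k ω => ∑ i ∈ Finset.Icc 1 (min k N), (Uc i ω - Lc i ω) ^ 2 with hWdef
  set Z : ℕ → Ω → ℝ :=
    fun k ω => Real.exp (c * (M (min k N) ω - M 0 ω) - c ^ 2 / 8 * W k ω) with hZdef
  have hWnn : ∀ k ω, 0 ≤ W k ω := fun k ω =>
    Finset.sum_nonneg fun i _ => sq_nonneg _
  -- measurability
  have hWm : ∀ k, Measurable[ℱ k] (W k) := by
    intro k
    apply Finset.measurable_sum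
    intro i hi
    obtain ⟨hi1, hi2⟩ := Finset.mem_Icc.mp hi
    have hiN : i ≤ N := le_trans hi2 (min_le_right _ _)
    have hik : i - 1 ≤ k := le_trans (Nat.sub_le i 1) (le_trans hi2 (min_le_left _ _))
    have hLm : Measurable[ℱ k] (Lc i) :=
      (((hL i hi1 hiN).measurable.max measurable_const).min measurable_const).mono
        (ℱ.mono hik) le_rfl
    have hUm : Measurable[ℱ k] (Uc i) :=
      (((hU i hi1 hiN).measurable.max measurable_const).min measurable_const).mono
        (ℱ.mono hik) le_rfl
    exact (hUm.sub hLm).pow_const 2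
  have hMm : ∀ j k : ℕ, j ≤ k → Measurable[ℱ k] (M j) := fun j k hjk =>
    (hM.stronglyAdapted j).measurable.mono (ℱ.mono hjk) le_rfl
  have hZmF : ∀ k, StronglyMeasurable[ℱ k] (Z k) := by
    intro k
    refine Measurable.stronglyMeasurable ?_
    exact Real.measurable_exp.comp
      ((((hMm (min k N) k (min_le_left _ _)).sub (hMm 0 k (Nat.zero_le _))).const_mul c).sub
        ((hWm k).const_mul (c ^ 2 / 8)))
  have hZadp : Adapted ℱ Z := fun k => (hZmF k).measurable
  -- boundedness and integrability of Z
  have hZb : ∀ k ω, |Z k ω| ≤ Real.exp (c * K) := by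
    intro k ω
    rw [hZdef, abs_of_pos (Real.exp_pos _), Real.exp_le_exp]
    have h1 : c * (M (min k N) ω - M 0 ω) ≤ c * K := by
      refine mul_le_mul_of_nonneg_left ?_ hcnn
      exact le_trans (le_abs_self _) (hDb _ _ ω)
    nlinarith [hWnn k ω, sq_nonneg c, hWnn k ω, mul_nonneg (mul_nonneg (sq_nonneg c) (by norm_num : (0:ℝ) ≤ 8⁻¹)) (hWnn k ω)]
  have hintZ : ∀ k, Integrable (Z k) P := fun k =>
    (integrable_const (Real.exp (c * K))).mono'
      ((hZmF k).mono (ℱ.le k)).aestronglyMeasurable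
      (Eventually.of_forall fun ω => by simpa using hZb k ω)
  -- integrability of M
  have hintM : ∀ k, Integrable (M k) P := fun k =>
    (integrable_const R).mono' ((hM.stronglyAdapted k).mono (ℱ.le k)).aestronglyMeasurable
      (Eventually.of_forall fun ω => by simpa using hR k ω)
  -- supermartingale property
  have hstep : ∀ k, P[Z (k + 1)|ℱ k] ≤ᵐ[P] Z k := by
    intro k
    rcases le_or_gt N k with hk | hk
    · have hEq : Z (k + 1) = Z k := by
        have h1 : min (k + 1) N = N := min_eq_right (le_trans hk (Nat.le_succ k))
        have h2 : min k N = N := min_eq_right hk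
        funext ω
        simp only [hZdef, hWdef, h1, h2]
      rw [hEq, condExp_of_stronglyMeasurable (ℱ.le k) (hZmF k) (hintZ k)]
    · -- k < N
      have hk1N : k + 1 ≤ N := hk
      have hmin1 : min (k + 1) N = k + 1 := min_eq_left hk1N
      have hmink : min k N = k := min_eq_left hk.le
      set D : Ω → ℝ := fun ω => M (k + 1) ω - M k ω with hDdef
      set Y : Ω → ℝ :=
        fun ω => Real.exp (c * (M k ω - M 0 ω) - c ^ 2 / 8 * W (k + 1) ω) with hYdef
      have hWk1m : Measurable[ℱ k] (W (k + 1)) := by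
        apply Finset.measurable_sum
        intro i hi
        obtain ⟨hi1, hi2⟩ := Finset.mem_Icc.mp hi
        rw [hmin1] at hi2
        have hiN : i ≤ N := le_trans hi2 hk1N
        have hik : i - 1 ≤ k := by omega
        have hLm : Measurable[ℱ k] (Lc i) :=
          (((hL i hi1 hiN).measurable.max measurable_const).min measurable_const).mono
            (ℱ.mono hik) le_rfl
        have hUm : Measurable[ℱ k] (Uc i) :=
          (((hU i hi1 hiN).measurable.max measurable_const).min measurable_const).mono
            (ℱ.mono hik) le_rfl
        exact (hUm.sub hLm).pow_const 2
      have hYm : StronglyMeasurable[ℱ k] Y := by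
        refine Measurable.stronglyMeasurable ?_
        exact Real.measurable_exp.comp
          ((((hMm k k le_rfl).sub (hMm 0 k (Nat.zero_le _))).const_mul c).sub
            (hWk1m.const_mul (c ^ 2 / 8)))
      have hWk1nn : ∀ ω, 0 ≤ W (k + 1) ω := hWnn (k + 1)
      have hYb : ∀ ω, |Y ω| ≤ Real.exp (c * K) := by
        intro ω
        rw [hYdef, abs_of_pos (Real.exp_pos _), Real.exp_le_exp]
        have h1 : c * (M k ω - M 0 ω) ≤ c * K :=
          mul_le_mul_of_nonneg_left (le_trans (le_abs_self _) (hDb _ _ ω)) hcnn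
        nlinarith [hWk1nn ω, mul_nonneg (mul_nonneg (sq_nonneg c) (by norm_num : (0:ℝ) ≤ 8⁻¹)) (hWk1nn ω)]
      have hDm : StronglyMeasurable D :=
        (((hM.stronglyAdapted (k + 1)).mono (ℱ.le _)).sub ((hM.stronglyAdapted k).mono (ℱ.le _)))
      have hDbd : ∀ ω, |D ω| ≤ K := fun ω => hDb (k + 1) k ω
      have hintexpD : Integrable (fun ω => Real.exp (c * D ω)) P := by
        refine (integrable_const (Real.exp (c * K))).mono'
          (Real.continuous_exp.comp_stronglyMeasurable (hDm.const_mul c)).aestronglyMeasurable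
          (Eventually.of_forall fun ω => ?_)
        rw [Real.norm_eq_abs, abs_of_pos (Real.exp_pos _), Real.exp_le_exp]
        exact mul_le_mul_of_nonneg_left (le_trans (le_abs_self _) (hDbd ω)) hcnn
      -- martingale difference has zero conditional expectation
      have hD0 : P[D|ℱ k] =ᵐ[P] 0 := by
        have h1 : P[M (k + 1) - M k|ℱ k] =ᵐ[P] P[M (k + 1)|ℱ k] - P[M k|ℱ k] :=
          condExp_sub (hintM (k + 1)) (hintM k) (ℱ k)
        have h2 : P[M (k + 1)|ℱ k] =ᵐ[P] M k := hM.condExp_ae_eq (Nat.le_succ k)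
        have h3 : P[M k|ℱ k] = M k :=
          condExp_of_stronglyMeasurable (ℱ.le k) (hM.stronglyAdapted k) (hintM k)
        have hD : D = M (k + 1) - M k := rfl
        rw [hD]
        filter_upwards [h1, h2] with ω e1 e2
        simp only [Pi.sub_apply, Pi.zero_apply] at *
        rw [e1, h3, e2]
        ring
      -- clamped bounds for step k+1
      have hLcm : StronglyMeasurable[ℱ k] (Lc (k + 1)) := by
        refine Measurable.stronglyMeasurable ?_
        have := (hL (k + 1) (Nat.le_add_left 1 k) hk1N).measurable
        exact ((this.max measurable_const).min measurable_const)
      have hUcm : StronglyMeasurable[ℱ k] (Uc (k + 1)) := by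
        refine Measurable.stronglyMeasurable ?_
        have := (hU (k + 1) (Nat.le_add_left 1 k) hk1N).measurable
        exact ((this.max measurable_const).min measurable_const)
      have hLDU : ∀ᵐ ω ∂P, Lc (k + 1) ω ≤ D ω ∧ D ω ≤ Uc (k + 1) ω := by
        have := hLU (k + 1) (Nat.le_add_left 1 k) hk1N
        simp only [Nat.add_sub_cancel] at this
        filter_upwards [this] with ω hω
        have hDK := abs_le.mp (hDbd ω)
        constructor
        · exact le_trans (min_le_left _ _) (max_le hω.1 hDK.1)
        · exact le_min (le_trans hω.2 (le_max_left _ _)) hDK.2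
      have hch := cond_hoeffding (ℱ.le k) D (Lc (k + 1)) (Uc (k + 1)) hDm hLcm hUcm hK
        hDbd (fun ω => hclampb _) (fun ω => hclampb _) hLDU hD0 c
      -- decompose Z (k+1)
      have hZdec : Z (k + 1) = Y * fun ω => Real.exp (c * D ω) := by
        funext ω
        simp only [Pi.mul_apply, hZdef, hYdef, hmin1, ← Real.exp_add]
        congr 1
        simp only [hDdef]
        ring
      have hpull : P[Z (k + 1)|ℱ k] =ᵐ[P] Y * P[fun ω => Real.exp (c * D ω)|ℱ k] := by
        rw [hZdec]
        exact condExp_stronglyMeasurable_mul_of_bound (ℱ.le k) hYm hintexpD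
          (Real.exp (c * K)) (Eventually.of_forall fun ω => by
            rw [Real.norm_eq_abs]; exact hYb ω)
      refine hpull.trans_le ?_
      filter_upwards [hch] with ω e1
      simp only [Pi.mul_apply]
      have hYnn : 0 ≤ Y ω := by rw [hYdef]; exact (Real.exp_pos _).le
      calc Y ω * (P[fun ω => Real.exp (c * D ω)|ℱ k]) ω
          ≤ Y ω * Real.exp (c ^ 2 * (Uc (k + 1) ω - Lc (k + 1) ω) ^ 2 / 8) :=
            mul_le_mul_of_nonneg_left e1 hYnn
        _ = Z k ω := by
            have hZeq : Z k ω = Real.exp (c * (M k ω - M 0 ω) - c ^ 2 / 8 * W k ω) := by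
              simp only [hZdef]; rw [hmink]
            have hYeq : Y ω = Real.exp (c * (M k ω - M 0 ω) - c ^ 2 / 8 * W (k + 1) ω) := rfl
            have hsum : W (k + 1) ω = W k ω + (Uc (k + 1) ω - Lc (k + 1) ω) ^ 2 := by
              simp only [hWdef, hmin1, hmink]
              rw [← Finset.sum_Icc_succ_top (Nat.le_add_left 1 k)]
            rw [hYeq, hZeq, ← Real.exp_add, hsum]
            congr 1
            ring
  have hsuper : Supermartingale Z ℱ P := supermartingale_nat hZmF hintZ hstep
  -- the threshold
  set a : ℝ := Real.exp (2 * t ^ 2 / S) with hadef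
  have hapos : 0 < a := Real.exp_pos _
  -- maximal set
  set G : Set Ω := {ω | ∃ j ∈ Set.Icc 0 N, Z j ω ∈ Set.Ici a} with hGdef
  have hGmeas : MeasurableSet G := by
    have : G = ⋃ j ∈ Set.Icc 0 N, Z j ⁻¹' Set.Ici a := by
      ext ω; simp [hGdef]
    rw [this]
    exact MeasurableSet.biUnion (Set.to_countable _) fun j _ =>
      ((hZmF j).mono (ℱ.le j)).measurable measurableSet_Ici
  -- a.e. inclusion of the event into G
  have haeall : ∀ᵐ ω ∂P, ∀ k, 1 ≤ k → k ≤ N →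
      (L k ω ≤ M k ω - M (k - 1) ω ∧ M k ω - M (k - 1) ω ≤ U k ω) := by
    rw [ae_all_iff]
    intro k
    by_cases h1 : 1 ≤ k
    · by_cases h2 : k ≤ N
      · filter_upwards [hLU k h1 h2] with ω hω _ _; exact hω
      · exact Eventually.of_forall fun ω h1' h2' => absurd h2' h2
    · exact Eventually.of_forall fun ω h1' h2' => absurd h1' h1
  have hEG : {ω | ∃ k, 1 ≤ k ∧ k ≤ N ∧ M k ω ≥ M 0 ω + t ∧
      ∑ i ∈ Finset.Icc 1 k, (U i ω - L i ω) ^ 2 ≤ S} ≤ᵐ[P] G := by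
    filter_upwards [haeall] with ω hω hmem
    obtain ⟨k, hk1, hkN, hMk, hSk⟩ := hmem
    refine ⟨k, ⟨Nat.zero_le k, hkN⟩, ?_⟩
    rw [Set.mem_Ici, hadef]
    have hZeq : Z k ω = Real.exp (c * (M k ω - M 0 ω) - c ^ 2 / 8 * W k ω) := by
      simp only [hZdef]
      rw [min_eq_left hkN]
    rw [hZeq, Real.exp_le_exp]
    have hW : W k ω ≤ S := by
      simp only [hWdef]
      rw [min_eq_left hkN]
      refine le_trans (Finset.sum_le_sum fun i hi => ?_) hSk
      obtain ⟨hi1, hi2⟩ := Finset.mem_Icc.mp hi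
      have hω' := hω i hi1 (le_trans hi2 hkN)
      have hDK := abs_le.mp (hDb i (i - 1) ω)
      have hle1 : Lc i ω ≤ M i ω - M (i - 1) ω :=
        le_trans (min_le_left _ _) (max_le hω'.1 hDK.1)
      have hle2 : M i ω - M (i - 1) ω ≤ Uc i ω :=
        le_min (le_trans hω'.2 (le_max_left _ _)) hDK.2
      have hnn : 0 ≤ Uc i ω - Lc i ω := by linarith
      have hsub : Uc i ω - Lc i ω ≤ U i ω - L i ω := by
        have hLU' : L i ω ≤ U i ω := le_trans hω'.1 hω'.2
        simpa [hLcdef, hUcdef] using clamp_sub_le (K := K) hLU'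
      exact pow_le_pow_left₀ hnn hsub 2
    have h1 : c * t ≤ c * (M k ω - M 0 ω) :=
      mul_le_mul_of_nonneg_left (by linarith) hcnn
    have h2 : c ^ 2 / 8 * W k ω ≤ c ^ 2 / 8 * S :=
      mul_le_mul_of_nonneg_left hW (by positivity)
    have heq : c * t - c ^ 2 / 8 * S = 2 * t ^ 2 / S := by
      rw [hcdef]; field_simp; ring
    linarith
  -- the stopping time
  set τ : Ω → WithTop ℕ := fun ω => ((hittingBtwn Z (Set.Ici a) 0 N ω : ℕ) : WithTop ℕ) with hτdef
  have hτst : IsStoppingTime ℱ τ := Adapted.isStoppingTime_hittingBtwn hZadp measurableSet_Ici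
  have hτle : ∀ ω, τ ω ≤ N := fun ω => WithTop.coe_le_coe.mpr (hittingBtwn_le ω)
  set SV : Ω → ℝ := stoppedValue Z τ with hSVdef
  have hSVnn : ∀ ω, 0 ≤ SV ω := fun ω => (Real.exp_pos _).le
  have hSVG : ∀ ω ∈ G, a ≤ SV ω := fun ω hω => stoppedValue_hittingBtwn_mem hω
  have hSVint : Integrable SV P := by
    have hint : Integrable
        (fun x => ∑ i ∈ Finset.range (N + 1), Set.indicator {ω | τ ω = i} (Z i) x) P :=
      integrable_finset_sum _ fun i _ =>
        (hintZ i).indicator (ℱ.le i _ (hτst.measurableSet_eq i))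
    rw [hSVdef, stoppedValue_eq hτle]
    exact integrable_finset_sum' _ fun i _ =>
      (hintZ i).indicator (ℱ.le i _ (hτst.measurableSet_eq i))
  -- optional stopping
  have hOS : ∫ ω, SV ω ∂P ≤ 1 := by
    have hmono := (hsuper.neg).expected_stoppedValue_mono
      (isStoppingTime_const ℱ 0) hτst (fun ω => WithTop.coe_le_coe.mpr (Nat.zero_le _)) hτle
    have hconst : stoppedValue (-Z) (fun _ => ((0:ℕ) : WithTop ℕ)) = -(Z 0) := stoppedValue_const _ 0
    have hneg : stoppedValue (-Z) τ = -SV := by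
      funext ω; simp [stoppedValue, hSVdef]
    rw [stoppedValue_const, hneg] at hmono
    simp only [Pi.neg_apply] at hmono
    rw [integral_neg, integral_neg, neg_le_neg_iff] at hmono
    have hZ0 : Z 0 = fun _ => (1:ℝ) := by
      funext ω
      rw [hZdef, hWdef]
      simp
    rw [hZ0] at hmono
    simpa using hmono
  -- maximal inequality
  have hkey : a * (P G).toReal ≤ 1 := by
    have h1 : ∫ _ in G, a ∂P ≤ ∫ ω in G, SV ω ∂P :=
      setIntegral_mono_on (integrableOn_const (measure_lt_top P G).ne)
        hSVint.integrableOn hGmeas hSVG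
    have h2 : ∫ ω in G, SV ω ∂P ≤ ∫ ω, SV ω ∂P :=
      setIntegral_le_integral hSVint (Eventually.of_forall hSVnn)
    rw [setIntegral_const, smul_eq_mul, mul_comm, measureReal_def] at h1
    linarith
  -- conclusion
  have hfinal : (P G).toReal ≤ Real.exp (-2 * t ^ 2 / S) := by
    have hexp : Real.exp (-2 * t ^ 2 / S) = a⁻¹ := by
      rw [hadef, ← Real.exp_neg, Real.exp_eq_exp]; ring
    rw [hexp, ← one_div, le_div_iff₀ hapos]
    nlinarith [hkey]
  calc P _ ≤ P G := measure_mono_ae hEG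
    _ = ENNReal.ofReal ((P G).toReal) := (ENNReal.ofReal_toReal (measure_ne_top P G)).symm
    _ ≤ ENNReal.ofReal (Real.exp (-2 * t ^ 2 / S)) := ENNReal.ofReal_le_ofReal hfinal
end
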